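/- arXiv:1808.06721 — 10 statements merged into one kernel-verified Lean document; each statement's English description precedes it below -/
import Mathlib

section
/- A 0/1 matrix with the consecutive ones property (in each row, all 1 entries appear consecutively) is totally unimodular: every square submatrix has determinant 0, 1, or -1. -/
open Matrix Finset

/-- A square integer matrix in which every row has at most one `1`, at most one `-1`,
and all other entries `0`, has determinant `0`, `1`, or `-1`. -/
private lemma lemA : ∀ (r : ℕ) (B : Matrix (Fin r) (Fin r) ℤ),
    (∀ i j, B i j = 0 ∨ B i j = 1 ∨ B i j = -1) →
    (∀ i j k, B i j = 1 → B i k = 1 → j = k) →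
    (∀ i j k, B i j = -1 → B i k = -1 → j = k) →
    B.det = 0 ∨ B.det = 1 ∨ B.det = -1 := by
  intro r
  induction r with
  | zero =>
    intro B _ _ _
    right; left
    exact Matrix.det_fin_zero
  | succ n ih =>
    intro B hv h1 h2
    by_cases hall : ∀ i, (∃ j, B i j = 1) ∧ (∃ j, B i j = -1)
    · left
      have hsum : ∀ i, ∑ j, B i j = 0 := by
        intro i
        obtain ⟨⟨j0, hj0⟩, ⟨j1, hj1⟩⟩ := hall i
        have hne : j0 ≠ j1 := by
          intro h; rw [h, hj1] at hj0; omega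
        have hz : ∀ j, j ≠ j0 → j ≠ j1 → B i j = 0 := by
          intro j hj hj'
          rcases hv i j with h | h | h
          · exact h
          · exact absurd (h1 i j j0 h hj0) hj
          · exact absurd (h2 i j j1 h hj1) hj'
        have hsub : ∑ j ∈ ({j0, j1} : Finset (Fin (n+1))), B i j = ∑ j, B i j :=
          Finset.sum_subset (Finset.subset_univ _) (fun x _ hx => by
            simp only [Finset.mem_insert, Finset.mem_singleton, not_or] at hx
            exact hz x hx.1 hx.2)
        rw [← hsub, Finset.sum_pair hne, hj0, hj1]
        ring
      rw [← Matrix.exists_mulVec_eq_zero_iff]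
      refine ⟨fun _ => 1, ?_, ?_⟩
      · intro h
        have := congr_fun h 0
        simp at this
      · ext i
        simp [Matrix.mulVec, dotProduct, hsum i]
    · have hrow : ∃ i, ∀ j k, B i j ≠ 0 → B i k ≠ 0 → j = k := by
        push_neg at hall
        obtain ⟨i, hi⟩ := hall
        refine ⟨i, fun j k hj hk => ?_⟩
        rcases hv i j with hj0 | hj1 | hjm
        · exact absurd hj0 hj
        · rcases hv i k with hk0 | hk1 | hkm
          · exact absurd hk0 hk
          · exact h1 i j k hj1 hk1
          · exact absurd hkm (hi ⟨j, hj1⟩ k)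
        · rcases hv i k with hk0 | hk1 | hkm
          · exact absurd hk0 hk
          · exact absurd hjm (hi ⟨k, hk1⟩ j)
          · exact h2 i j k hjm hkm
      obtain ⟨i, honz⟩ := hrow
      by_cases hz : ∀ j, B i j = 0
      · left; exact Matrix.det_eq_zero_of_row_eq_zero i hz
      · push_neg at hz
        obtain ⟨j0, hj0⟩ := hz
        have hrest : ∀ j, j ≠ j0 → B i j = 0 := fun j hj => by
          by_contra h
          exact hj (honz j j0 h hj0)
        rw [Matrix.det_succ_row B i,
          Finset.sum_eq_single j0 (fun b _ hb => by rw [hrest b hb]; ring)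
            (fun h => absurd (Finset.mem_univ j0) h)]
        have hm := ih (B.submatrix i.succAbove j0.succAbove)
          (fun a b => hv _ _)
          (fun a b c hb hc => Fin.succAbove_right_injective
            (h1 (i.succAbove a) _ _ hb hc))
          (fun a b c hb hc => Fin.succAbove_right_injective
            (h2 (i.succAbove a) _ _ hb hc))
        have hs : (-1 : ℤ) ^ ((i : ℕ) + (j0 : ℕ)) = 1 ∨
            (-1 : ℤ) ^ ((i : ℕ) + (j0 : ℕ)) = -1 := neg_one_pow_eq_or ℤ _
        have hval : B i j0 = 1 ∨ B i j0 = -1 := by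
          rcases hv i j0 with h | h | h
          · exact absurd h hj0
          · exact Or.inl h
          · exact Or.inr h
        rcases hs with hs | hs <;> rcases hval with hb | hb <;>
          rcases hm with hd | hd | hd <;> rw [hs, hb, hd] <;> norm_num

/-- A square 0/1 matrix with consecutive ones in each row has determinant `0`, `1`, or `-1`. -/
private lemma lemB (r : ℕ) (B : Matrix (Fin r) (Fin r) ℤ)
    (hv : ∀ i j, B i j = 0 ∨ B i j = 1)
    (hc : ∀ i (j k l : Fin r), j ≤ k → k ≤ l → B i j = 1 → B i l = 1 → B i k = 1) :
    B.det = 0 ∨ B.det = 1 ∨ B.det = -1 := by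
  classical
  -- extended row function
  set u : Fin r → ℕ → ℤ := fun i t => if h : t < r then B i ⟨t, h⟩ else 0 with hu
  have hu01 : ∀ i t, u i t = 0 ∨ u i t = 1 := by
    intro i t
    simp only [hu]
    split
    · exact hv i _
    · exact Or.inl rfl
  have huB : ∀ (i : Fin r) (k : Fin r), u i (k : ℕ) = B i k := by
    intro i k
    simp only [hu, dif_pos k.isLt, Fin.eta]
  have huc : ∀ (i : Fin r) (a b c : ℕ), a ≤ b → b ≤ c → u i a = 1 → u i c = 1 →
      u i b = 1 := by
    intro i a b c hab hbc ha hc'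
    have hcr : c < r := by
      by_contra h
      simp only [hu, dif_neg h] at hc'
      omega
    have har : a < r := lt_of_le_of_lt (le_trans hab hbc) hcr
    have hbr : b < r := lt_of_le_of_lt hbc hcr
    have := hc i ⟨a, har⟩ ⟨b, hbr⟩ ⟨c, hcr⟩ hab hbc
      (by simpa only [hu, dif_pos har] using ha)
      (by simpa only [hu, dif_pos hcr] using hc')
    simpa only [hu, dif_pos hbr] using this
  -- the difference matrix
  set D : Matrix (Fin r) (Fin r) ℤ :=
    fun j k => if (j : ℕ) = (k : ℕ) then 1 else if (j : ℕ) = (k : ℕ) + 1 then -1 else 0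
    with hD
  have hDdet : D.det = 1 := by
    have htri : D.BlockTriangular OrderDual.toDual := by
      intro a b hab
      have h : (a : ℕ) < (b : ℕ) := hab
      simp only [hD]
      rw [if_neg (by omega), if_neg (by omega)]
    rw [Matrix.det_of_lowerTriangular D htri]
    have : ∀ a : Fin r, D a a = 1 := fun a => by simp [hD]
    simp [this]
  have hZ : ∀ i k, (B * D) i k = u i (k : ℕ) - u i ((k : ℕ) + 1) := by
    intro i k
    rw [Matrix.mul_apply]
    have hterm : ∀ j : Fin r, B i j * D j k =
        (if j = k then B i j else 0) + (if (j : ℕ) = (k : ℕ) + 1 then -B i j else 0) := by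
      intro j
      simp only [hD, Fin.ext_iff]
      split_ifs <;> first | (exfalso; omega) | ring
    rw [Finset.sum_congr rfl (fun j _ => hterm j), Finset.sum_add_distrib]
    have hfirst : ∑ j : Fin r, (if j = k then B i j else 0) = B i k := by
      rw [Finset.sum_ite_eq' Finset.univ k (fun j => B i j)]
      simp
    rw [hfirst, huB i k]
    by_cases hk : (k : ℕ) + 1 < r
    · have hcond : ∀ j : Fin r, ((j : ℕ) = (k : ℕ) + 1) ↔ (j = ⟨(k : ℕ) + 1, hk⟩) := by
        intro j
        constructor
        · intro h; exact Fin.ext h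
        · intro h; rw [h]
      have hsecond : ∑ j : Fin r, (if (j : ℕ) = (k : ℕ) + 1 then -B i j else 0) =
          -B i ⟨(k : ℕ) + 1, hk⟩ := by
        rw [Finset.sum_congr rfl (fun j _ => by rw [if_congr (hcond j) rfl rfl]),
          Finset.sum_ite_eq' Finset.univ (⟨(k : ℕ) + 1, hk⟩ : Fin r) (fun j => -B i j)]
        simp
      rw [hsecond]
      simp only [hu, dif_pos hk]
      ring
    · have hsecond : ∑ j : Fin r, (if (j : ℕ) = (k : ℕ) + 1 then -B i j else 0) = 0 :=
        Finset.sum_eq_zero (fun j _ => by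
          rw [if_neg (by have := j.isLt; omega)])
      rw [hsecond]
      simp only [hu, dif_neg hk]
      ring
  -- plus/minus structure of B * D
  have hp : ∀ (i k : Fin r), (B * D) i k = 1 →
      u i (k : ℕ) = 1 ∧ u i ((k : ℕ) + 1) = 0 := by
    intro i k h
    rw [hZ] at h
    rcases hu01 i (k : ℕ) with h' | h' <;> rcases hu01 i ((k : ℕ) + 1) with h'' | h'' <;>
      omega
  have hm : ∀ (i k : Fin r), (B * D) i k = -1 →
      u i (k : ℕ) = 0 ∧ u i ((k : ℕ) + 1) = 1 := by
    intro i k h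
    rw [hZ] at h
    rcases hu01 i (k : ℕ) with h' | h' <;> rcases hu01 i ((k : ℕ) + 1) with h'' | h'' <;>
      omega
  have key1 : ∀ (i j k : Fin r), (j : ℕ) < (k : ℕ) → (B * D) i j = 1 → (B * D) i k = 1 →
      False := by
    intro i j k hlt hj hk
    obtain ⟨ha, hb⟩ := hp i j hj
    obtain ⟨hc', _⟩ := hp i k hk
    have := huc i (j : ℕ) ((j : ℕ) + 1) (k : ℕ) (by omega) (by omega) ha hc'
    omega
  have key2 : ∀ (i j k : Fin r), (j : ℕ) < (k : ℕ) → (B * D) i j = -1 → (B * D) i k = -1 →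
      False := by
    intro i j k hlt hj hk
    obtain ⟨_, hb⟩ := hm i j hj
    obtain ⟨hc', hd⟩ := hm i k hk
    have := huc i ((j : ℕ) + 1) (k : ℕ) ((k : ℕ) + 1) (by omega) (by omega) hb hd
    omega
  have := lemA r (B * D)
    (fun i k => by
      rw [hZ]
      rcases hu01 i (k : ℕ) with h' | h' <;> rcases hu01 i ((k : ℕ) + 1) with h'' | h'' <;>
        omega)
    (fun i j k hj hk => by
      rcases Nat.lt_trichotomy (j : ℕ) (k : ℕ) with h | h | h
      · exact absurd (key1 i j k h hj hk) id
      · exact Fin.ext h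
      · exact absurd (key1 i k j h hk hj) id)
    (fun i j k hj hk => by
      rcases Nat.lt_trichotomy (j : ℕ) (k : ℕ) with h | h | h
      · exact absurd (key2 i j k h hj hk) id
      · exact Fin.ext h
      · exact absurd (key2 i k j h hk hj) id)
  rwa [Matrix.det_mul, hDdet, mul_one] at this

/-- A 0/1 matrix with the consecutive ones property (in each row, all 1 entries appear
consecutively) is totally unimodular: every square submatrix has determinant 0, 1, or -1. -/
theorem consecutive_ones_totally_unimodular
    {m n : ℕ} (A : Matrix (Fin m) (Fin n) ℤ)
    (h01 : ∀ i j, A i j = 0 ∨ A i j = 1)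
    (hconsec : ∀ (i : Fin m) (j k l : Fin n), j ≤ k → k ≤ l → A i j = 1 → A i l = 1 → A i k = 1) :
    ∀ (r : ℕ) (f : Fin r → Fin m) (g : Fin r → Fin n),
      (A.submatrix f g).det = 0 ∨ (A.submatrix f g).det = 1 ∨ (A.submatrix f g).det = -1 := by
  intro r f g
  classical
  set σ := Tuple.sort g with hσ
  have hmono : Monotone (g ∘ σ) := Tuple.monotone_sort g
  have h := lemB r (A.submatrix f (g ∘ σ))
    (fun i j => h01 _ _)
    (fun i j k l hjk hkl hj hl =>
      hconsec (f i) _ _ _ (hmono hjk) (hmono hkl) hj hl)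
  have e1 : A.submatrix f (g ∘ σ) = (A.submatrix f g).submatrix id σ := by
    rw [Matrix.submatrix_submatrix]
    rfl
  rw [e1, Matrix.det_permute'] at h
  rcases Int.units_eq_one_or (Equiv.Perm.sign σ) with hs | hs <;> rw [hs] at h <;>
    simp at h <;> rcases h with h | h | h <;> omega
end

section
/- For every integer vector v ∈ ℤ^k in the kernel of the matrix A whose columns are s_1,…,s_{2n} as above (i.e., Σ v_i s_i = 0), v is an integer linear combination of the vectors e_i + e_{n+j} − e_j − e_{n+i} for 1 ≤ i < j ≤ n. Equivalently, the toric ideal I of the homogeneous star code is generated by the binomials t_i t_{n+j} − t_j t_{n+i}, 1 ≤ i < j ≤ n. -/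
/-- The `i`-th codeword (1-based, `1 ≤ i ≤ 2n`) of the homogeneous star code `S_n`. -/
def starCodeword (n i : ℕ) : Fin (n + 1) → ℤ := fun j =>
  if i < n then
    (if (j : ℕ) = 0 then 1 else 0) + (if (j : ℕ) = i then 1 else 0) +
      (if (j : ℕ) = n then 1 else 0)
  else if i = n then (if (j : ℕ) = 0 then 1 else 0) + (if (j : ℕ) = n then 1 else 0)
  else if i < 2 * n then (if (j : ℕ) = i - n then 1 else 0) + (if (j : ℕ) = n then 1 else 0)
  else (if (j : ℕ) = n then 1 else 0)

/-- Every integer vector in the kernel of the star code matrix is an integer linear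
combination of the vectors `e_i + e_{n+j} − e_j − e_{n+i}` for `1 ≤ i < j ≤ n`;
equivalently the toric ideal of `S_n` is generated by the binomials `t_i t_{n+j} − t_j t_{n+i}`. -/
theorem star_code_kernel_generated {n : ℕ} (v : Fin (2 * n) → ℤ)
    (hv : ∑ a : Fin (2 * n), v a • starCodeword n ((a : ℕ) + 1) = 0) :
    v ∈ Submodule.span ℤ {w : Fin (2 * n) → ℤ |
      ∃ (i j : ℕ) (h1 : 1 ≤ i) (h2 : i < j) (h3 : j ≤ n),
        w = Pi.single (⟨i - 1, by omega⟩ : Fin (2 * n)) 1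
          + Pi.single (⟨n + j - 1, by omega⟩ : Fin (2 * n)) 1
          - Pi.single (⟨j - 1, by omega⟩ : Fin (2 * n)) 1
          - Pi.single (⟨n + i - 1, by omega⟩ : Fin (2 * n)) 1} := by
  rcases Nat.eq_zero_or_pos n with hn0 | hn
  · subst hn0
    have hv0 : v = 0 := funext fun a => absurd a.isLt (by omega)
    rw [hv0]
    exact Submodule.zero_mem _
  set u : ℕ → ℤ := fun k => if h : k < 2 * n then v ⟨k, h⟩ else 0 with hu
  have H : ∀ c : Fin (n + 1), ∑ k ∈ Finset.range (2 * n), u k * starCodeword n (k + 1) c = 0 := by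
    intro c
    have h1 := congrFun hv c
    simp only [Finset.sum_apply, Pi.smul_apply, smul_eq_mul, Pi.zero_apply] at h1
    rw [← h1, ← Fin.sum_univ_eq_sum_range (fun k => u k * starCodeword n (k + 1) c)]
    refine Finset.sum_congr rfl fun a _ => ?_
    rw [hu]
    simp only [a.isLt, dif_pos, Fin.eta]
  -- coordinate 0 : sum over first n entries vanishes
  have hsum0 : ∑ k ∈ Finset.range n, u k = 0 := by
    have h0 := H ⟨0, by omega⟩
    have e1 : ∀ k ∈ Finset.range (2 * n), u k * starCodeword n (k + 1) ⟨0, by omega⟩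
        = if k < n then u k else 0 := by
      intro k hk
      simp only [Finset.mem_range] at hk
      simp only [starCodeword, Fin.val_mk]
      split_ifs <;> first | ring1 | (exfalso; omega) | exact False.elim ‹False›
    rw [Finset.sum_congr rfl e1] at h0
    rw [← h0, ← Finset.sum_filter]
    congr 1
    ext x; simp; omega
  -- coordinate n : total sum vanishes
  have hsumall : ∑ k ∈ Finset.range (2 * n), u k = 0 := by
    have h0 := H ⟨n, by omega⟩
    have e1 : ∀ k ∈ Finset.range (2 * n), u k * starCodeword n (k + 1) ⟨n, by omega⟩
        = u k := by
      intro k hk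
      simp only [Finset.mem_range] at hk
      simp only [starCodeword, Fin.val_mk]
      split_ifs <;> first | ring1 | (exfalso; omega) | exact False.elim ‹False›
    rw [Finset.sum_congr rfl e1] at h0
    exact h0
  -- pair relations for 0 ≤ k < n-1
  have hpairlt : ∀ k : ℕ, k + 1 < n → u k + u (n + k) = 0 := by
    intro m hm
    have h0 := H ⟨m + 1, by omega⟩
    have e1 : ∀ k ∈ Finset.range (2 * n), u k * starCodeword n (k + 1) ⟨m + 1, by omega⟩
        = (if k = m then u k else 0) + (if k = n + m then u k else 0) := by
      intro k hk
      simp only [Finset.mem_range] at hk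
      simp only [starCodeword, Fin.val_mk]
      split_ifs <;> first | ring1 | (exfalso; omega) | exact False.elim ‹False›
    rw [Finset.sum_congr rfl e1, Finset.sum_add_distrib,
      Finset.sum_ite_eq' (Finset.range (2 * n)) m u,
      Finset.sum_ite_eq' (Finset.range (2 * n)) (n + m) u] at h0
    simp only [Finset.mem_range] at h0
    rw [if_pos (by omega), if_pos (by omega)] at h0
    exact h0
  -- the last pair relation
  have hpair : ∀ k : ℕ, k < n → u k + u (n + k) = 0 := by
    intro k hk
    rcases Nat.lt_or_ge (k + 1) n with h | h
    · exact hpairlt k h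
    have hkn : k + 1 = n := by omega
    have split2 : ∑ j ∈ Finset.range (2 * n), u j
        = ∑ j ∈ Finset.range n, u j + ∑ j ∈ Finset.range n, u (n + j) := by
      rw [two_mul, Finset.sum_range_add]
    have h3 : ∑ j ∈ Finset.range n, u (n + j) = 0 := by
      rw [split2, hsum0] at hsumall; linarith
    have h4 : ∑ j ∈ Finset.range k, u (n + j) = - ∑ j ∈ Finset.range k, u j := by
      rw [← Finset.sum_neg_distrib]
      refine Finset.sum_congr rfl fun j hj => ?_
      have := hpairlt j (by simp at hj; omega)
      linarith
    rw [← hkn] at h3 h4 hsum0 ⊢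
    rw [Finset.sum_range_succ] at h3 hsum0
    rw [h4] at h3
    linarith
  -- the generating vectors, packaged with a decidable guard
  set W : ℕ → Fin (2 * n) → ℤ := fun k =>
    if hk : k < n then
      Pi.single (⟨0, by omega⟩ : Fin (2 * n)) 1
        + Pi.single (⟨n + k, by omega⟩ : Fin (2 * n)) 1
        - Pi.single (⟨k, by omega⟩ : Fin (2 * n)) 1
        - Pi.single (⟨n, by omega⟩ : Fin (2 * n)) 1
    else 0 with hWdef
  have hW : ∀ k : ℕ, W k ∈ Submodule.span ℤ {w : Fin (2 * n) → ℤ |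
      ∃ (i j : ℕ) (h1 : 1 ≤ i) (h2 : i < j) (h3 : j ≤ n),
        w = Pi.single (⟨i - 1, by omega⟩ : Fin (2 * n)) 1
          + Pi.single (⟨n + j - 1, by omega⟩ : Fin (2 * n)) 1
          - Pi.single (⟨j - 1, by omega⟩ : Fin (2 * n)) 1
          - Pi.single (⟨n + i - 1, by omega⟩ : Fin (2 * n)) 1} := by
    intro k
    rcases Nat.lt_or_ge k n with hk | hk
    · rcases Nat.eq_zero_or_pos k with hk0 | hk1
      · subst hk0
        have : W 0 = 0 := by
          rw [hWdef]
          simp only [dif_pos hn]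
          funext x
          simp only [Pi.add_apply, Pi.sub_apply, Pi.single_apply, Pi.zero_apply, Fin.ext_iff]
          split_ifs <;> omega
        rw [this]
        exact Submodule.zero_mem _
      · refine Submodule.subset_span ?_
        refine ⟨1, k + 1, le_refl 1, by omega, by omega, ?_⟩
        rw [hWdef]
        simp only [dif_pos hk]
        rfl
    · have : W k = 0 := by rw [hWdef]; simp only [dif_neg (by omega : ¬ k < n)]
      rw [this]
      exact Submodule.zero_mem _
  -- v agrees with the explicit combination
  have hva : v = fun a : Fin (2 * n) => u (a : ℕ) := by
    funext a
    rw [hu]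
    simp only [a.isLt, dif_pos, Fin.eta]
  have key : v = ∑ k ∈ Finset.range n, (-(u k)) • W k := by
    funext a
    rw [Finset.sum_apply]
    simp only [Pi.smul_apply, smul_eq_mul]
    have haval : v a = u (a : ℕ) := by rw [hva]
    have ha2 : (a : ℕ) < 2 * n := a.isLt
    have hWa : ∀ k, k < n → W k a
        = (if (a : ℕ) = 0 then 1 else 0) + (if (a : ℕ) = n + k then 1 else 0)
          - (if (a : ℕ) = k then 1 else 0) - (if (a : ℕ) = n then 1 else 0) := by
      intro k hk
      rw [hWdef]
      simp only [dif_pos hk, Pi.add_apply, Pi.sub_apply, Pi.single_apply, Fin.ext_iff,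
        Fin.val_mk]
    rcases Nat.lt_or_ge (a : ℕ) n with han | han
    · rcases Nat.eq_zero_or_pos (a : ℕ) with ha0 | ha1
      · -- coordinate 0
        have e : ∀ k ∈ Finset.range n, (-(u k)) * W k a
            = -(u k) + (if k = 0 then u k else 0) := by
          intro k hk
          simp only [Finset.mem_range] at hk
          rw [hWa k hk]
          split_ifs <;> first | ring1 | (exfalso; omega) | exact False.elim ‹False›
        rw [Finset.sum_congr rfl e, Finset.sum_add_distrib, Finset.sum_neg_distrib, hsum0,
          Finset.sum_ite_eq' (Finset.range n) 0 u, if_pos (Finset.mem_range.mpr hn)]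
        rw [haval, ha0]
        ring
      · -- coordinates 1 … n-1
        have e : ∀ k ∈ Finset.range n, (-(u k)) * W k a
            = (if k = (a : ℕ) then u k else 0) := by
          intro k hk
          simp only [Finset.mem_range] at hk
          rw [hWa k hk]
          split_ifs <;> first | ring1 | (exfalso; omega) | exact False.elim ‹False›
        rw [Finset.sum_congr rfl e,
          Finset.sum_ite_eq' (Finset.range n) ((a : ℕ)) u, if_pos (Finset.mem_range.mpr han),
          haval]
    · rcases Nat.eq_or_lt_of_le han with hanq | han2
      · -- coordinate n
        have e : ∀ k ∈ Finset.range n, (-(u k)) * W k a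
            = u k - (if k = 0 then u k else 0) := by
          intro k hk
          simp only [Finset.mem_range] at hk
          rw [hWa k hk]
          split_ifs <;> first | ring1 | (exfalso; omega) | exact False.elim ‹False›
        rw [Finset.sum_congr rfl e, Finset.sum_sub_distrib, hsum0,
          Finset.sum_ite_eq' (Finset.range n) 0 u, if_pos (Finset.mem_range.mpr hn)]
        have hp := hpair 0 hn
        have hn0 : n + 0 = n := by omega
        rw [hn0] at hp
        rw [haval, ← hanq]
        linarith
      · -- coordinates n+1 … 2n-1
        have e : ∀ k ∈ Finset.range n, (-(u k)) * W k a
            = (if k = (a : ℕ) - n then -(u k) else 0) := by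
          intro k hk
          simp only [Finset.mem_range] at hk
          rw [hWa k hk]
          split_ifs <;> first | ring1 | (exfalso; omega) | exact False.elim ‹False›
        rw [Finset.sum_congr rfl e,
          Finset.sum_ite_eq' (Finset.range n) ((a : ℕ) - n) (fun k => -(u k)),
          if_pos (Finset.mem_range.mpr (by omega))]
        have hp := hpair ((a : ℕ) - n) (by omega)
        have hmn : n + ((a : ℕ) - n) = (a : ℕ) := by omega
        rw [hmn] at hp
        rw [haval]
        linarith
  rw [key]
  exact Submodule.sum_mem _ fun k _ => Submodule.smul_mem _ _ (hW k)
end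

section
/- The permutohedron Π_n equals the translate by (1,…,1) of the Minkowski sum of the line segments [e_i, e_j] over all pairs 1 ≤ i < j ≤ n; that is, Π_n = {(1,…,1)} + Σ_{1≤i<j≤n} [e_i, e_j]. -/
open Pointwise Finset

/-- The permutohedron `Π_n`. -/
def permutohedron (n : ℕ) : Set (Fin n → ℝ) :=
  convexHull ℝ {x | ∃ π : Equiv.Perm (Fin n), ∀ k, x k = ((π k : ℕ) : ℝ) + 1}

namespace PermMink

variable {n : ℕ}

/-- score of vertex `k` in the tournament `w`. -/
def score (w : Fin n → Fin n → Bool) (k : Fin n) : ℕ :=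
  (Finset.univ.filter (fun j => j ≠ k ∧ w k j = true)).card

def Antisym (w : Fin n → Fin n → Bool) : Prop := ∀ i j, i ≠ j → w i j = !w j i

lemma score_lt (w : Fin n → Fin n → Bool) (k : Fin n) : score w k < n := by
  have h1 : (Finset.univ.filter (fun j => j ≠ k ∧ w k j = true)) ⊆ Finset.univ.erase k := by
    intro j hj
    simp only [mem_filter] at hj
    exact Finset.mem_erase.2 ⟨hj.2.1, Finset.mem_univ _⟩
  have h2 := Finset.card_le_card h1
  have h3 : (Finset.univ.erase k).card = n - 1 := by
    rw [Finset.card_erase_of_mem (Finset.mem_univ _)]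
    simp
  have hn : 0 < n := k.pos
  unfold score
  omega

/-- flip the edge between `i` and `j` so that it points from `j` to `i`. -/
def flip (w : Fin n → Fin n → Bool) (i j : Fin n) : Fin n → Fin n → Bool :=
  fun a b => if a = i ∧ b = j then false else if a = j ∧ b = i then true else w a b

lemma antisym_flip {w : Fin n → Fin n → Bool} (hw : Antisym w) {i j : Fin n} (hij : i ≠ j) :
    Antisym (flip w i j) := by
  intro a b hab
  unfold flip
  by_cases h1 : a = i ∧ b = j
  · simp [h1, hij, hij.symm, (h1.1 ▸ h1.2 ▸ hab : i ≠ j)]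
  · by_cases h2 : a = j ∧ b = i
    · obtain ⟨ha, hb⟩ := h2; subst ha; subst hb; simp [hij, hij.symm]
    · have hb1 : ¬ (b = i ∧ a = j) := fun h => h2 ⟨h.2, h.1⟩
      have hb2 : ¬ (b = j ∧ a = i) := fun h => h1 ⟨h.2, h.1⟩
      simp [h1, h2, hb1, hb2, hw a b hab]

lemma score_flip_other {w : Fin n → Fin n → Bool} {i j k : Fin n} (hki : k ≠ i) (hkj : k ≠ j) :
    score (flip w i j) k = score w k := by
  unfold score
  congr 1
  apply Finset.filter_congr
  intro b _
  simp [flip, hki, hkj]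

lemma score_flip_fst {w : Fin n → Fin n → Bool} {i j : Fin n} (hij : i ≠ j)
    (hwij : w i j = true) : score (flip w i j) i + 1 = score w i := by
  unfold score
  have hset : (Finset.univ.filter (fun b => b ≠ i ∧ flip w i j i b = true)) =
      (Finset.univ.filter (fun b => b ≠ i ∧ w i b = true)).erase j := by
    ext b
    simp only [Finset.mem_erase, mem_filter, Finset.mem_univ, true_and]
    constructor
    · rintro ⟨hbi, hb⟩
      unfold flip at hb
      by_cases hbj : b = j
      · simp [hbj] at hb
      · simp [hbj, hij.symm, hbi] at hb
        exact ⟨hbj, hbi, hb⟩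
    · rintro ⟨hbj, hbi, hb⟩
      refine ⟨hbi, ?_⟩
      simp [flip, hbj, hij.symm, hbi, hb]
  rw [hset, Finset.card_erase_of_mem]
  · have hmem : j ∈ Finset.univ.filter (fun b => b ≠ i ∧ w i b = true) := by
      simp [hij.symm, hwij]
    have := Finset.card_pos.2 ⟨j, hmem⟩
    omega
  · simp [hij.symm, hwij]

lemma score_flip_snd {w : Fin n → Fin n → Bool} (hw : Antisym w) {i j : Fin n} (hij : i ≠ j)
    (hwij : w i j = true) : score (flip w i j) j = score w j + 1 := by
  unfold score
  have hset : (Finset.univ.filter (fun b => b ≠ j ∧ flip w i j j b = true)) =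
      insert i (Finset.univ.filter (fun b => b ≠ j ∧ w j b = true)) := by
    ext b
    simp only [Finset.mem_insert, mem_filter, Finset.mem_univ, true_and]
    constructor
    · rintro ⟨hbj, hb⟩
      by_cases hbi : b = i
      · exact Or.inl hbi
      · right
        unfold flip at hb
        simp [hij.symm, hbi] at hb
        exact ⟨hbj, hb⟩
    · rintro (hbi | ⟨hbj, hb⟩)
      · subst hbi
        refine ⟨hij, ?_⟩
        simp [flip, hij]
      · refine ⟨hbj, ?_⟩
        have hbi : ¬ (b = i) := by
          intro h
          subst h
          rw [hw j b hij.symm, hwij] at hb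
          simp at hb
        simp [flip, hij.symm, hbi, hbj, hb]
  rw [hset, Finset.card_insert_of_notMem]
  intro h
  simp only [mem_filter, Finset.mem_univ, true_and] at h
  rw [hw j i hij.symm, hwij] at h
  simp at h


lemma antisym_relabel {w : Fin n → Fin n → Bool} (hw : Antisym w) (σ : Equiv.Perm (Fin n)) :
    Antisym (fun a b => w (σ a) (σ b)) := by
  intro a b hab
  exact hw (σ a) (σ b) (fun h => hab (σ.injective h))

lemma score_relabel (w : Fin n → Fin n → Bool) (σ : Equiv.Perm (Fin n)) (k : Fin n) :
    score (fun a b => w (σ a) (σ b)) k = score w (σ k) := by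
  unfold score
  apply Finset.card_bij (fun a _ => σ a)
  · intro a ha
    simp only [mem_filter, Finset.mem_univ, true_and] at ha ⊢
    exact ⟨fun h => ha.1 (σ.injective h), ha.2⟩
  · intro a _ b _ h
    exact σ.injective h
  · intro b hb
    simp only [mem_filter, Finset.mem_univ, true_and] at hb
    refine ⟨σ.symm b, ?_, by simp⟩
    simp only [mem_filter, Finset.mem_univ, true_and, Equiv.apply_symm_apply]
    exact ⟨fun h => hb.1 (by rw [← h, Equiv.apply_symm_apply]), hb.2⟩

lemma sum_split (f : Fin n → ℕ) {i j : Fin n} (hij : i ≠ j) :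
    ∑ k, f k = f i + f j + ∑ k ∈ (Finset.univ.erase i).erase j, f k := by
  rw [← Finset.add_sum_erase _ f (Finset.mem_univ i)]
  rw [← Finset.add_sum_erase _ f (Finset.mem_erase.2 ⟨hij.symm, Finset.mem_univ j⟩)]
  ring

lemma vertex_mem (w : Fin n → Fin n → Bool)
    (hinj : Function.Injective (score w)) :
    (fun k => (score w k : ℝ) + 1) ∈ permutohedron n := by
  have hf : Function.Injective (fun k => (⟨score w k, score_lt w k⟩ : Fin n)) := by
    intro a b h
    apply hinj
    simpa using congrArg Fin.val h
  have hbij := Finite.injective_iff_bijective.1 hf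
  refine subset_convexHull ℝ _ ⟨Equiv.ofBijective _ hbij, fun k => ?_⟩
  simp [Equiv.ofBijective]

lemma score_mem (M : ℕ) (w : Fin n → Fin n → Bool) (hw : Antisym w)
    (hM : n ^ 3 ≤ M + ∑ k, (score w k) ^ 2) :
    (fun k => (score w k : ℝ) + 1) ∈ permutohedron n := by
  induction M generalizing w with
  | zero =>
    by_cases hinj : Function.Injective (score w)
    · exact vertex_mem w hinj
    · exfalso
      obtain ⟨i, j, hij, -⟩ : ∃ i j, i ≠ j ∧ score w i = score w j := by
        simp only [Function.Injective, not_forall] at hinj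
        obtain ⟨i, j, h1, h2⟩ := hinj
        exact ⟨i, j, h2, h1⟩
      have hn : 1 ≤ n := i.pos
      have hb : ∀ k, (score w k) ^ 2 ≤ (n - 1) ^ 2 := by
        intro k
        have := score_lt w k
        exact Nat.pow_le_pow_left (by omega) 2
      have h1 : ∑ k, (score w k) ^ 2 ≤ n * (n - 1) ^ 2 := by
        calc ∑ k, (score w k) ^ 2 ≤ ∑ _k : Fin n, (n - 1) ^ 2 :=
              Finset.sum_le_sum (fun k _ => hb k)
          _ = n * (n - 1) ^ 2 := by simp [mul_comm]
      have h2 : n * (n - 1) ^ 2 < n ^ 3 := by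
        rcases Nat.exists_eq_add_of_le hn with ⟨m, rfl⟩
        simp only [Nat.add_sub_cancel_left]
        nlinarith
      omega
  | succ M ih =>
    by_cases hinj : Function.Injective (score w)
    · exact vertex_mem w hinj
    · obtain ⟨i, j, hij, heq⟩ : ∃ i j, i ≠ j ∧ score w i = score w j := by
        simp only [Function.Injective, not_forall] at hinj
        obtain ⟨i, j, h1, h2⟩ := hinj
        exact ⟨i, j, h2, h1⟩
      -- WLOG w i j = true
      wlog hwij : w i j = true generalizing i j
      · refine this j i hij.symm heq.symm ?_
        have := hw i j hij
        rw [Bool.not_eq_true] at hwij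
        rw [hwij] at this
        simpa using this.symm
      -- first flip
      set w1 := flip w i j with hw1def
      have hw1 : Antisym w1 := antisym_flip hw hij
      have h1i : score w1 i + 1 = score w i := score_flip_fst hij hwij
      have h1j : score w1 j = score w j + 1 := score_flip_snd hw hij hwij
      have h1o : ∀ k, k ≠ i → k ≠ j → score w1 k = score w k :=
        fun k h h' => score_flip_other h h'
      -- relabeled tournament
      set σ := Equiv.swap i j with hσ
      set wr : Fin n → Fin n → Bool := fun a b => w (σ a) (σ b) with hwr
      have hwrA : Antisym wr := antisym_relabel hw σ
      have hscr : ∀ k, score wr k = score w k := by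
        intro k
        rw [score_relabel]
        by_cases hki : k = i
        · subst hki; rw [hσ, Equiv.swap_apply_left]; exact heq.symm
        · by_cases hkj : k = j
          · subst hkj; rw [hσ, Equiv.swap_apply_right]; exact heq
          · rw [hσ, Equiv.swap_apply_of_ne_of_ne hki hkj]
      have hwrji : wr j i = true := by
        simp only [hwr, hσ, Equiv.swap_apply_left, Equiv.swap_apply_right]
        exact hwij
      set w2 := flip wr j i with hw2def
      have hw2 : Antisym w2 := antisym_flip hwrA hij.symm
      have h2j : score w2 j + 1 = score w j := by
        rw [← hscr j]; exact score_flip_fst hij.symm hwrji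
      have h2i : score w2 i = score w i + 1 := by
        rw [← hscr i]; exact score_flip_snd hwrA hij.symm hwrji
      have h2o : ∀ k, k ≠ i → k ≠ j → score w2 k = score w k := by
        intro k h h'
        rw [← hscr k]; exact score_flip_other h' h
      -- measure increases
      have hms : ∀ (v : Fin n → Fin n → Bool),
          score v i + score v j = score w i + score w j →
          (score v i) ^ 2 + (score v j) ^ 2 = (score w i) ^ 2 + (score w j) ^ 2 + 2 →
          (∀ k, k ≠ i → k ≠ j → score v k = score w k) →
          n ^ 3 ≤ M + ∑ k, (score v k) ^ 2 := by
        intro v _ hsq ho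
        have hsplit1 : ∑ k, (score v k) ^ 2 = (score v i) ^ 2 + (score v j) ^ 2 +
            ∑ k ∈ (Finset.univ.erase i).erase j, (score v k) ^ 2 :=
          sum_split (fun k => (score v k) ^ 2) hij
        have hsplit2 : ∑ k, (score w k) ^ 2 = (score w i) ^ 2 + (score w j) ^ 2 +
            ∑ k ∈ (Finset.univ.erase i).erase j, (score w k) ^ 2 :=
          sum_split (fun k => (score w k) ^ 2) hij
        have htail : ∑ k ∈ (Finset.univ.erase i).erase j, (score v k) ^ 2 =
            ∑ k ∈ (Finset.univ.erase i).erase j, (score w k) ^ 2 := by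
          apply Finset.sum_congr rfl
          intro k hk
          simp only [Finset.mem_erase] at hk
          rw [ho k hk.2.1 hk.1]
        omega
      have key1 : n ^ 3 ≤ M + ∑ k, (score w1 k) ^ 2 := by
        apply hms <;> try assumption
        · omega
        · have e1 : score w i = score w1 i + 1 := h1i.symm
          have e2 : score w1 j = score w1 i + 2 := by omega
          rw [e1, ← heq, e1, e2]; ring
      have key2 : n ^ 3 ≤ M + ∑ k, (score w2 k) ^ 2 := by
        apply hms <;> try assumption
        · omega
        · have e1 : score w j = score w2 j + 1 := h2j.symm
          have e2 : score w2 i = score w2 j + 2 := by omega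
          rw [heq, e1, e2]; ring
      have m1 := ih w1 hw1 key1
      have m2 := ih w2 hw2 key2
      have hconv := (convex_convexHull ℝ _) m1 m2 (by norm_num : (0:ℝ) ≤ 1/2)
        (by norm_num : (0:ℝ) ≤ 1/2) (by norm_num)
      convert hconv using 1
      · rfl
      funext k
      simp only [Pi.add_apply, Pi.smul_apply, smul_eq_mul]
      by_cases hki : k = i
      · subst hki
        have c1 : (score w1 k : ℝ) + 1 = (score w k : ℝ) := by exact_mod_cast h1i
        have c2 : (score w2 k : ℝ) = (score w k : ℝ) + 1 := by exact_mod_cast h2i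
        linarith
      · by_cases hkj : k = j
        · subst hkj
          have c1 : (score w1 k : ℝ) = (score w k : ℝ) + 1 := by exact_mod_cast h1j
          have c2 : (score w2 k : ℝ) + 1 = (score w k : ℝ) := by exact_mod_cast h2j
          linarith
        · rw [h1o k hki hkj, h2o k hki hkj]
          ring


def pairs (n : ℕ) : Finset (Fin n × Fin n) :=
  Finset.univ.filter (fun p : Fin n × Fin n => p.1 < p.2)

/-- the chosen basis vector for pair `p` according to tournament `w`. -/
noncomputable def gw (w : Fin n → Fin n → Bool) (p : Fin n × Fin n) : Fin n → ℝ :=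
  Pi.single (if w p.1 p.2 = true then p.1 else p.2) 1

lemma gw_mem (w : Fin n → Fin n → Bool) (p : Fin n × Fin n) :
    gw w p ∈ ({Pi.single p.1 1, Pi.single p.2 1} : Set (Fin n → ℝ)) := by
  unfold gw
  by_cases h : w p.1 p.2 = true
  · rw [if_pos h]; exact Set.mem_insert _ _
  · rw [if_neg h]; exact Set.mem_insert_of_mem _ rfl

lemma single_ne {i j : Fin n} (hij : i ≠ j) :
    (Pi.single i 1 : Fin n → ℝ) ≠ Pi.single j 1 := by
  intro h
  have := congrFun h i
  rw [Pi.single_eq_same, Pi.single_eq_of_ne hij] at this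
  exact one_ne_zero this

lemma cw_cases {w : Fin n → Fin n → Bool} {p : Fin n × Fin n} {k : Fin n}
    (hk : (if w p.1 p.2 = true then p.1 else p.2) = k) :
    (p.1 = k ∧ w p.1 p.2 = true) ∨ (p.2 = k ∧ w p.1 p.2 = false) := by
  by_cases h : w p.1 p.2 = true
  · left; rw [if_pos h] at hk; exact ⟨hk, h⟩
  · right; rw [if_neg h] at hk; exact ⟨hk, by simpa using h⟩

lemma card_cw (w : Fin n → Fin n → Bool) (hw : Antisym w) (k : Fin n) :
    ((pairs n).filter (fun p => (if w p.1 p.2 = true then p.1 else p.2) = k)).card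
      = score w k := by
  unfold score
  apply Finset.card_bij (fun p _ => if p.1 = k then p.2 else p.1)
  · intro p hp
    simp only [pairs, Finset.mem_filter, Finset.mem_univ, true_and] at hp
    obtain ⟨hlt, hk⟩ := hp
    simp only [Finset.mem_filter, Finset.mem_univ, true_and]
    rcases cw_cases hk with ⟨h1, h2⟩ | ⟨h1, h2⟩
    · rw [if_pos h1]
      refine ⟨?_, by rw [← h1]; exact h2⟩
      rw [← h1]; exact (ne_of_gt hlt)
    · have hne : p.1 ≠ k := by rw [← h1]; exact (ne_of_lt hlt)
      rw [if_neg hne]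
      refine ⟨hne, ?_⟩
      have := hw p.2 p.1 (ne_of_gt hlt)
      rw [h2] at this
      rw [← h1, this]
      simp
  · intro p hp q hq h
    simp only [pairs, Finset.mem_filter, Finset.mem_univ, true_and] at hp hq
    obtain ⟨hltp, hkp⟩ := hp
    obtain ⟨hltq, hkq⟩ := hq
    rcases cw_cases hkp with ⟨hp1, _⟩ | ⟨hp1, hpw⟩ <;>
      rcases cw_cases hkq with ⟨hq1, _⟩ | ⟨hq1, hqw⟩
    · rw [if_pos hp1, if_pos hq1] at h
      exact Prod.ext (hp1.trans hq1.symm) h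
    · have hnq : q.1 ≠ k := by rw [← hq1]; exact (ne_of_lt hltq)
      rw [if_pos hp1, if_neg hnq] at h
      exfalso
      have ha : k < q.1 := by rw [← h, ← hp1]; exact hltp
      have hb : q.1 < k := by rw [← hq1]; exact hltq
      exact lt_irrefl k (ha.trans hb)
    · have hnp : p.1 ≠ k := by rw [← hp1]; exact (ne_of_lt hltp)
      rw [if_neg hnp, if_pos hq1] at h
      exfalso
      have ha : k < p.1 := by rw [h, ← hq1]; exact hltq
      have hb : p.1 < k := by rw [← hp1]; exact hltp
      exact lt_irrefl k (ha.trans hb)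
    · have hnp : p.1 ≠ k := by rw [← hp1]; exact (ne_of_lt hltp)
      have hnq : q.1 ≠ k := by rw [← hq1]; exact (ne_of_lt hltq)
      rw [if_neg hnp, if_neg hnq] at h
      exact Prod.ext h (hp1.trans hq1.symm)
  · intro b hb
    simp only [Finset.mem_filter, Finset.mem_univ, true_and] at hb
    obtain ⟨hbk, hwb⟩ := hb
    rcases lt_or_gt_of_ne hbk with hlt | hlt
    · -- b < k : pair (b, k), chosen k since w b k = false
      refine ⟨(b, k), ?_, ?_⟩
      · simp only [pairs, Finset.mem_filter, Finset.mem_univ, true_and]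
        refine ⟨hlt, ?_⟩
        have := hw b k hbk
        rw [hwb] at this
        simp only [this]
        simp
      · simp [hbk]
    · -- k < b : pair (k, b), chosen k since w k b = true
      refine ⟨(k, b), ?_, ?_⟩
      · simp only [pairs, Finset.mem_filter, Finset.mem_univ, true_and]
        exact ⟨hlt, by simp [hwb]⟩
      · simp

lemma sum_gw_apply (w : Fin n → Fin n → Bool) (hw : Antisym w) (k : Fin n) :
    (∑ p ∈ pairs n, gw w p) k = (score w k : ℝ) := by
  rw [Finset.sum_apply]
  have h1 : ∀ p ∈ pairs n, gw w p k =
      if (if w p.1 p.2 = true then p.1 else p.2) = k then (1:ℝ) else 0 := by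
    intro p _
    unfold gw
    rw [Pi.single_apply]
    exact if_congr eq_comm rfl rfl
  rw [Finset.sum_congr rfl h1, Finset.sum_boole, card_cw w hw k]

end PermMink

open PermMink in
/-- `Π_n = {(1,…,1)} + Σ_{1≤i<j≤n} [e_i, e_j]` (Minkowski sum of segments, translated). -/
theorem permutohedron_minkowski (n : ℕ) :
    permutohedron n = {fun _ => (1 : ℝ)} +
      ∑ p ∈ Finset.univ.filter (fun p : Fin n × Fin n => p.1 < p.2),
        segment ℝ (Pi.single p.1 (1 : ℝ)) (Pi.single p.2 1) := by
  classical
  show permutohedron n = ({fun _ => (1 : ℝ)} : Set (Fin n → ℝ)) +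
      ∑ p ∈ pairs n, segment ℝ (Pi.single p.1 (1:ℝ)) (Pi.single p.2 1)
  have hRHS : ({fun _ => (1 : ℝ)} : Set (Fin n → ℝ)) +
      ∑ p ∈ pairs n, segment ℝ (Pi.single p.1 (1:ℝ)) (Pi.single p.2 1) =
      convexHull ℝ (({fun _ => (1 : ℝ)} : Set (Fin n → ℝ)) +
        ∑ p ∈ pairs n, ({Pi.single p.1 1, Pi.single p.2 1} : Set (Fin n → ℝ))) := by
    rw [convexHull_add, convexHull_singleton, convexHull_sum]
    congr 1
    exact Finset.sum_congr rfl (fun p _ => (convexHull_pair _ _).symm)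
  rw [hRHS]
  apply Set.Subset.antisymm
  · -- permutohedron ⊆ hull of the choice points
    apply convexHull_min _ (convex_convexHull ℝ _)
    rintro x ⟨π, hπ⟩
    set w : Fin n → Fin n → Bool := fun i j => decide ((π j : Fin n) < π i) with hwdef
    have hw : Antisym w := by
      intro i j hij
      have hne : π i ≠ π j := fun h => hij (π.injective h)
      rcases hne.lt_or_gt with h | h
      · simp [hwdef, h, asymm h]
      · simp [hwdef, h, asymm h]
    have hscore : ∀ k, score w k = (π k : ℕ) := by
      intro k
      unfold score
      rw [← Fin.card_Iio (π k)]
      apply Finset.card_bij (fun j _ => π j)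
      · intro a ha
        simp only [Finset.mem_filter, Finset.mem_univ, true_and, hwdef,
          decide_eq_true_eq] at ha
        exact Finset.mem_Iio.2 ha.2
      · intro a _ b _ h
        exact π.injective h
      · intro b hb
        rw [Finset.mem_Iio] at hb
        refine ⟨π.symm b, ?_, by simp⟩
        simp only [Finset.mem_filter, Finset.mem_univ, true_and, hwdef,
          decide_eq_true_eq, Equiv.apply_symm_apply]
        refine ⟨fun h => ?_, hb⟩
        rw [← h, Equiv.apply_symm_apply] at hb
        exact lt_irrefl b hb
    have hx : x = (fun _ => (1:ℝ)) + ∑ p ∈ pairs n, gw w p := by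
      funext k
      rw [hπ k, Pi.add_apply, sum_gw_apply w hw k, hscore k]
      ring
    rw [hx]
    apply subset_convexHull
    exact Set.add_mem_add rfl (Set.finset_sum_mem_finset_sum _ _ _ (fun p _ => gw_mem w p))
  · -- hull of choice points ⊆ permutohedron
    apply convexHull_min _ (convex_convexHull ℝ _)
    rintro x hx
    rw [Set.mem_add] at hx
    obtain ⟨a, ha, y, hy, rfl⟩ := hx
    rw [Set.mem_singleton_iff] at ha
    subst ha
    rw [Set.mem_finset_sum] at hy
    obtain ⟨g, hg, hsum⟩ := hy
    set w : Fin n → Fin n → Bool := fun i j =>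
      if i < j then decide (g (i, j) = (Pi.single i 1 : Fin n → ℝ)) else
        !decide (g (j, i) = (Pi.single j 1 : Fin n → ℝ)) with hwdef
    have hw : Antisym w := by
      intro i j hij
      rcases hij.lt_or_gt with h | h
      · simp only [hwdef, if_pos h, if_neg (asymm h), Bool.not_not]
      · simp only [hwdef, if_pos h, if_neg (asymm h), Bool.not_not]
    have hgg : ∀ p ∈ pairs n, g p = gw w p := by
      intro p hp
      simp only [pairs, Finset.mem_filter, Finset.mem_univ, true_and] at hp
      unfold gw
      have hb : w p.1 p.2 = decide (g p = (Pi.single p.1 1 : Fin n → ℝ)) := by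
        simp only [hwdef, if_pos hp, Prod.mk.eta]
      have hmem := hg (by simpa [pairs] using hp)
      rw [Set.mem_insert_iff, Set.mem_singleton_iff] at hmem
      rcases hmem with h1 | h2
      · have hwt : w p.1 p.2 = true := by rw [hb, h1]; simp
        rw [hwt]
        simpa using h1
      · have hwf : w p.1 p.2 = false := by
          rw [hb]
          simp only [decide_eq_false_iff_not]
          rw [h2]
          exact single_ne (ne_of_gt hp)
        rw [hwf]
        simpa using h2
    have hxx : ((fun _ => (1:ℝ)) + y) = fun k => (score w k : ℝ) + 1 := by
      funext k
      rw [← hsum, Finset.sum_congr rfl hgg, Pi.add_apply, sum_gw_apply w hw k]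
      ring
    rw [hxx]
    exact score_mem (n ^ 3) w hw (Nat.le_add_right _ _)
end

section
/- The vertices of the polytope Newt(U_n) = Σ_{1≤i<j≤n} [e_i + e_{n+j}, e_j + e_{n+i}] are exactly the points (π, π^c) − (1,…,1) for π ∈ S_n, where π is regarded as the vector (π(1),…,π(n)) and π^c = (n+1−π(1),…,n+1−π(n)). -/
open Pointwise

def lo {n : ℕ} (i : Fin n) : Fin (2 * n) := ⟨(i : ℕ), by have := i.isLt; omega⟩

def hi {n : ℕ} (i : Fin n) : Fin (2 * n) := ⟨n + (i : ℕ), by have := i.isLt; omega⟩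

/-- The zonotope `Newt(U_n) = Σ_{1≤i<j≤n} [e_i + e_{n+j}, e_j + e_{n+i}] ⊆ ℝ^{2n}`. -/
def newtUn (n : ℕ) : Set (Fin (2 * n) → ℝ) :=
  ∑ p ∈ Finset.univ.filter (fun p : Fin n × Fin n => p.1 < p.2),
    segment ℝ (Pi.single (lo p.1) (1 : ℝ) + Pi.single (hi p.2) 1)
      (Pi.single (lo p.2) (1 : ℝ) + Pi.single (hi p.1) 1)

namespace NUn

variable {n : ℕ}

lemma lo_inj {i j : Fin n} : lo i = lo j ↔ i = j := by
  constructor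
  · intro h; have := congrArg Fin.val h; simp [lo] at this; exact Fin.ext this
  · rintro rfl; rfl

lemma hi_inj {i j : Fin n} : hi i = hi j ↔ i = j := by
  constructor
  · intro h; have := congrArg Fin.val h; simp [hi] at this; exact Fin.ext this
  · rintro rfl; rfl

lemma lo_ne_hi {i j : Fin n} : lo i ≠ hi j := by
  intro h
  have h2 := congrArg Fin.val h
  have h3 := i.isLt
  simp only [lo, hi] at h2
  omega

@[simp] lemma single_lo_lo (a i : Fin n) :
    (Pi.single (lo a) (1 : ℝ) : Fin (2*n) → ℝ) (lo i) = if i = a then 1 else 0 := by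
  simp only [Pi.single_apply]
  simp [lo_inj]

@[simp] lemma single_hi_lo (a i : Fin n) : (Pi.single (hi a) (1 : ℝ) : Fin (2*n) → ℝ) (lo i) = 0 := by
  simp only [Pi.single_apply]
  rw [if_neg lo_ne_hi]

@[simp] lemma single_lo_hi (a i : Fin n) : (Pi.single (lo a) (1 : ℝ) : Fin (2*n) → ℝ) (hi i) = 0 := by
  simp only [Pi.single_apply]
  rw [if_neg (Ne.symm lo_ne_hi)]

@[simp] lemma single_hi_hi (a i : Fin n) :
    (Pi.single (hi a) (1 : ℝ) : Fin (2*n) → ℝ) (hi i) = if i = a then 1 else 0 := by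
  simp only [Pi.single_apply]
  simp [hi_inj]

/-- The index set of pairs. -/
def Pairs (n : ℕ) : Finset (Fin n × Fin n) :=
  Finset.univ.filter (fun p : Fin n × Fin n => p.1 < p.2)

lemma mem_Pairs {p : Fin n × Fin n} : p ∈ Pairs n ↔ p.1 < p.2 := by
  simp [Pairs]

/-- endpoint 1 of the segment for pair `p`. -/
def ept1 (p : Fin n × Fin n) : Fin (2 * n) → ℝ :=
  Pi.single (lo p.1) (1 : ℝ) + Pi.single (hi p.2) 1

def ept2 (p : Fin n × Fin n) : Fin (2 * n) → ℝ :=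
  Pi.single (lo p.2) (1 : ℝ) + Pi.single (hi p.1) 1

lemma newtUn_eq : newtUn n = ∑ p ∈ Pairs n, segment ℝ (ept1 p) (ept2 p) := rfl

lemma ept1_ne_ept2 {p : Fin n × Fin n} (h : p.1 ≠ p.2) : ept1 p ≠ ept2 p := by
  intro he
  have h2 := congrFun he (lo p.1)
  simp only [ept1, ept2, Pi.add_apply, single_lo_lo, single_hi_lo] at h2
  rw [if_neg h] at h2
  norm_num at h2

end NUn

section
open Finset
open scoped Classical

namespace NUn

variable {n : ℕ}

/-- the "beats" relation induced by a choice of endpoints. -/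
def beat (g : Fin n × Fin n → (Fin (2 * n) → ℝ)) (i j : Fin n) : Prop :=
  (i < j ∧ g (i, j) = ept1 (i, j)) ∨ (j < i ∧ g (j, i) = ept2 (j, i))

lemma beat_irrefl (g : Fin n × Fin n → (Fin (2 * n) → ℝ)) (i : Fin n) : ¬ beat g i i := by
  rintro (⟨h, -⟩ | ⟨h, -⟩) <;> exact lt_irrefl _ h

lemma beat_asymm {g : Fin n × Fin n → (Fin (2 * n) → ℝ)} {i j : Fin n}
    (hij : beat g i j) (hji : beat g j i) : False := by
  rcases hij with ⟨h1, e1⟩ | ⟨h1, e1⟩ <;> rcases hji with ⟨h2, e2⟩ | ⟨h2, e2⟩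
  · exact absurd h2 (asymm h1)
  · exact ept1_ne_ept2 (show (i, j).1 ≠ (i, j).2 from Fin.ne_of_lt h1) (e1.symm.trans e2)
  · exact ept1_ne_ept2 (show (j, i).1 ≠ (j, i).2 from Fin.ne_of_lt h2) (e2.symm.trans e1)
  · exact absurd h2 (asymm h1)

lemma beat_total {g : Fin n × Fin n → (Fin (2 * n) → ℝ)}
    (hg : ∀ p ∈ Pairs n, g p = ept1 p ∨ g p = ept2 p) {i j : Fin n} (h : i ≠ j) :
    beat g i j ∨ beat g j i := by
  rcases lt_or_gt_of_ne h with hlt | hlt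
  · rcases hg (i, j) (mem_Pairs.mpr hlt) with e | e
    · exact Or.inl (Or.inl ⟨hlt, e⟩)
    · exact Or.inr (Or.inr ⟨hlt, e⟩)
  · rcases hg (j, i) (mem_Pairs.mpr hlt) with e | e
    · exact Or.inr (Or.inl ⟨hlt, e⟩)
    · exact Or.inl (Or.inr ⟨hlt, e⟩)

lemma g_apply_lo {g : Fin n × Fin n → (Fin (2 * n) → ℝ)}
    (hg : ∀ p ∈ Pairs n, g p = ept1 p ∨ g p = ept2 p) {p : Fin n × Fin n} (hp : p ∈ Pairs n)
    (i : Fin n) :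
    g p (lo i) = if (p.1 = i ∧ beat g i p.2) ∨ (p.2 = i ∧ beat g i p.1) then 1 else 0 := by
  have hlt := mem_Pairs.mp hp
  have hpe : (p.1, p.2) = p := rfl
  rcases hg p hp with e | e
  · have hb : beat g p.1 p.2 := Or.inl ⟨hlt, by rw [hpe]; exact e⟩
    rw [e]
    simp only [ept1, Pi.add_apply, single_lo_lo, single_hi_lo, add_zero]
    by_cases h1 : p.1 = i
    · rw [if_pos h1.symm, if_pos (Or.inl ⟨h1, h1 ▸ hb⟩)]
    · rw [if_neg (fun h => h1 h.symm), if_neg]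
      rintro (⟨e1, -⟩ | ⟨e2, hb2⟩)
      · exact h1 e1
      · exact beat_asymm hb (e2 ▸ hb2)
  · have hb : beat g p.2 p.1 := Or.inr ⟨hlt, by rw [hpe]; exact e⟩
    rw [e]
    simp only [ept2, Pi.add_apply, single_lo_lo, single_hi_lo, add_zero]
    by_cases h2 : p.2 = i
    · rw [if_pos h2.symm, if_pos (Or.inr ⟨h2, h2 ▸ hb⟩)]
    · rw [if_neg (fun h => h2 h.symm), if_neg]
      rintro (⟨e1, hb1⟩ | ⟨e2, -⟩)
      · exact beat_asymm hb (e1 ▸ hb1)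
      · exact h2 e2

lemma g_apply_hi {g : Fin n × Fin n → (Fin (2 * n) → ℝ)}
    (hg : ∀ p ∈ Pairs n, g p = ept1 p ∨ g p = ept2 p) {p : Fin n × Fin n} (hp : p ∈ Pairs n)
    (i : Fin n) :
    g p (hi i) = if (p.1 = i ∧ beat g p.2 i) ∨ (p.2 = i ∧ beat g p.1 i) then 1 else 0 := by
  have hlt := mem_Pairs.mp hp
  have hpe : (p.1, p.2) = p := rfl
  rcases hg p hp with e | e
  · have hb : beat g p.1 p.2 := Or.inl ⟨hlt, by rw [hpe]; exact e⟩
    rw [e]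
    simp only [ept1, Pi.add_apply, single_lo_hi, single_hi_hi, zero_add]
    by_cases h2 : p.2 = i
    · rw [if_pos h2.symm, if_pos (Or.inr ⟨h2, h2 ▸ hb⟩)]
    · rw [if_neg (fun h => h2 h.symm), if_neg]
      rintro (⟨e1, hb1⟩ | ⟨e2, -⟩)
      · exact beat_asymm hb (e1 ▸ hb1)
      · exact h2 e2
  · have hb : beat g p.2 p.1 := Or.inr ⟨hlt, by rw [hpe]; exact e⟩
    rw [e]
    simp only [ept2, Pi.add_apply, single_lo_hi, single_hi_hi, zero_add]
    by_cases h1 : p.1 = i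
    · rw [if_pos h1.symm, if_pos (Or.inl ⟨h1, h1 ▸ hb⟩)]
    · rw [if_neg (fun h => h1 h.symm), if_neg]
      rintro (⟨e1, -⟩ | ⟨e2, hb2⟩)
      · exact h1 e1
      · exact beat_asymm hb (e2 ▸ hb2)

/-- generic counting bijection: pairs containing `i` whose other coordinate satisfies `Q`. -/
lemma card_pairs (i : Fin n) (Q : Fin n → Prop) (hQi : ¬ Q i) :
    ((Pairs n).filter (fun p => (p.1 = i ∧ Q p.2) ∨ (p.2 = i ∧ Q p.1))).card
      = (Finset.univ.filter Q).card := by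
  apply Finset.card_nbij' (i := fun p => if p.1 = i then p.2 else p.1)
      (j := fun j => if i < j then (i, j) else (j, i))
  · intro p hp
    simp only [Finset.mem_coe, Finset.mem_filter, mem_Pairs] at hp ⊢
    obtain ⟨hlt, ⟨e1, hq⟩ | ⟨e2, hq⟩⟩ := hp
    · rw [if_pos e1]; exact ⟨Finset.mem_univ _, hq⟩
    · have h1 : p.1 ≠ i := by
        intro h
        rw [h, ← e2] at hlt
        exact lt_irrefl _ hlt
      rw [if_neg h1]; exact ⟨Finset.mem_univ _, hq⟩
  · intro j hj
    simp only [Finset.mem_coe, Finset.mem_filter, mem_Pairs] at hj ⊢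
    have hij : i ≠ j := fun h => hQi (h ▸ hj.2)
    rcases lt_or_gt_of_ne hij with hlt | hlt
    · rw [if_pos hlt]; exact ⟨hlt, Or.inl ⟨rfl, hj.2⟩⟩
    · rw [if_neg (asymm hlt)]; exact ⟨hlt, Or.inr ⟨rfl, hj.2⟩⟩
  · intro p hp
    simp only [Finset.mem_coe, Finset.mem_filter, mem_Pairs] at hp
    obtain ⟨hlt, ⟨e1, hq⟩ | ⟨e2, hq⟩⟩ := hp
    · dsimp only; rw [if_pos e1, if_pos (e1 ▸ hlt)]
      exact Prod.ext e1.symm rfl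
    · have h1 : p.1 ≠ i := by
        intro h
        rw [h, ← e2] at hlt
        exact lt_irrefl _ hlt
      dsimp only; rw [if_neg h1, if_neg (by rw [← e2]; exact asymm hlt)]
      exact Prod.ext rfl e2.symm
  · intro j hj
    simp only [Finset.mem_coe, Finset.mem_filter] at hj
    have hij : i ≠ j := fun h => hQi (h ▸ hj.2)
    rcases lt_or_gt_of_ne hij with hlt | hlt
    · dsimp only; rw [if_pos hlt]; simp
    · dsimp only; rw [if_neg (asymm hlt)]
      simp only []
      rw [if_neg (Ne.symm hij)]

end NUn
end

section
open Finset
open scoped Classical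

namespace NUn

variable {n : ℕ}

lemma coord_lo {g : Fin n × Fin n → (Fin (2 * n) → ℝ)}
    (hg : ∀ p ∈ Pairs n, g p = ept1 p ∨ g p = ept2 p) (i : Fin n) :
    (∑ p ∈ Pairs n, g p) (lo i)
      = ((Finset.univ.filter (fun j => beat g i j)).card : ℝ) := by
  rw [Finset.sum_apply, Finset.sum_congr rfl (fun p hp => g_apply_lo hg hp i),
    Finset.sum_boole]
  exact congrArg Nat.cast (card_pairs i (fun j => beat g i j) (beat_irrefl g i))

lemma coord_hi {g : Fin n × Fin n → (Fin (2 * n) → ℝ)}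
    (hg : ∀ p ∈ Pairs n, g p = ept1 p ∨ g p = ept2 p) (i : Fin n) :
    (∑ p ∈ Pairs n, g p) (hi i)
      = ((Finset.univ.filter (fun j => beat g j i)).card : ℝ) := by
  rw [Finset.sum_apply, Finset.sum_congr rfl (fun p hp => g_apply_hi hg hp i),
    Finset.sum_boole]
  exact congrArg Nat.cast (card_pairs i (fun j => beat g j i) (beat_irrefl g i))

lemma beat_ne {g : Fin n × Fin n → (Fin (2 * n) → ℝ)} {i j : Fin n} (h : beat g i j) :
    i ≠ j := by
  rintro rfl; exact beat_irrefl g i h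

lemma wins_add_losses {g : Fin n × Fin n → (Fin (2 * n) → ℝ)}
    (hg : ∀ p ∈ Pairs n, g p = ept1 p ∨ g p = ept2 p) (i : Fin n) :
    (Finset.univ.filter (fun j => beat g i j)).card
      + (Finset.univ.filter (fun j => beat g j i)).card = n - 1 := by
  rw [← Finset.card_union_of_disjoint]
  · have : (Finset.univ.filter (fun j => beat g i j)) ∪ (Finset.univ.filter (fun j => beat g j i))
        = Finset.univ.erase i := by
      ext j
      simp only [Finset.mem_union, Finset.mem_filter, Finset.mem_univ, true_and,
        Finset.mem_erase, and_true]
      constructor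
      · rintro (h | h)
        · exact (beat_ne h).symm
        · exact beat_ne h
      · intro h
        exact (beat_total hg (Ne.symm h)).imp id id
    rw [this, Finset.card_erase_of_mem (Finset.mem_univ i), Finset.card_univ, Fintype.card_fin]
  · rw [Finset.disjoint_left]
    intro j hj hj'
    simp only [Finset.mem_filter] at hj hj'
    exact beat_asymm hj.2 hj'.2

lemma sum_update {α β : Type*} [DecidableEq α] [AddCommGroup β] {s : Finset α} {p : α}
    (hp : p ∈ s) (g : α → β) (a : β) :
    ∑ q ∈ s, Function.update g p a q = (∑ q ∈ s, g q) - g p + a := by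
  have h : ∑ x ∈ s.erase p, g x = ∑ x ∈ s, g x - g p :=
    eq_sub_of_add_eq' (Finset.add_sum_erase s g hp)
  rw [Finset.sum_update_of_mem hp, Finset.sdiff_singleton_eq_erase, h]
  abel

/-- the other endpoint -/
def oth (g : Fin n × Fin n → (Fin (2 * n) → ℝ)) (p : Fin n × Fin n) : Fin (2 * n) → ℝ :=
  ept1 p + ept2 p - g p

lemma oth_mem {g : Fin n × Fin n → (Fin (2 * n) → ℝ)}
    (hg : ∀ p ∈ Pairs n, g p = ept1 p ∨ g p = ept2 p) {p : Fin n × Fin n} (hp : p ∈ Pairs n) :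
    oth g p ∈ segment ℝ (ept1 p) (ept2 p) := by
  rcases hg p hp with e | e <;> rw [oth, e]
  · have h : ept1 p + ept2 p - ept1 p = ept2 p := by abel
    rw [h]; exact right_mem_segment ℝ _ _
  · have h : ept1 p + ept2 p - ept2 p = ept1 p := by abel
    rw [h]; exact left_mem_segment ℝ _ _

def dvec (i j : Fin n) : Fin (2 * n) → ℝ :=
  Pi.single (lo i) 1 + Pi.single (hi j) 1 - Pi.single (lo j) 1 - Pi.single (hi i) 1

lemma beat_flip {g : Fin n × Fin n → (Fin (2 * n) → ℝ)} {i j : Fin n} (hij : beat g i j) :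
    ∃ p ∈ Pairs n, (p = (i, j) ∨ p = (j, i)) ∧ g p - oth g p = dvec i j := by
  rcases hij with ⟨h, e⟩ | ⟨h, e⟩
  · exact ⟨(i, j), mem_Pairs.mpr h, Or.inl rfl, by
      rw [oth, e]; show ept1 (i,j) - (ept1 (i,j) + ept2 (i,j) - ept1 (i,j)) = _
      unfold ept1 ept2 dvec; abel⟩
  · exact ⟨(j, i), mem_Pairs.mpr h, Or.inr rfl, by
      rw [oth, e]; show ept2 (j,i) - (ept1 (j,i) + ept2 (j,i) - ept2 (j,i)) = _
      unfold ept1 ept2 dvec; abel⟩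

lemma dvec_cycle (i j k : Fin n) : dvec j k + dvec k i = -dvec i j := by
  unfold dvec; abel

lemma dvec_ne_zero {i j : Fin n} (h : i ≠ j) : dvec i j ≠ (0 : Fin (2 * n) → ℝ) := by
  intro h0
  have := congrFun h0 (lo i)
  simp only [dvec, Pi.sub_apply, Pi.add_apply, single_lo_lo, single_hi_lo, Pi.zero_apply] at this
  rw [if_neg h] at this
  norm_num at this

lemma no_cycle {x : Fin (2 * n) → ℝ} {g : Fin n × Fin n → (Fin (2 * n) → ℝ)}
    (hx : x ∈ Set.extremePoints ℝ (newtUn n))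
    (hg : ∀ p ∈ Pairs n, g p = ept1 p ∨ g p = ept2 p)
    (hsum : ∑ p ∈ Pairs n, g p = x)
    {i j k : Fin n} (hij : beat g i j) (hjk : beat g j k) (hki : beat g k i) : False := by
  have hgs : ∀ p ∈ Pairs n, g p ∈ segment ℝ (ept1 p) (ept2 p) := by
    intro p hp
    rcases hg p hp with e | e <;> rw [e]
    exacts [left_mem_segment ℝ _ _, right_mem_segment ℝ _ _]
  obtain ⟨p₁, hp₁, hp₁e, hd₁⟩ := beat_flip hij
  obtain ⟨p₂, hp₂, hp₂e, hd₂⟩ := beat_flip hjk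
  obtain ⟨p₃, hp₃, hp₃e, hd₃⟩ := beat_flip hki
  have hne_ij : i ≠ j := beat_ne hij
  have hne_jk : j ≠ k := beat_ne hjk
  have hne_ki : k ≠ i := beat_ne hki
  have hp23 : p₃ ≠ p₂ := by
    rcases hp₂e with rfl | rfl <;> rcases hp₃e with rfl | rfl <;> intro h <;>
      injection h with h1 h2
    · exact hne_jk h1.symm
    · exact hne_ij h1
    · exact hne_ij h2
    · exact hne_ki h1.symm
  -- x₁ = x - dvec i j ∈ newtUn
  have hx₁ : x - dvec i j ∈ newtUn n := by
    rw [newtUn_eq, Set.mem_finset_sum]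
    refine ⟨Function.update g p₁ (oth g p₁), fun {q} hq => ?_, ?_⟩
    · by_cases hqp : q = p₁
      · subst hqp; rw [Function.update_self]; exact oth_mem hg hq
      · rw [Function.update_of_ne hqp]; exact hgs q hq
    · rw [sum_update hp₁, hsum, ← hd₁]; abel
  -- x₂ = x + dvec i j ∈ newtUn
  have hx₂ : x + dvec i j ∈ newtUn n := by
    rw [newtUn_eq, Set.mem_finset_sum]
    refine ⟨Function.update (Function.update g p₂ (oth g p₂)) p₃ (oth g p₃),
      fun {q} hq => ?_, ?_⟩
    · by_cases hq3 : q = p₃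
      · subst hq3; rw [Function.update_self]; exact oth_mem hg hq
      · rw [Function.update_of_ne hq3]
        by_cases hq2 : q = p₂
        · subst hq2; rw [Function.update_self]; exact oth_mem hg hq
        · rw [Function.update_of_ne hq2]; exact hgs q hq
    · rw [sum_update hp₃, sum_update hp₂, hsum, Function.update_of_ne hp23]
      have hc := dvec_cycle i j k
      have : x - g p₂ + oth g p₂ - g p₃ + oth g p₃
          = x - (g p₂ - oth g p₂) - (g p₃ - oth g p₃) := by abel
      rw [this, hd₂, hd₃]
      rw [show x - dvec j k - dvec k i = x - (dvec j k + dvec k i) by abel, hc]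
      abel
  have hseg : x ∈ openSegment ℝ (x - dvec i j) (x + dvec i j) := by
    refine ⟨1/2, 1/2, by norm_num, by norm_num, by norm_num, ?_⟩
    module
  have := hx.2 hx₁ hx₂ hseg
  have h0 : dvec i j = 0 := by
    have h := sub_eq_self.mp this
    exact h
  exact dvec_ne_zero hne_ij h0

end NUn
end

section
open Finset
open scoped Classical

namespace NUn

variable {n : ℕ}

lemma extreme_decomp {x : Fin (2 * n) → ℝ} (hx : x ∈ Set.extremePoints ℝ (newtUn n)) :
    ∃ g : Fin n × Fin n → (Fin (2 * n) → ℝ),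
      (∀ p ∈ Pairs n, g p = ept1 p ∨ g p = ept2 p) ∧ ∑ p ∈ Pairs n, g p = x := by
  have hx1 : x ∈ ∑ p ∈ Pairs n, segment ℝ (ept1 p) (ept2 p) := by
    rw [← newtUn_eq]; exact hx.1
  obtain ⟨g, hgmem, hgsum⟩ := (Set.mem_finset_sum _ _ _).mp hx1
  refine ⟨g, fun p hp => ?_, hgsum⟩
  by_contra h
  push_neg at h
  obtain ⟨a, b, ha, hb, hab, habsum⟩ :=
    mem_openSegment_of_ne_left_right (fun he => h.1 he.symm) (fun he => h.2 he.symm) (hgmem hp)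
  have hupd : ∀ e : Fin (2 * n) → ℝ, e ∈ segment ℝ (ept1 p) (ept2 p) →
      x - g p + e ∈ newtUn n := by
    intro e he
    rw [newtUn_eq, Set.mem_finset_sum]
    refine ⟨Function.update g p e, fun {q} hq => ?_, ?_⟩
    · by_cases hqp : q = p
      · subst hqp; rw [Function.update_self]; exact he
      · rw [Function.update_of_ne hqp]; exact hgmem hq
    · rw [sum_update hp, hgsum]
  have hmem1 := hupd (ept1 p) (left_mem_segment ℝ _ _)
  have hmem2 := hupd (ept2 p) (right_mem_segment ℝ _ _)
  have hseg : x ∈ openSegment ℝ (x - g p + ept1 p) (x - g p + ept2 p) := by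
    refine ⟨a, b, ha, hb, hab, ?_⟩
    have he : a • (x - g p + ept1 p) + b • (x - g p + ept2 p)
        = (a + b) • (x - g p) + (a • ept1 p + b • ept2 p) := by module
    rw [he, hab, one_smul, habsum]
    abel
  have h1 := hx.2 hmem1 hmem2 hseg
  have h3 : x - g p + ept1 p - x = 0 := by rw [h1]; abel
  have h4 : ept1 p - g p = 0 := by rw [← h3]; abel
  exact h.1 (sub_eq_zero.mp h4).symm

lemma forward {x : Fin (2 * n) → ℝ} (hx : x ∈ Set.extremePoints ℝ (newtUn n)) :
    ∃ π : Equiv.Perm (Fin n), ∀ i : Fin n,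
      x (lo i) = (((π i : ℕ) : ℝ) + 1) - 1 ∧
      x (hi i) = ((n : ℝ) + 1 - (((π i : ℕ) : ℝ) + 1)) - 1 := by
  obtain ⟨g, hg, hsum⟩ := extreme_decomp hx
  have htrans : ∀ {i j k : Fin n}, beat g i j → beat g j k → beat g i k := by
    intro i j k hij hjk
    have hik : i ≠ k := by rintro rfl; exact beat_asymm hij hjk
    rcases beat_total hg hik with h | h
    · exact h
    · exact absurd h (fun h => no_cycle hx hg hsum hij hjk h)
  have hWlt : ∀ i : Fin n, (Finset.univ.filter (fun j => beat g i j)).card < n := by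
    intro i
    have h1 := wins_add_losses hg i
    have h2 : 0 < n := i.pos
    omega
  have hmono : ∀ {i j : Fin n}, beat g i j →
      (Finset.univ.filter (fun k => beat g j k)).card
        < (Finset.univ.filter (fun k => beat g i k)).card := by
    intro i j hij
    have hsub : insert j (Finset.univ.filter (fun k => beat g j k))
        ⊆ Finset.univ.filter (fun k => beat g i k) := by
      intro k hk
      rcases Finset.mem_insert.mp hk with rfl | hk
      · simp only [Finset.mem_filter, Finset.mem_univ, true_and]; exact hij
      · simp only [Finset.mem_filter, Finset.mem_univ, true_and] at hk ⊢
        exact htrans hij hk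
    have hjnot : j ∉ Finset.univ.filter (fun k => beat g j k) := by
      simp [beat_irrefl]
    have hc := Finset.card_le_card hsub
    rw [Finset.card_insert_of_notMem hjnot] at hc
    omega
  have hinj : Function.Injective
      (fun i : Fin n => (⟨(Finset.univ.filter (fun j => beat g i j)).card, hWlt i⟩ : Fin n)) := by
    intro i j h
    by_contra hne
    have hv : (Finset.univ.filter (fun k => beat g i k)).card
        = (Finset.univ.filter (fun k => beat g j k)).card := by
      simpa using congrArg Fin.val h
    rcases beat_total hg hne with hb | hb
    · have := hmono hb; omega
    · have := hmono hb; omega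
  let π : Equiv.Perm (Fin n) :=
    Equiv.ofBijective _ (Finite.injective_iff_bijective.mp hinj)
  refine ⟨π, fun i => ?_⟩
  have hπ : (π i : ℕ) = (Finset.univ.filter (fun j => beat g i j)).card := rfl
  constructor
  · rw [← hsum, coord_lo hg i, hπ]; ring
  · rw [← hsum, coord_hi hg i, hπ]
    have h1 := wins_add_losses hg i
    have h2 : 1 ≤ n := i.pos
    have h4 := congrArg (fun m : ℕ => (m : ℝ)) h1
    simp only [Nat.cast_add] at h4
    rw [Nat.cast_sub h2] at h4
    simp only [Nat.cast_one] at h4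
    linarith

end NUn
end

section
open Finset
open scoped Classical

namespace NUn

variable {n : ℕ}

/-- endpoint choice determined by a permutation -/
def gperm (π : Equiv.Perm (Fin n)) (p : Fin n × Fin n) : Fin (2 * n) → ℝ :=
  if π p.2 < π p.1 then ept1 p else ept2 p

lemma gperm_choice (π : Equiv.Perm (Fin n)) (p : Fin n × Fin n) :
    gperm π p = ept1 p ∨ gperm π p = ept2 p := by
  unfold gperm; split_ifs <;> simp

lemma beat_gperm (π : Equiv.Perm (Fin n)) (i j : Fin n) :
    beat (gperm π) i j ↔ π j < π i := by
  constructor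
  · rintro (⟨h, e⟩ | ⟨h, e⟩)
    · by_contra hc
      rw [show gperm π (i, j) = ept2 (i, j) from if_neg hc] at e
      exact ept1_ne_ept2 (Fin.ne_of_lt h : ((i, j) : Fin n × Fin n).1 ≠ ((i, j) : Fin n × Fin n).2) e.symm
    · by_contra hc
      have hne : π i ≠ π j := fun he => (Fin.ne_of_lt h) (π.injective he).symm
      have hlt : π i < π j := lt_of_le_of_ne (not_lt.mp hc) hne
      rw [show gperm π (j, i) = ept1 (j, i) from if_pos hlt] at e
      exact ept1_ne_ept2 (Fin.ne_of_lt h : ((j, i) : Fin n × Fin n).1 ≠ ((j, i) : Fin n × Fin n).2) e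
  · intro h
    have hne : i ≠ j := fun he => absurd (he ▸ h) (lt_irrefl _)
    rcases lt_or_gt_of_ne hne with hlt | hlt
    · exact Or.inl ⟨hlt, if_pos h⟩
    · exact Or.inr ⟨hlt, if_neg (asymm h)⟩

lemma card_lt_perm (π : Equiv.Perm (Fin n)) (i : Fin n) :
    (Finset.univ.filter (fun j : Fin n => π j < π i)).card = (π i : ℕ) := by
  have h1 : (Finset.univ.filter (fun j : Fin n => π j < π i)).card
      = (Finset.univ.filter (fun m : Fin n => m < π i)).card := by
    apply Finset.card_nbij' (i := fun j => π j) (j := fun m => π.symm m)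
    · intro j hj; simp only [Finset.mem_coe, Finset.mem_filter, Finset.mem_univ, true_and] at hj ⊢; exact hj
    · intro m hm; simp only [Finset.mem_coe, Finset.mem_filter, Finset.mem_univ, true_and,
        Equiv.apply_symm_apply] at hm ⊢; exact hm
    · intro j _; simp
    · intro m _; simp
  rw [h1]
  have h2 : Finset.univ.filter (fun m : Fin n => m < π i) = Finset.Iio (π i) := by
    ext m; simp
  rw [h2, Fin.card_Iio]

def vert (π : Equiv.Perm (Fin n)) : Fin (2 * n) → ℝ := ∑ p ∈ Pairs n, gperm π p

lemma vert_lo (π : Equiv.Perm (Fin n)) (i : Fin n) :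
    vert π (lo i) = ((π i : ℕ) : ℝ) := by
  rw [vert, coord_lo (fun p _ => gperm_choice π p) i]
  congr 1
  rw [← card_lt_perm π i]
  congr 1
  apply Finset.filter_congr
  intro j _
  simp [beat_gperm]

lemma vert_hi (π : Equiv.Perm (Fin n)) (i : Fin n) :
    vert π (hi i) = (n : ℝ) - 1 - ((π i : ℕ) : ℝ) := by
  rw [vert, coord_hi (fun p _ => gperm_choice π p) i]
  have h1 := wins_add_losses (fun p _ => gperm_choice π p) i
  have hW : (Finset.univ.filter (fun j => beat (gperm π) i j)).card = (π i : ℕ) := by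
    rw [← card_lt_perm π i]
    apply congrArg
    apply Finset.filter_congr
    intro j _
    simp [beat_gperm]
  rw [hW] at h1
  have h2 : 1 ≤ n := i.pos
  have hπn : (π i : ℕ) ≤ n - 1 := by omega
  have h3 : (Finset.univ.filter (fun j => beat (gperm π) j i)).card = n - 1 - (π i : ℕ) := by
    omega
  rw [h3]
  have h4 : (π i : ℕ) + 1 ≤ n := by omega
  push_cast [Nat.cast_sub (by omega : (π i : ℕ) ≤ n - 1), Nat.cast_sub h2]
  ring

def wfun (π : Equiv.Perm (Fin n)) (y : Fin (2 * n) → ℝ) : ℝ :=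
  ∑ i : Fin n, ((π i : ℕ) : ℝ) * y (lo i)

lemma wfun_sum (π : Equiv.Perm (Fin n)) (s : Finset (Fin n × Fin n))
    (F : Fin n × Fin n → (Fin (2 * n) → ℝ)) :
    wfun π (∑ p ∈ s, F p) = ∑ p ∈ s, wfun π (F p) := by
  unfold wfun
  simp only [Finset.sum_apply, Finset.mul_sum]
  exact Finset.sum_comm

lemma wfun_smul_add (π : Equiv.Perm (Fin n)) (a b : ℝ) (u v : Fin (2 * n) → ℝ) :
    wfun π (a • u + b • v) = a * wfun π u + b * wfun π v := by
  unfold wfun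
  rw [Finset.mul_sum, Finset.mul_sum, ← Finset.sum_add_distrib]
  apply Finset.sum_congr rfl
  intro i _
  simp only [Pi.add_apply, Pi.smul_apply, smul_eq_mul]
  ring

lemma wfun_ept1 (π : Equiv.Perm (Fin n)) (p : Fin n × Fin n) :
    wfun π (ept1 p) = ((π p.1 : ℕ) : ℝ) := by
  unfold wfun ept1
  simp only [Pi.add_apply, single_lo_lo, single_hi_lo, add_zero, mul_ite, mul_one, mul_zero]
  rw [Finset.sum_ite_eq' Finset.univ p.1 (fun i => ((π i : ℕ) : ℝ))]
  simp

lemma wfun_ept2 (π : Equiv.Perm (Fin n)) (p : Fin n × Fin n) :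
    wfun π (ept2 p) = ((π p.2 : ℕ) : ℝ) := by
  unfold wfun ept2
  simp only [Pi.add_apply, single_lo_lo, single_hi_lo, add_zero, mul_ite, mul_one, mul_zero]
  rw [Finset.sum_ite_eq' Finset.univ p.2 (fun i => ((π i : ℕ) : ℝ))]
  simp

lemma vert_mem (π : Equiv.Perm (Fin n)) : vert π ∈ newtUn n := by
  rw [newtUn_eq, Set.mem_finset_sum]
  refine ⟨gperm π, fun {q} hq => ?_, rfl⟩
  rcases gperm_choice π q with e | e <;> rw [e]
  exacts [left_mem_segment ℝ _ _, right_mem_segment ℝ _ _]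

lemma wfun_max (π : Equiv.Perm (Fin n)) {y : Fin (2 * n) → ℝ} (hy : y ∈ newtUn n)
    (hne : y ≠ vert π) : wfun π y < wfun π (vert π) := by
  rw [newtUn_eq, Set.mem_finset_sum] at hy
  obtain ⟨f, hf, hfsum⟩ := hy
  have hkey : ∀ p ∈ Pairs n, wfun π (f p) ≤ wfun π (gperm π p)
      ∧ (f p ≠ gperm π p → wfun π (f p) < wfun π (gperm π p)) := by
    intro p hp
    have hlt := mem_Pairs.mp hp
    obtain ⟨a, b, ha, hb, hab, he⟩ := hf hp
    have hfw : wfun π (f p) = a * ((π p.1 : ℕ) : ℝ) + b * ((π p.2 : ℕ) : ℝ) := by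
      rw [← he, wfun_smul_add, wfun_ept1, wfun_ept2]
    have hπne : π p.1 ≠ π p.2 := fun h => Fin.ne_of_lt hlt (π.injective h)
    by_cases hc : π p.2 < π p.1
    · have hg : gperm π p = ept1 p := if_pos hc
      have hcr : ((π p.2 : ℕ) : ℝ) < ((π p.1 : ℕ) : ℝ) := by exact_mod_cast hc
      rw [hg, wfun_ept1, hfw]
      constructor
      · nlinarith
      · intro hne2
        have hb0 : b ≠ 0 := by
          intro h0
          apply hne2
          rw [← he, h0, zero_smul, add_zero, show a = (1:ℝ) from by linarith, one_smul]
        have hbpos : 0 < b := lt_of_le_of_ne hb (Ne.symm hb0)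
        nlinarith
    · have hπlt : π p.1 < π p.2 := lt_of_le_of_ne (not_lt.mp hc) hπne
      have hg : gperm π p = ept2 p := if_neg hc
      have hcr : ((π p.1 : ℕ) : ℝ) < ((π p.2 : ℕ) : ℝ) := by exact_mod_cast hπlt
      rw [hg, wfun_ept2, hfw]
      constructor
      · nlinarith
      · intro hne2
        have ha0 : a ≠ 0 := by
          intro h0
          apply hne2
          rw [← he, h0, zero_smul, zero_add, show b = (1:ℝ) from by linarith, one_smul]
        have hapos : 0 < a := lt_of_le_of_ne ha (Ne.symm ha0)
        nlinarith
  have hex : ∃ p ∈ Pairs n, f p ≠ gperm π p := by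
    by_contra hall
    push_neg at hall
    apply hne
    rw [← hfsum, vert]
    exact Finset.sum_congr rfl hall
  obtain ⟨p0, hp0, hne0⟩ := hex
  have hlt : ∑ p ∈ Pairs n, wfun π (f p) < ∑ p ∈ Pairs n, wfun π (gperm π p) :=
    Finset.sum_lt_sum (fun p hp => (hkey p hp).1) ⟨p0, hp0, (hkey p0 hp0).2 hne0⟩
  rw [← hfsum, wfun_sum, vert, wfun_sum]
  exact hlt

end NUn
end

section
open Finset
open scoped Classical

namespace NUn

variable {n : ℕ}

lemma fin2n_cases (k : Fin (2 * n)) : (∃ i, k = lo i) ∨ (∃ i, k = hi i) := by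
  by_cases h : (k : ℕ) < n
  · exact Or.inl ⟨⟨(k : ℕ), h⟩, Fin.ext rfl⟩
  · refine Or.inr ⟨⟨(k : ℕ) - n, by have := k.isLt; omega⟩, Fin.ext ?_⟩
    show (k : ℕ) = n + ((k : ℕ) - n)
    have := k.isLt
    omega

lemma backward (π : Equiv.Perm (Fin n)) {x : Fin (2 * n) → ℝ}
    (hπ : ∀ i : Fin n, x (lo i) = (((π i : ℕ) : ℝ) + 1) - 1 ∧
      x (hi i) = ((n : ℝ) + 1 - (((π i : ℕ) : ℝ) + 1)) - 1) :
    x ∈ Set.extremePoints ℝ (newtUn n) := by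
  have hx : x = vert π := by
    funext k
    rcases fin2n_cases k with ⟨i, rfl⟩ | ⟨i, rfl⟩
    · rw [(hπ i).1, vert_lo]; ring
    · rw [(hπ i).2, vert_hi]; ring
  rw [hx]
  refine ⟨vert_mem π, ?_⟩
  intro x₁ hx₁ x₂ hx₂ hseg
  obtain ⟨a, b, ha, hb, hab, he⟩ := hseg
  have hle : ∀ y ∈ newtUn n, wfun π y ≤ wfun π (vert π) := by
    intro y hy
    by_cases h : y = vert π
    · rw [h]
    · exact (wfun_max π hy h).le
  have hv : wfun π (vert π) = a * wfun π x₁ + b * wfun π x₂ := by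
    rw [← he, wfun_smul_add]
  have h3 : a * wfun π (vert π) + b * wfun π (vert π) = wfun π (vert π) := by
    rw [← add_mul, hab, one_mul]
  · by_contra hne
    have h1 := wfun_max π hx₁ hne
    have h2 := hle x₂ hx₂
    have h4 := mul_lt_mul_of_pos_left h1 ha
    have h5 := mul_le_mul_of_nonneg_left h2 hb.le
    linarith

end NUn
end


/-- The vertices of `Newt(U_n)` are exactly the points `(π, π^c) − (1,…,1)` for `π ∈ S_n`,
where `π^c(i) = n + 1 − π(i)`. -/
theorem newtUn_vertices (n : ℕ) :
    Set.extremePoints ℝ (newtUn n) =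
      {x | ∃ π : Equiv.Perm (Fin n), ∀ i : Fin n,
        x (lo i) = (((π i : ℕ) : ℝ) + 1) - 1 ∧
        x (hi i) = ((n : ℝ) + 1 - (((π i : ℕ) : ℝ) + 1)) - 1} := by
  ext x
  simp only [Set.mem_setOf_eq]
  exact ⟨NUn.forward, fun ⟨π, hπ⟩ => NUn.backward π hπ⟩
end

section
/- Let M_n be the (2n+1) × (3n+1) integer matrix whose first 3n columns form the block matrix α(A ⊕ ⋯ ⊕ A) (n copies of A = [[1,1,0],[0,1,1]] on the diagonal with a row of all 1s appended at the bottom), and whose last column is e_{2n+1}. Then M_n has rank 2n+1. -/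
/-- The `(2n+1) × (3n+1)` matrix `M_n` of the code `P(2_n)`: the first `3n` columns form
`α(A ⊕ ⋯ ⊕ A)` with `A = [[1,1,0],[0,1,1]]` and a row of ones appended at the bottom, and
the last column is `e_{2n+1}`. -/
def Mmat (n : ℕ) : Matrix (Fin (2 * n + 1)) (Fin (3 * n + 1)) ℚ := fun i c =>
  if (c : ℕ) = 3 * n then (if (i : ℕ) = 2 * n then 1 else 0)
  else if (i : ℕ) = 2 * n then 1
  else if (i : ℕ) = 2 * ((c : ℕ) / 3) then (if (c : ℕ) % 3 ≤ 1 then 1 else 0)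
  else if (i : ℕ) = 2 * ((c : ℕ) / 3) + 1 then (if 1 ≤ (c : ℕ) % 3 then 1 else 0)
  else 0

/-- Column selection: `j ↦ 3*(j/2) + 2*(j%2)` for `j < 2n`, and `2n ↦ 3n`. -/
def fcol (n : ℕ) : Fin (2 * n + 1) → Fin (3 * n + 1) := fun j =>
  if h : (j : ℕ) = 2 * n then ⟨3 * n, by omega⟩
  else ⟨3 * ((j : ℕ) / 2) + 2 * ((j : ℕ) % 2), by have := j.isLt; omega⟩

/-- The selection (column picking) matrix. -/
def Pmat (n : ℕ) : Matrix (Fin (3 * n + 1)) (Fin (2 * n + 1)) ℚ := fun c j =>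
  if fcol n j = c then 1 else 0

/-- The selected square submatrix. -/
def Smat (n : ℕ) : Matrix (Fin (2 * n + 1)) (Fin (2 * n + 1)) ℚ :=
  fun i j => Mmat n i (fcol n j)

lemma Smat_eq (n : ℕ) (i j : Fin (2 * n + 1)) :
    Smat n i j = if (i : ℕ) = 2 * n then 1 else if i = j then 1 else 0 := by
  have hi := i.isLt
  have hj := j.isLt
  have hcv : ((fcol n j : Fin (3 * n + 1)) : ℕ)
      = if (j : ℕ) = 2 * n then 3 * n else 3 * ((j : ℕ) / 2) + 2 * ((j : ℕ) % 2) := by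
    simp only [fcol]
    split <;> simp_all
  simp only [Smat, Mmat, hcv]
  rcases eq_or_ne (j : ℕ) (2 * n) with hj2 | hj2
  · rw [if_pos hj2, if_pos rfl]
    rcases eq_or_ne (i : ℕ) (2 * n) with hi2 | hi2
    · simp [hi2]
    · have hij : i ≠ j := fun h => hi2 (by rw [h]; exact hj2)
      simp [hi2, hij]
  · rw [if_neg hj2]
    have hc3 : 3 * ((j : ℕ) / 2) + 2 * ((j : ℕ) % 2) ≠ 3 * n := by omega
    rw [if_neg hc3]
    rcases eq_or_ne (i : ℕ) (2 * n) with hi2 | hi2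
    · simp [hi2]
    · rw [if_neg hi2, if_neg hi2]
      have hijv : i = j ↔ (i : ℕ) = (j : ℕ) := Fin.ext_iff
      rcases Nat.even_or_odd (j : ℕ) with ⟨k, hk⟩ | ⟨k, hk⟩
      · have hd : (3 * ((j : ℕ) / 2) + 2 * ((j : ℕ) % 2)) / 3 = k := by omega
        have hm : (3 * ((j : ℕ) / 2) + 2 * ((j : ℕ) % 2)) % 3 = 0 := by omega
        rw [hd, hm]
        rcases eq_or_ne i j with hij | hij
        · subst hij
          simp [show (i : ℕ) = 2 * k by omega]
        · have h1 : (i : ℕ) ≠ 2 * k := by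
            intro h; exact hij (hijv.mpr (by omega))
          simp [h1, hij]
      · have hd : (3 * ((j : ℕ) / 2) + 2 * ((j : ℕ) % 2)) / 3 = k := by omega
        have hm : (3 * ((j : ℕ) / 2) + 2 * ((j : ℕ) % 2)) % 3 = 2 := by omega
        rw [hd, hm]
        rcases eq_or_ne i j with hij | hij
        · subst hij
          simp [show (i : ℕ) ≠ 2 * k by omega, show (i : ℕ) = 2 * k + 1 by omega]
        · have h2 : (i : ℕ) ≠ 2 * k + 1 := by
            intro h; exact hij (hijv.mpr (by omega))
          by_cases h1 : (i : ℕ) = 2 * k <;> simp [h1, h2, hij]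

lemma Smat_det (n : ℕ) : (Smat n).det = 1 := by
  have htri : (Smat n).BlockTriangular OrderDual.toDual := by
    intro i j hlt
    rw [Smat_eq]
    have hlt' : (i : ℕ) < (j : ℕ) := hlt
    have hj := j.isLt
    rw [if_neg (by omega), if_neg (by intro h; subst h; omega)]
  rw [Matrix.det_of_lowerTriangular _ htri]
  have : ∀ i : Fin (2 * n + 1), Smat n i i = 1 := by
    intro i; rw [Smat_eq]; split <;> simp
  simp [this]

lemma mul_Pmat (n : ℕ) : Mmat n * Pmat n = Smat n := by
  ext i j
  simp only [Matrix.mul_apply, Pmat, mul_ite, mul_one, mul_zero]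
  rw [Finset.sum_ite_eq Finset.univ (fcol n j) (fun c => Mmat n i c)]
  simp [Smat]

/-- `M_n` has rank `2n + 1`. -/
theorem Mmat_rank (n : ℕ) : (Mmat n).rank = 2 * n + 1 := by
  apply le_antisymm
  · simpa using (Mmat n).rank_le_card_height
  · have h1 : (Smat n).rank = 2 * n + 1 := by
      have hu : IsUnit (Smat n) := by
        rw [Matrix.isUnit_iff_isUnit_det, Smat_det n]
        exact isUnit_one
      simpa using Matrix.rank_of_isUnit _ hu
    calc 2 * n + 1 = (Smat n).rank := h1.symm
      _ = (Mmat n * Pmat n).rank := by rw [mul_Pmat]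
      _ ≤ (Mmat n).rank := Matrix.rank_mul_le_left _ _
end

section
/- Let n ≥ 1 and let I_n = {S ∪ {n+1} : S ⊆ [n], 1 ≤ |S| ≤ 2}. Then the building closure of I_n is Î_n = {{i} : i ∈ [n]} ∪ {J ∪ {n+1} : J ⊆ [n]}. That is, Î_n is the unique minimal building set on [n+1] containing I_n. -/
/-- A building set on the ground set `Fin m`: a collection of nonempty subsets closed under
unions of intersecting members and containing all singletons. -/
def IsBuildingSet {m : ℕ} (F : Set (Finset (Fin m))) : Prop :=
  (∀ S ∈ F, S.Nonempty) ∧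
  (∀ S ∈ F, ∀ T ∈ F, (S ∩ T).Nonempty → S ∪ T ∈ F) ∧
  (∀ i : Fin m, {i} ∈ F)

/-- The collection `I_n = {S ∪ {n+1} : S ⊆ [n], 1 ≤ |S| ≤ 2}` on the ground set `[n+1]`
(modelled as `Fin (n+1)`, with `n+1` the last element). -/
def In (n : ℕ) : Set (Finset (Fin (n + 1))) :=
  {S | ∃ T : Finset (Fin (n + 1)),
    Fin.last n ∉ T ∧ 1 ≤ T.card ∧ T.card ≤ 2 ∧ S = insert (Fin.last n) T}

/-- The collection `Î_n = {{i} : i ∈ [n]} ∪ {J ∪ {n+1} : J ⊆ [n]}`. -/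
def Ihat (n : ℕ) : Set (Finset (Fin (n + 1))) :=
  {S | (∃ i : Fin (n + 1), i ≠ Fin.last n ∧ S = {i}) ∨ Fin.last n ∈ S}

lemma aux_insert_mem (n : ℕ) (F : Set (Finset (Fin (n + 1))))
    (hF : IsBuildingSet F) (hIn : In n ⊆ F) :
    ∀ T : Finset (Fin (n + 1)), Fin.last n ∉ T → insert (Fin.last n) T ∈ F := by
  obtain ⟨h1, h2, h3⟩ := hF
  intro T
  induction T using Finset.induction_on with
  | empty =>
    intro _
    simpa using h3 (Fin.last n)
  | @insert i T' hiT ih =>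
    intro hlast
    have hi : i ≠ Fin.last n := fun h => hlast (by simp [h])
    have hlT' : Fin.last n ∉ T' := fun h => hlast (Finset.mem_insert_of_mem h)
    have hA : insert (Fin.last n) T' ∈ F := ih hlT'
    have hB : insert (Fin.last n) ({i} : Finset (Fin (n + 1))) ∈ F := by
      apply hIn
      exact ⟨{i}, by simp [Ne.symm hi], by simp, by simp, rfl⟩
    have hint : ((insert (Fin.last n) T') ∩ insert (Fin.last n) ({i} : Finset (Fin (n + 1)))).Nonempty :=
      ⟨Fin.last n, by simp⟩
    have := h2 _ hA _ hB hint
    have heq : (insert (Fin.last n) T') ∪ insert (Fin.last n) ({i} : Finset (Fin (n + 1)))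
        = insert (Fin.last n) (insert i T') := by
      ext x; simp
    rwa [heq] at this

/-- `Î_n` is the building closure of `I_n`: it is a building set containing `I_n`, and every
building set containing `I_n` contains `Î_n`. -/
theorem building_closure_In (n : ℕ) (hn : 1 ≤ n) :
    IsBuildingSet (Ihat n) ∧ In n ⊆ Ihat n ∧
      ∀ F : Set (Finset (Fin (n + 1))), IsBuildingSet F → In n ⊆ F → Ihat n ⊆ F := by
  refine ⟨⟨?_, ?_, ?_⟩, ?_, ?_⟩
  · rintro S (⟨i, _, rfl⟩ | h)
    · exact ⟨i, by simp⟩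
    · exact ⟨Fin.last n, h⟩
  · rintro S hS T hT hST
    rcases hS with ⟨i, hi, rfl⟩ | hS
    · rcases hT with ⟨j, hj, rfl⟩ | hT
      · obtain ⟨x, hx⟩ := hST
        simp at hx
        left; exact ⟨i, hi, by rw [hx.2.symm.trans hx.1]; simp⟩
      · rcases eq_or_ne i (Fin.last n) with h | h
        · right; simp [h]
        · right; exact Finset.mem_union_right _ hT
    · right; exact Finset.mem_union_left _ hS
  · intro i
    rcases eq_or_ne i (Fin.last n) with h | h
    · right; simp [h]
    · left; exact ⟨i, h, rfl⟩
  · rintro S ⟨T, hT, _, _, rfl⟩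
    right; exact Finset.mem_insert_self _ _
  · intro F hF hIn S hS
    rcases hS with ⟨i, _, rfl⟩ | hS
    · exact hF.2.2 i
    · have : S = insert (Fin.last n) (S.erase (Fin.last n)) := by
        simp [Finset.insert_erase hS]
      rw [this]
      exact aux_insert_mem n F hF hIn _ (Finset.notMem_erase _ _)
end

section
/- Let Î_n = {{i} : i ∈ [n]} ∪ {J ∪ {n+1} : J ⊆ [n]} be the building set on [n+1]. Then the inclusion-maximal nested sets of Î_n are exactly the chains-with-singletons of the form {I_1,…,I_{n+1}} where I_1,…,I_k are k distinct singletons of [n] (0 ≤ k ≤ n), I_{k+1} = I_1 ∪ ⋯ ∪ I_k ∪ {n+1}, and I_{j+1} ⊋ I_j with |I_{j+1} \ I_j| = 1 for all j ≥ k+1 (so I_{n+1} = [n+1]). -/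
/-- A nested set for the building set `Î_n`: a subcollection whose members are pairwise
comparable or disjoint, such that no union of `≥ 2` pairwise disjoint members lies in `Î_n`,
and containing every inclusion-maximal element of `Î_n`. -/
def IsNestedSet (n : ℕ) (N : Set (Finset (Fin (n + 1)))) : Prop :=
  N ⊆ Ihat n ∧
  (∀ I ∈ N, ∀ J ∈ N, I ⊆ J ∨ J ⊆ I ∨ I ∩ J = ∅) ∧
  (∀ C : Finset (Finset (Fin (n + 1))), ↑C ⊆ N → 2 ≤ C.card →
    (∀ I ∈ C, ∀ J ∈ C, I ≠ J → I ∩ J = ∅) → C.sup id ∉ Ihat n) ∧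
  (∀ I ∈ Ihat n, (∀ J ∈ Ihat n, I ⊆ J → I = J) → I ∈ N)

/-- A maximal nested set: nested and not properly contained in another nested set. -/
def IsMaxNestedSet (n : ℕ) (N : Set (Finset (Fin (n + 1)))) : Prop :=
  IsNestedSet n N ∧ ∀ N', IsNestedSet n N' → N ⊆ N' → N' = N

-- basic lemmas
lemma mem_Ihat_nonempty {n : ℕ} {S : Finset (Fin (n+1))} (h : S ∈ Ihat n) : S.Nonempty := by
  rcases h with ⟨i, _, rfl⟩ | h
  · exact ⟨i, by simp⟩
  · exact ⟨_, h⟩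

lemma mem_Ihat_of_not_last {n : ℕ} {S : Finset (Fin (n+1))} (h : S ∈ Ihat n)
    (hl : Fin.last n ∉ S) : ∃ i, i ≠ Fin.last n ∧ S = {i} := by
  rcases h with h | h
  · exact h
  · exact absurd h hl

lemma univ_mem_Ihat (n : ℕ) : (Finset.univ : Finset (Fin (n+1))) ∈ Ihat n :=
  Or.inr (Finset.mem_univ _)

lemma univ_mem_nested {n : ℕ} {N : Set (Finset (Fin (n+1)))} (h : IsNestedSet n N) :
    (Finset.univ : Finset (Fin (n+1))) ∈ N :=
  h.2.2.2 _ (univ_mem_Ihat n) (fun J _ hJ => (Finset.univ_subset_iff.mp hJ).symm)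

-- pair disjointness: two distinct members of N can't be disjoint if one contains last
lemma pair_not_disjoint {n : ℕ} {N : Set (Finset (Fin (n+1)))} (h : IsNestedSet n N)
    {I J : Finset (Fin (n+1))} (hI : I ∈ N) (hJ : J ∈ N) (hne : I ≠ J)
    (hlast : Fin.last n ∈ I ∨ Fin.last n ∈ J) : (I ∩ J).Nonempty := by
  rw [Finset.nonempty_iff_ne_empty]
  intro hdisj
  have h2 : ({I, J} : Finset (Finset (Fin (n+1)))).card = 2 := Finset.card_pair hne
  have := h.2.2.1 {I, J} (by
      intro X hX
      simp only [Finset.coe_insert, Finset.coe_singleton, Set.mem_insert_iff,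
        Set.mem_singleton_iff] at hX
      rcases hX with rfl | rfl <;> assumption)
    (le_of_eq h2.symm)
    (by
      intro X hX Y hY hXY
      simp only [Finset.mem_insert, Finset.mem_singleton] at hX hY
      rcases hX with rfl | rfl <;> rcases hY with rfl | rfl
      · exact absurd rfl hXY
      · exact hdisj
      · rw [Finset.inter_comm]; exact hdisj
      · exact absurd rfl hXY)
  apply this
  have hsup : ({I, J} : Finset (Finset (Fin (n+1)))).sup id = I ∪ J := by
    simp [Finset.sup_insert, Finset.sup_singleton]
  rw [hsup]
  right
  rcases hlast with h' | h'
  · exact Finset.mem_union_left _ h'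
  · exact Finset.mem_union_right _ h'

-- key: singleton in N is inside every last-containing member
lemma singleton_subset_of_last_mem {n : ℕ} {N : Set (Finset (Fin (n+1)))} (h : IsNestedSet n N)
    {i : Fin (n+1)} {J : Finset (Fin (n+1))} (hi : {i} ∈ N) (hJ : J ∈ N)
    (hlast : Fin.last n ∈ J) (hne : i ≠ Fin.last n) : i ∈ J := by
  by_cases heq : ({i} : Finset (Fin (n+1))) = J
  · rw [← heq]; simp
  · have := pair_not_disjoint h hi hJ heq (Or.inr hlast)
    obtain ⟨x, hx⟩ := this
    simp only [Finset.mem_inter, Finset.mem_singleton] at hx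
    exact hx.1 ▸ hx.2

-- general extension lemma
lemma nested_insert {n : ℕ} {N : Set (Finset (Fin (n+1)))} (h : IsNestedSet n N)
    {X : Finset (Fin (n+1))} (hX : X ∈ Ihat n)
    (hcomp : ∀ J ∈ N, X ⊆ J ∨ J ⊆ X ∨ X ∩ J = ∅)
    (hstar : ∀ J ∈ N, (Fin.last n ∈ X ∨ Fin.last n ∈ J) → (X ∩ J).Nonempty) :
    IsNestedSet n (insert X N) := by
  obtain ⟨h1, h2, h3, h4⟩ := h
  refine ⟨?_, ?_, ?_, ?_⟩
  · intro J hJ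
    rcases hJ with rfl | hJ
    · exact hX
    · exact h1 hJ
  · intro I hI J hJ
    rcases hI with rfl | hI
    · rcases hJ with rfl | hJ
      · exact Or.inl subset_rfl
      · exact hcomp J hJ
    · rcases hJ with rfl | hJ
      · rcases hcomp I hI with h' | h' | h'
        · exact Or.inr (Or.inl h')
        · exact Or.inl h'
        · exact Or.inr (Or.inr (by rwa [Finset.inter_comm]))
      · exact h2 I hI J hJ
  · intro C hC hcard hdisj hsup
    by_cases hXC : X ∈ C
    · -- X ∈ C; get another element J
      obtain ⟨J, hJC, hJX⟩ : ∃ J ∈ C, J ≠ X := by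
        by_contra hcon
        push_neg at hcon
        have : C ⊆ {X} := fun Y hY => Finset.mem_singleton.mpr (hcon Y hY)
        have := Finset.card_le_card this
        simp at this; omega
      have hJN : J ∈ N := by
        rcases hC hJC with rfl | hJN
        · exact absurd rfl hJX
        · exact hJN
      have hdXJ : X ∩ J = ∅ := by
        rw [Finset.inter_comm]; exact hdisj J hJC X hXC hJX
      -- so last ∉ X and last ∉ J
      have hlX : Fin.last n ∉ X := by
        intro hl
        have := hstar J hJN (Or.inl hl)
        rw [hdXJ] at this; exact Finset.not_nonempty_empty this
      -- all members of C lack last, hence are singletons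
      have hall : ∀ Y ∈ C, Fin.last n ∉ Y := by
        intro Y hY hl
        by_cases hYX : Y = X
        · exact hlX (hYX ▸ hl)
        · have hYN : Y ∈ N := by
            rcases hC hY with rfl | hYN
            · exact absurd rfl hYX
            · exact hYN
          have := hstar Y hYN (Or.inr hl)
          rw [Finset.inter_comm] at this
          have hd := hdisj Y hY X hXC hYX
          rw [hd] at this; exact Finset.not_nonempty_empty this
      -- sup lacks last
      have hsl : Fin.last n ∉ C.sup id := by
        intro hl
        rw [Finset.mem_sup] at hl
        obtain ⟨Y, hY, hl⟩ := hl
        exact hall Y hY hl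
      obtain ⟨i, _, hsing⟩ := mem_Ihat_of_not_last hsup hsl
      -- but sup has card ≥ 2
      have hXs : X ⊆ C.sup id := Finset.le_sup (f := id) hXC
      have hJs : J ⊆ C.sup id := Finset.le_sup (f := id) hJC
      obtain ⟨x, hx⟩ := mem_Ihat_nonempty hX
      have hJI : J ∈ Ihat n := h1 hJN
      obtain ⟨y, hy⟩ := mem_Ihat_nonempty hJI
      have hxy : x ≠ y := by
        intro rfl'
        have : x ∈ X ∩ J := Finset.mem_inter.mpr ⟨hx, rfl' ▸ hy⟩
        rw [hdXJ] at this; simp at this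
      have hxi : x = i := by
        have := hXs hx; rw [hsing] at this; simpa using this
      have hyi : y = i := by
        have := hJs hy; rw [hsing] at this; simpa using this
      exact hxy (hxi.trans hyi.symm)
    · -- X ∉ C : C ⊆ N
      have : ↑C ⊆ N := by
        intro Y hY
        rcases hC hY with rfl | hYN
        · exact absurd hY hXC
        · exact hYN
      exact h3 C this hcard hdisj hsup
  · intro I hI hmax
    exact Set.mem_insert_iff.mpr (Or.inr (h4 I hI hmax))

lemma nested_ncard_le {n : ℕ} {N : Set (Finset (Fin (n+1)))} (h : IsNestedSet n N) :
    N.ncard ≤ n + 1 := by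
  have hfin : N.Finite := Set.toFinite N
  classical
  set Nf := hfin.toFinset with hNf
  have hmemN : ∀ J, J ∈ Nf ↔ J ∈ N := fun J => Set.Finite.mem_toFinset hfin
  set A := Nf.filter (fun J => Fin.last n ∉ J) with hA
  set Cc := Nf.filter (fun J => Fin.last n ∈ J) with hC
  have hsplit : Cc.card + A.card = Nf.card := Finset.card_filter_add_card_filter_not _
  -- every member of A is a singleton {i} with i ≠ last
  have hsingA : ∀ J ∈ A, ∃ i, i ≠ Fin.last n ∧ J = {i} := by
    intro J hJ
    rw [hA, Finset.mem_filter] at hJ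
    exact mem_Ihat_of_not_last (h.1 ((hmemN J).mp hJ.1)) hJ.2
  -- the min' function on A
  have hAne : ∀ J ∈ A, J.Nonempty := by
    intro J hJ; obtain ⟨i, _, rfl⟩ := hsingA J hJ; exact ⟨i, by simp⟩
  -- T = union of A
  set T := A.sup id with hT
  have hTlast : Fin.last n ∉ T := by
    intro hl
    rw [hT, Finset.mem_sup] at hl
    obtain ⟨J, hJ, hl⟩ := hl
    rw [hA, Finset.mem_filter] at hJ
    exact hJ.2 hl
  have hcardA : A.card ≤ T.card := by
    apply Finset.card_le_card_of_injOn (fun J => J.sup id)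
    · intro J hJ
      obtain ⟨i, _, rfl⟩ := hsingA J hJ
      simp only [Finset.sup_singleton, id]
      rw [hT, Finset.mem_coe, Finset.mem_sup]
      exact ⟨{i}, hJ, by simp⟩
    · intro J hJ K hK hJK
      obtain ⟨i, _, rfl⟩ := hsingA J hJ
      obtain ⟨j, _, rfl⟩ := hsingA K hK
      simp only [Finset.sup_singleton, id] at hJK
      rw [hJK]
  -- every member of Cc contains T and last
  have hTsub : ∀ J ∈ Cc, T ⊆ J := by
    intro J hJ
    rw [hC, Finset.mem_filter] at hJ
    rw [hT]
    show A.sup id ≤ J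
    apply Finset.sup_le
    intro K hK
    obtain ⟨i, hine, rfl⟩ := hsingA K hK
    rw [hA, Finset.mem_filter] at hK
    simp only [id]
    exact Finset.singleton_subset_iff.mpr
      (singleton_subset_of_last_mem h ((hmemN _).mp hK.1) ((hmemN J).mp hJ.1) hJ.2 hine)
  have hcardC : ∀ J ∈ Cc, A.card + 1 ≤ J.card ∧ J.card ≤ n + 1 := by
    intro J hJ
    have h1 : insert (Fin.last n) T ⊆ J := by
      rw [Finset.insert_subset_iff]
      exact ⟨(Finset.mem_filter.mp hJ).2, hTsub J hJ⟩
    have h2 := Finset.card_le_card h1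
    rw [Finset.card_insert_of_notMem hTlast] at h2
    refine ⟨by omega, ?_⟩
    have := Finset.card_le_univ J
    simpa using this
  have hAle : A.card ≤ n + 1 := hcardA.trans (by simpa using Finset.card_le_univ T)
  have hCcard : Cc.card ≤ (n + 1) - A.card := by
    have hinj : Cc.card ≤ (Finset.Icc (A.card + 1) (n + 1)).card := by
      apply Finset.card_le_card_of_injOn Finset.card
      · intro J hJ
        rw [Finset.mem_coe, Finset.mem_Icc]
        exact hcardC J hJ
      · intro J hJ K hK hJK
        have hJN : J ∈ N := (hmemN J).mp (Finset.mem_filter.mp hJ).1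
        have hKN : K ∈ N := (hmemN K).mp (Finset.mem_filter.mp hK).1
        rcases h.2.1 J hJN K hKN with hc | hc | hc
        · exact Finset.eq_of_subset_of_card_le hc (le_of_eq hJK.symm)
        · exact (Finset.eq_of_subset_of_card_le hc (le_of_eq hJK)).symm
        · exfalso
          have : Fin.last n ∈ J ∩ K := Finset.mem_inter.mpr
            ⟨(Finset.mem_filter.mp hJ).2, (Finset.mem_filter.mp hK).2⟩
          rw [hc] at this; simp at this
    rw [Nat.card_Icc] at hinj
    omega
  have hncard : N.ncard = Nf.card := Set.ncard_eq_toFinset_card N hfin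
  omega

lemma filter_lt_card (n k : ℕ) (hk : k ≤ n) :
    (Finset.univ.filter (fun j : Fin (n + 1) => (j : ℕ) < k)).card = k := by
  have : (Finset.univ.filter (fun j : Fin (n + 1) => (j : ℕ) < k)) =
      Finset.Iio (⟨k, by omega⟩ : Fin (n+1)) := by
    ext j
    simp [Finset.mem_Iio, Fin.lt_def]
  rw [this, Fin.card_Iio]


lemma canon_facts (n k : ℕ) (hk : k ≤ n) (I : Fin (n + 1) → Finset (Fin (n + 1)))
    (hinj : Function.Injective I)
    (hsing : ∀ j : Fin (n + 1), (j : ℕ) < k → ∃ i : Fin (n + 1), i ≠ Fin.last n ∧ I j = {i})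
    (hIk : I ⟨k, Nat.lt_succ_of_le hk⟩ =
      insert (Fin.last n) ((Finset.univ.filter (fun j : Fin (n + 1) => (j : ℕ) < k)).sup I))
    (hstep : ∀ (j : ℕ) (h1 : k ≤ j) (h2 : j < n),
      I ⟨j, Nat.lt_succ_of_lt h2⟩ ⊂ I ⟨j + 1, Nat.succ_lt_succ h2⟩ ∧
      (I ⟨j + 1, Nat.succ_lt_succ h2⟩ \ I ⟨j, Nat.lt_succ_of_lt h2⟩).card = 1) :
    IsNestedSet n (Set.range I) ∧ I ⟨n, by omega⟩ = Finset.univ ∧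
      (∀ (j : ℕ) (h1 : k ≤ j) (h2 : j ≤ n), (I ⟨j, by omega⟩).card = j + 1) := by
  classical
  have hsubk : ∀ j : Fin (n+1), (j : ℕ) < k → I j ⊆ I ⟨k, by omega⟩ := by
    intro j hj
    have hjf : j ∈ Finset.univ.filter (fun j : Fin (n + 1) => (j : ℕ) < k) :=
      Finset.mem_filter.mpr ⟨Finset.mem_univ _, hj⟩
    rw [hIk]
    exact Finset.Subset.trans (Finset.le_sup hjf) (Finset.subset_insert _ _)
  have hlastk : Fin.last n ∈ I ⟨k, by omega⟩ := by rw [hIk]; exact Finset.mem_insert_self _ _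
  have hmono0 : ∀ (d a : ℕ) (ha : k ≤ a) (h : a + d ≤ n),
      I ⟨a, by omega⟩ ⊆ I ⟨a + d, by omega⟩ := by
    intro d
    induction d with
    | zero => intro a ha h; exact subset_rfl
    | succ d ih =>
      intro a ha h
      exact (ih a ha (by omega)).trans (hstep (a + d) (by omega) (by omega)).1.subset
  have hmono : ∀ (a b : ℕ) (ha : k ≤ a) (hab : a ≤ b) (hb : b ≤ n),
      I ⟨a, by omega⟩ ⊆ I ⟨b, by omega⟩ := by
    intro a b ha hab hb
    have h2 := hmono0 (b - a) a ha (by omega)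
    have h3 : (⟨a + (b - a), by omega⟩ : Fin (n+1)) = ⟨b, by omega⟩ := by
      simp only [Fin.mk.injEq]; omega
    rwa [h3] at h2
  have hlastge : ∀ (j : ℕ) (h1 : k ≤ j) (h2 : j ≤ n), Fin.last n ∈ I ⟨j, by omega⟩ :=
    fun j h1 h2 => hmono k j le_rfl h1 h2 hlastk
  -- the singleton-element function, totalized
  choose e0 he01 he02 using hsing
  set e : Fin (n+1) → Fin (n+1) := fun j => if h : (j : ℕ) < k then e0 j h else j with he
  have he2 : ∀ j : Fin (n+1), (j : ℕ) < k → I j = {e j} := by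
    intro j hj; rw [he]; simp only [dif_pos hj]; exact he02 j hj
  have he1 : ∀ j : Fin (n+1), (j : ℕ) < k → e j ≠ Fin.last n := by
    intro j hj; rw [he]; simp only [dif_pos hj]; exact he01 j hj
  set F := Finset.univ.filter (fun j : Fin (n + 1) => (j : ℕ) < k) with hF
  have hmemF : ∀ j, j ∈ F ↔ (j : ℕ) < k := by
    intro j; rw [hF, Finset.mem_filter]; simp
  have hTcard : (F.sup I).card = k := by
    have himg : F.sup I = F.image e := by
      ext x
      rw [Finset.mem_sup, Finset.mem_image]
      constructor
      · rintro ⟨j, hj, hx⟩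
        rw [he2 j ((hmemF j).mp hj)] at hx
        exact ⟨j, hj, (Finset.mem_singleton.mp hx).symm⟩
      · rintro ⟨j, hj, hx⟩
        exact ⟨j, hj, by rw [he2 j ((hmemF j).mp hj), ← hx]; simp⟩
    rw [himg, Finset.card_image_of_injOn ?_]
    · exact filter_lt_card n k hk
    · intro a ha b hb hab
      apply hinj
      rw [he2 a ((hmemF a).mp ha), he2 b ((hmemF b).mp hb), hab]
  have hTlast : Fin.last n ∉ F.sup I := by
    rw [Finset.mem_sup]
    rintro ⟨j, hj, hl⟩
    rw [he2 j ((hmemF j).mp hj)] at hl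
    exact he1 j ((hmemF j).mp hj) (Finset.mem_singleton.mp hl).symm
  have hcardk : (I ⟨k, by omega⟩).card = k + 1 := by
    rw [hIk, Finset.card_insert_of_notMem hTlast, hTcard]
  have hcard0 : ∀ (d : ℕ) (h : k + d ≤ n), (I ⟨k + d, by omega⟩).card = k + d + 1 := by
    intro d
    induction d with
    | zero => intro h; simpa using hcardk
    | succ d ih =>
      intro h
      obtain ⟨hsub, hc⟩ := hstep (k + d) (by omega) (by omega)
      have h1 := Finset.card_sdiff_of_subset hsub.subset
      have h2 := Finset.card_le_card hsub.subset
      have h3 := ih (by omega)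
      have h4 : (⟨k + (d+1), by omega⟩ : Fin (n+1)) = ⟨k + d + 1, by omega⟩ := by
        simp only [Fin.mk.injEq]; omega
      rw [h4]
      omega
  have hcard : ∀ (j : ℕ) (h1 : k ≤ j) (h2 : j ≤ n), (I ⟨j, by omega⟩).card = j + 1 := by
    intro j h1 h2
    have h3 := hcard0 (j - k) (by omega)
    have h4 : (⟨k + (j - k), by omega⟩ : Fin (n+1)) = ⟨j, by omega⟩ := by
      simp only [Fin.mk.injEq]; omega
    rw [h4] at h3
    rw [h3]; omega
  have hIn : I ⟨n, by omega⟩ = Finset.univ := by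
    apply Finset.eq_univ_of_card
    rw [hcard n hk le_rfl]
    simp
  -- membership facts per index
  have hIdx : ∀ a : Fin (n+1), ¬ ((a : ℕ) < k) → Fin.last n ∈ I a ∧ I ⟨k, by omega⟩ ⊆ I a := by
    intro a ha
    have h1 : I a = I ⟨(a : ℕ), a.isLt⟩ := by congr
    have h2 : (a : ℕ) ≤ n := by omega
    rw [h1]
    exact ⟨hlastge a (by omega) h2, hmono k a le_rfl (by omega) h2⟩
  have hlast_iff : ∀ a : Fin (n+1), Fin.last n ∈ I a ↔ ¬ ((a : ℕ) < k) := by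
    intro a
    constructor
    · intro hl hak
      rw [he2 a hak] at hl
      exact he1 a hak (Finset.mem_singleton.mp hl).symm
    · intro ha; exact (hIdx a ha).1
  refine ⟨⟨?_, ?_, ?_, ?_⟩, hIn, hcard⟩
  · rintro J ⟨j, rfl⟩
    by_cases hj : (j : ℕ) < k
    · exact Or.inl ⟨e j, he1 j hj, he2 j hj⟩
    · exact Or.inr (hIdx j hj).1
  · rintro J ⟨a, rfl⟩ K ⟨b, rfl⟩
    by_cases ha : (a : ℕ) < k <;> by_cases hb : (b : ℕ) < k
    · by_cases hii : e a = e b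
      · exact Or.inl (by rw [he2 a ha, he2 b hb, hii])
      · refine Or.inr (Or.inr ?_)
        rw [he2 a ha, he2 b hb]
        exact Finset.singleton_inter_of_notMem (by simpa using hii)
    · exact Or.inl ((hsubk a ha).trans (hIdx b hb).2)
    · exact Or.inr (Or.inl ((hsubk b hb).trans (hIdx a ha).2))
    · rcases le_total (a : ℕ) (b : ℕ) with hab | hab
      · refine Or.inl ?_
        have h1 : I a = I ⟨(a : ℕ), a.isLt⟩ := by congr
        have h2 : I b = I ⟨(b : ℕ), b.isLt⟩ := by congr
        rw [h1, h2]
        exact hmono a b (by omega) hab (by omega)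
      · refine Or.inr (Or.inl ?_)
        have h1 : I a = I ⟨(a : ℕ), a.isLt⟩ := by congr
        have h2 : I b = I ⟨(b : ℕ), b.isLt⟩ := by congr
        rw [h1, h2]
        exact hmono b a (by omega) hab (by omega)
  · intro C hC hcard2 hdisj hsup
    -- no member contains last
    have hnolast : ∀ J ∈ C, Fin.last n ∉ J := by
      intro J hJ hl
      obtain ⟨K, hK, hKJ⟩ := Finset.exists_mem_ne (show 1 < C.card by omega) J
      have hd := hdisj K hK J hJ hKJ
      obtain ⟨a, rfl⟩ := hC hJ
      obtain ⟨b, rfl⟩ := hC hK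
      have hak : ¬ ((a : ℕ) < k) := (hlast_iff a).mp hl
      by_cases hbk : (b : ℕ) < k
      · -- I b = {e b} ⊆ I k ⊆ I a
        have : e b ∈ I b ∩ I a := by
          rw [Finset.mem_inter, he2 b hbk]
          refine ⟨by simp, ?_⟩
          apply (hIdx a hak).2
          apply hsubk b hbk
          rw [he2 b hbk]; simp
        rw [hd] at this; simp at this
      · have : Fin.last n ∈ I b ∩ I a := Finset.mem_inter.mpr ⟨(hIdx b hbk).1, hl⟩
        rw [hd] at this; simp at this
    have hsl : Fin.last n ∉ C.sup id := by
      intro hl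
      rw [Finset.mem_sup] at hl
      obtain ⟨J, hJ, hl⟩ := hl
      exact hnolast J hJ hl
    obtain ⟨i0, _, hs⟩ := mem_Ihat_of_not_last hsup hsl
    -- two distinct members, both nonempty subsets of {i0}
    obtain ⟨J, hJ, K, hK, hJK⟩ := Finset.one_lt_card.mp (show 1 < C.card by omega)
    have hJs : J ⊆ {i0} := hs ▸ Finset.le_sup (f := id) hJ
    have hKs : K ⊆ {i0} := hs ▸ Finset.le_sup (f := id) hK
    have hJne : J.Nonempty := by
      obtain ⟨a, rfl⟩ := hC hJ
      by_cases hak : (a : ℕ) < k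
      · rw [he2 a hak]; simp
      · exact ⟨_, (hIdx a hak).1⟩
    have hKne : K.Nonempty := by
      obtain ⟨a, rfl⟩ := hC hK
      by_cases hak : (a : ℕ) < k
      · rw [he2 a hak]; simp
      · exact ⟨_, (hIdx a hak).1⟩
    have h1 : J = {i0} := by
      rcases Finset.subset_singleton_iff.mp hJs with h | h
      · rw [h] at hJne; exact absurd hJne (by simp)
      · exact h
    have h2 : K = {i0} := by
      rcases Finset.subset_singleton_iff.mp hKs with h | h
      · rw [h] at hKne; exact absurd hKne (by simp)
      · exact h
    exact hJK (h1.trans h2.symm)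
  · intro I' hI' hmax
    have : I' = Finset.univ := hmax Finset.univ (univ_mem_Ihat n) (Finset.subset_univ _)
    exact ⟨⟨n, by omega⟩, by rw [hIn, this]⟩

lemma forward {n : ℕ} {N : Set (Finset (Fin (n+1)))} (h : IsMaxNestedSet n N) :
    ∃ (k : ℕ) (hk : k ≤ n) (I : Fin (n + 1) → Finset (Fin (n + 1))),
      Function.Injective I ∧ N = Set.range I ∧
      (∀ j : Fin (n + 1), (j : ℕ) < k →
        ∃ i : Fin (n + 1), i ≠ Fin.last n ∧ I j = {i}) ∧
      I ⟨k, Nat.lt_succ_of_le hk⟩ =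
        insert (Fin.last n)
          ((Finset.univ.filter (fun j : Fin (n + 1) => (j : ℕ) < k)).sup I) ∧
      (∀ (j : ℕ) (h1 : k ≤ j) (h2 : j < n),
        I ⟨j, Nat.lt_succ_of_lt h2⟩ ⊂ I ⟨j + 1, Nat.succ_lt_succ h2⟩ ∧
        (I ⟨j + 1, Nat.succ_lt_succ h2⟩ \ I ⟨j, Nat.lt_succ_of_lt h2⟩).card = 1) := by
  classical
  obtain ⟨hN, hmax⟩ := h
  have hmem : ∀ X, X ∈ Ihat n → (∀ J ∈ N, X ⊆ J ∨ J ⊆ X ∨ X ∩ J = ∅) →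
      (∀ J ∈ N, (Fin.last n ∈ X ∨ Fin.last n ∈ J) → (X ∩ J).Nonempty) → X ∈ N := by
    intro X hX hcomp hstar
    have h1 := nested_insert hN hX hcomp hstar
    have h2 := hmax _ h1 (Set.subset_insert X N)
    rw [← h2]
    exact Set.mem_insert X N
  set S : Finset (Fin (n+1)) :=
    Finset.univ.filter (fun i => i ≠ Fin.last n ∧ ({i} : Finset (Fin (n+1))) ∈ N) with hS
  have hSmem : ∀ i, i ∈ S ↔ (i ≠ Fin.last n ∧ ({i} : Finset (Fin (n+1))) ∈ N) := by
    intro i; rw [hS, Finset.mem_filter]; simp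
  set k := S.card with hkdef
  have hSlast : Fin.last n ∉ S := fun hc => ((hSmem _).mp hc).1 rfl
  have hk : k ≤ n := by
    have h1 : S ⊆ Finset.univ.erase (Fin.last n) := by
      intro i hi
      exact Finset.mem_erase.mpr ⟨((hSmem i).mp hi).1, Finset.mem_univ i⟩
    have h2 := Finset.card_le_card h1
    rw [Finset.card_erase_of_mem (Finset.mem_univ _)] at h2
    simpa using h2
  set M : Finset (Fin (n+1)) := insert (Fin.last n) S with hM
  have hMcard : M.card = k + 1 := by rw [hM, Finset.card_insert_of_notMem hSlast]
  -- classification of members of N, and M ⊆ chain members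
  have hclass : ∀ J ∈ N, Fin.last n ∉ J → ∃ i ∈ S, J = {i} := by
    intro J hJ hl
    obtain ⟨i, hine, rfl⟩ := mem_Ihat_of_not_last (hN.1 hJ) hl
    exact ⟨i, (hSmem i).mpr ⟨hine, hJ⟩, rfl⟩
  have hMsub : ∀ J ∈ N, Fin.last n ∈ J → M ⊆ J := by
    intro J hJ hl
    rw [hM, Finset.insert_subset_iff]
    refine ⟨hl, ?_⟩
    intro i hi
    exact singleton_subset_of_last_mem hN ((hSmem i).mp hi).2 hJ hl ((hSmem i).mp hi).1
  -- M ∈ N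
  have hMN : M ∈ N := by
    apply hmem
    · exact Or.inr (Finset.mem_insert_self _ _)
    · intro J hJ
      by_cases hl : Fin.last n ∈ J
      · exact Or.inl (hMsub J hJ hl)
      · obtain ⟨i, hiS, rfl⟩ := hclass J hJ hl
        exact Or.inr (Or.inl (Finset.singleton_subset_iff.mpr
          (Finset.mem_insert_of_mem hiS)))
    · intro J hJ _
      by_cases hl : Fin.last n ∈ J
      · exact ⟨Fin.last n, Finset.mem_inter.mpr ⟨Finset.mem_insert_self _ _, hl⟩⟩
      · obtain ⟨i, hiS, rfl⟩ := hclass J hJ hl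
        exact ⟨i, Finset.mem_inter.mpr ⟨Finset.mem_insert_of_mem hiS, by simp⟩⟩
  -- chain members are comparable
  have hchain : ∀ J ∈ N, ∀ K ∈ N, Fin.last n ∈ J → Fin.last n ∈ K → J ⊆ K ∨ K ⊆ J := by
    intro J hJ K hK hlJ hlK
    rcases hN.2.1 J hJ K hK with h' | h' | h'
    · exact Or.inl h'
    · exact Or.inr h'
    · exfalso
      have : Fin.last n ∈ J ∩ K := Finset.mem_inter.mpr ⟨hlJ, hlK⟩
      rw [h'] at this; simp at this
  have huniq : ∀ J ∈ N, ∀ K ∈ N, Fin.last n ∈ J → Fin.last n ∈ K → J.card = K.card → J = K := by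
    intro J hJ K hK hlJ hlK hc
    rcases hchain J hJ K hK hlJ hlK with h' | h'
    · exact Finset.eq_of_subset_of_card_le h' (le_of_eq hc.symm)
    · exact (Finset.eq_of_subset_of_card_le h' (le_of_eq hc)).symm
  -- saturation
  have hsat : ∀ J ∈ N, Fin.last n ∈ J → J ≠ Finset.univ →
      ∃ J' ∈ N, Fin.last n ∈ J' ∧ J ⊂ J' ∧ (J' \ J).card = 1 := by
    intro J hJ hlJ hJu
    -- candidates strictly above J
    set Cand : Finset (Finset (Fin (n+1))) :=
      (Set.toFinite N).toFinset.filter (fun K => Fin.last n ∈ K ∧ J ⊂ K) with hCand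
    have hmemCand : ∀ K, K ∈ Cand ↔ (K ∈ N ∧ Fin.last n ∈ K ∧ J ⊂ K) := by
      intro K
      rw [hCand, Finset.mem_filter, Set.Finite.mem_toFinset]
    have hCne : Cand.Nonempty := by
      refine ⟨Finset.univ, (hmemCand _).mpr ⟨univ_mem_nested hN, Finset.mem_univ _, ?_⟩⟩
      exact Finset.ssubset_univ_iff.mpr hJu
    obtain ⟨J', hJ'C, hJ'min⟩ := Cand.exists_minimal hCne
    obtain ⟨hJ'N, hlJ', hJJ'⟩ := (hmemCand J').mp hJ'C
    have hJ'le : ∀ K ∈ Cand, J' ⊆ K := by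
      intro K hK
      obtain ⟨hKN, hlK, hJK⟩ := (hmemCand K).mp hK
      rcases hchain J' hJ'N K hKN hlJ' hlK with h' | h'
      · exact h'
      · rcases eq_or_ne K J' with rfl | hne
        · exact subset_rfl
        · exact hJ'min hK h'
    refine ⟨J', hJ'N, hlJ', hJJ', ?_⟩
    by_contra hc1
    obtain ⟨x, hx⟩ := Finset.exists_of_ssubset hJJ'
    have hxmem : x ∈ J' \ J := Finset.mem_sdiff.mpr ⟨hx.1, hx.2⟩
    have hge2 : 2 ≤ (J' \ J).card := by
      have h1 : 1 ≤ (J' \ J).card := Finset.card_pos.mpr ⟨x, hxmem⟩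
      omega
    set X : Finset (Fin (n+1)) := insert x J with hX
    have hXJ' : X ⊆ J' := Finset.insert_subset hx.1 hJJ'.subset
    have hXssJ' : X ⊂ J' := by
      refine Finset.ssubset_iff_subset_ne.mpr ⟨hXJ', ?_⟩
      intro hc
      have h1 : X.card = J.card + 1 := by
        rw [hX, Finset.card_insert_of_notMem hx.2]
      have h2 : (J' \ J).card = J'.card - J.card := by
        rw [Finset.card_sdiff_of_subset hJJ'.subset]
      have h3 := Finset.card_le_card hJJ'.subset
      rw [hc] at h1
      omega
    have hXN : X ∈ N := by
      apply hmem
      · exact Or.inr (Finset.mem_insert_of_mem hlJ)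
      · intro K hK
        by_cases hlK : Fin.last n ∈ K
        · rcases hchain J hJ K hK hlJ hlK with h' | h'
          · rcases eq_or_ne J K with rfl | hne
            · exact Or.inr (Or.inl (Finset.subset_insert _ _))
            · have hKC : K ∈ Cand := (hmemCand K).mpr ⟨hK, hlK, lt_of_le_of_ne h' hne⟩
              exact Or.inl (hXJ'.trans (hJ'le K hKC))
          · exact Or.inr (Or.inl (h'.trans (Finset.subset_insert _ _)))
        · obtain ⟨i, hiS, rfl⟩ := hclass K hK hlK
          refine Or.inr (Or.inl (Finset.singleton_subset_iff.mpr ?_))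
          exact Finset.mem_insert_of_mem (hMsub J hJ hlJ (Finset.mem_insert_of_mem hiS))
      · intro K hK _
        by_cases hlK : Fin.last n ∈ K
        · exact ⟨Fin.last n, Finset.mem_inter.mpr ⟨Finset.mem_insert_of_mem hlJ, hlK⟩⟩
        · obtain ⟨i, hiS, rfl⟩ := hclass K hK hlK
          refine ⟨i, Finset.mem_inter.mpr ⟨?_, by simp⟩⟩
          exact Finset.mem_insert_of_mem (hMsub J hJ hlJ (Finset.mem_insert_of_mem hiS))
    have hXC : X ∈ Cand := (hmemCand X).mpr ⟨hXN, Finset.mem_insert_of_mem hlJ,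
      Finset.ssubset_insert hx.2⟩
    exact hXssJ'.2 (hJ'le X hXC)
  -- existence of chain elements of every cardinality
  have hMlast : Fin.last n ∈ M := Finset.mem_insert_self _ _
  have hexists0 : ∀ d, k + 1 + d ≤ n + 1 →
      ∃ J, J ∈ N ∧ Fin.last n ∈ J ∧ J.card = k + 1 + d := by
    intro d
    induction d with
    | zero => intro _; exact ⟨M, hMN, hMlast, by omega⟩
    | succ d ih =>
      intro hle
      obtain ⟨J, hJ, hlJ, hcJ⟩ := ih (by omega)
      have hJu : J ≠ Finset.univ := by
        intro hc
        rw [hc] at hcJ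
        rw [Finset.card_univ, Fintype.card_fin] at hcJ
        omega
      obtain ⟨J', hJ'N, hlJ', hss, hdiff⟩ := hsat J hJ hlJ hJu
      refine ⟨J', hJ'N, hlJ', ?_⟩
      have h1 := Finset.card_sdiff_of_subset hss.subset
      have h2 := Finset.card_le_card hss.subset
      omega
  have hexists : ∀ c, k + 1 ≤ c → c ≤ n + 1 →
      ∃ J, J ∈ N ∧ Fin.last n ∈ J ∧ J.card = c := by
    intro c h1 h2
    obtain ⟨J, hJ⟩ := hexists0 (c - (k+1)) (by omega)
    have : k + 1 + (c - (k+1)) = c := by omega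
    rw [this] at hJ
    exact ⟨J, hJ⟩
  choose! g hg1 hg2 hg3 using hexists
  -- enumeration of S
  set e : Fin S.card ≃ {x // x ∈ S} := S.equivFin.symm with he
  set I : Fin (n+1) → Finset (Fin (n+1)) := fun j =>
    if h : (j : ℕ) < k then {(e ⟨(j : ℕ), by omega⟩ : {x // x ∈ S}).1}
    else g ((j : ℕ) + 1) with hI
  have hI_lt : ∀ (j : Fin (n+1)) (h : (j : ℕ) < k),
      I j = {(e ⟨(j : ℕ), by omega⟩ : {x // x ∈ S}).1} := by
    intro j hj
    rw [hI]
    simp only [dif_pos hj]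
  have hI_ge : ∀ (j : Fin (n+1)), ¬ ((j : ℕ) < k) → I j = g ((j : ℕ) + 1) := by
    intro j hj
    rw [hI]
    simp only [dif_neg hj]
  have hgprop : ∀ (j : Fin (n+1)), ¬ ((j : ℕ) < k) →
      g ((j:ℕ)+1) ∈ N ∧ Fin.last n ∈ g ((j:ℕ)+1) ∧ (g ((j:ℕ)+1)).card = (j:ℕ)+1 := by
    intro j hj
    have h1 : k + 1 ≤ (j:ℕ) + 1 := by omega
    have h2 : (j:ℕ) + 1 ≤ n + 1 := by omega
    exact ⟨hg1 _ h1 h2, hg2 _ h1 h2, hg3 _ h1 h2⟩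
  have hes : ∀ (a : Fin S.card), (e a).1 ∈ S := fun a => (e a).2
  have heS : ∀ (j : Fin (n+1)) (h : (j : ℕ) < k),
      ((e ⟨(j : ℕ), by omega⟩ : {x // x ∈ S}).1 ∈ S) := fun j h => hes _
  -- injectivity
  have hinj : Function.Injective I := by
    intro a b hab
    by_cases ha : (a : ℕ) < k <;> by_cases hb : (b : ℕ) < k
    · rw [hI_lt a ha, hI_lt b hb] at hab
      have h1 := Finset.singleton_injective hab
      have h2 := e.injective (Subtype.ext h1)
      have h3 : (a : ℕ) = (b : ℕ) := by
        have := Fin.mk.injEq (n := S.card) (a:ℕ) (by omega) (b:ℕ) (by omega) ▸ h2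
        exact Fin.mk.inj_iff.mp h2
      exact Fin.ext h3
    · exfalso
      rw [hI_lt a ha, hI_ge b hb] at hab
      have h1 := (hgprop b hb).2.1
      rw [← hab, Finset.mem_singleton] at h1
      exact ((hSmem _).mp (heS a ha)).1 h1.symm
    · exfalso
      rw [hI_ge a ha, hI_lt b hb] at hab
      have h1 := (hgprop a ha).2.1
      rw [hab, Finset.mem_singleton] at h1
      exact ((hSmem _).mp (heS b hb)).1 h1.symm
    · rw [hI_ge a ha, hI_ge b hb] at hab
      have h1 := (hgprop a ha).2.2
      rw [hab, (hgprop b hb).2.2] at h1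
      exact Fin.ext (by omega)
  -- range
  have hrange : N = Set.range I := by
    ext J
    constructor
    · intro hJ
      by_cases hlJ : Fin.last n ∈ J
      · have hc1 : k + 1 ≤ J.card := by
          have := Finset.card_le_card (hMsub J hJ hlJ)
          omega
        have hc2 : J.card ≤ n + 1 := by
          simpa using Finset.card_le_univ J
        refine ⟨⟨J.card - 1, by omega⟩, ?_⟩
        have hnk : ¬ ((⟨J.card - 1, by omega⟩ : Fin (n+1)) : ℕ) < k := by
          simp only [Fin.val_mk]
          omega
        rw [hI_ge _ hnk]
        simp only [Fin.val_mk]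
        have hc3 : J.card - 1 + 1 = J.card := by omega
        rw [hc3]
        exact huniq _ (hg1 _ hc1 hc2) J hJ (hg2 _ hc1 hc2) hlJ (by rw [hg3 _ hc1 hc2])
      · obtain ⟨i, hiS, rfl⟩ := hclass J hJ hlJ
        set a := e.symm ⟨i, hiS⟩ with ha
        have hak : (a : ℕ) < k := by
          have := a.isLt
          omega
        refine ⟨⟨(a : ℕ), by omega⟩, ?_⟩
        rw [hI_lt _ (by simpa using hak)]
        congr 1
        have h4 : (⟨((⟨(a : ℕ), by omega⟩ : Fin (n+1)) : ℕ), by simp only [Fin.val_mk]; omega⟩ : Fin S.card) = a := by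
          apply Fin.ext
          simp
        rw [h4, ha, e.apply_symm_apply]
    · rintro ⟨j, rfl⟩
      by_cases hj : (j : ℕ) < k
      · rw [hI_lt j hj]
        exact ((hSmem _).mp (heS j hj)).2
      · rw [hI_ge j hj]
        exact (hgprop j hj).1
  -- singleton property
  have hsing : ∀ j : Fin (n + 1), (j : ℕ) < k →
      ∃ i : Fin (n + 1), i ≠ Fin.last n ∧ I j = {i} := by
    intro j hj
    exact ⟨_, ((hSmem _).mp (heS j hj)).1, hI_lt j hj⟩
  -- I k = M = insert last (sup)
  have hIkM : I ⟨k, by omega⟩ = M := by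
    have hnk : ¬ ((⟨k, by omega⟩ : Fin (n+1)) : ℕ) < k := by simp only [Fin.val_mk]; omega
    rw [hI_ge _ hnk]
    simp only [Fin.val_mk]
    exact huniq _ (hg1 _ le_rfl (by omega)) M hMN (hg2 _ le_rfl (by omega)) hMlast
      (by rw [hg3 _ le_rfl (by omega), hMcard])
  have hsupS : (Finset.univ.filter (fun j : Fin (n + 1) => (j : ℕ) < k)).sup I = S := by
    ext x
    rw [Finset.mem_sup]
    constructor
    · rintro ⟨j, hj, hx⟩
      have hjk : (j : ℕ) < k := (Finset.mem_filter.mp hj).2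
      rw [hI_lt j hjk, Finset.mem_singleton] at hx
      rw [hx]
      exact heS j hjk
    · intro hx
      set a := e.symm ⟨x, hx⟩ with ha
      have hak : (a : ℕ) < k := by
        have := a.isLt
        omega
      refine ⟨⟨(a : ℕ), by omega⟩, Finset.mem_filter.mpr ⟨Finset.mem_univ _, by simpa using hak⟩, ?_⟩
      rw [hI_lt _ (by simpa using hak), Finset.mem_singleton]
      have h4 : (⟨((⟨(a : ℕ), by omega⟩ : Fin (n+1)) : ℕ), by simp only [Fin.val_mk]; omega⟩ : Fin S.card) = a := by
        apply Fin.ext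
        simp
      rw [h4, ha, e.apply_symm_apply]
  have hIkeq : I ⟨k, by omega⟩ =
      insert (Fin.last n) ((Finset.univ.filter (fun j : Fin (n + 1) => (j : ℕ) < k)).sup I) := by
    rw [hIkM, hsupS]
  -- step property
  have hstep : ∀ (j : ℕ) (h1 : k ≤ j) (h2 : j < n),
      I ⟨j, by omega⟩ ⊂ I ⟨j + 1, by omega⟩ ∧
      (I ⟨j + 1, by omega⟩ \ I ⟨j, by omega⟩).card = 1 := by
    intro j h1 h2
    have hn1 : ¬ ((⟨j, by omega⟩ : Fin (n+1)) : ℕ) < k := by simp only [Fin.val_mk]; omega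
    have hn2 : ¬ ((⟨j + 1, by omega⟩ : Fin (n+1)) : ℕ) < k := by simp only [Fin.val_mk]; omega
    rw [hI_ge _ hn1, hI_ge _ hn2]
    simp only [Fin.val_mk]
    have hp1 := hgprop ⟨j, by omega⟩ hn1
    have hp2 := hgprop ⟨j + 1, by omega⟩ hn2
    simp only [Fin.val_mk] at hp1 hp2
    have hsub : g (j + 1) ⊆ g (j + 1 + 1) := by
      rcases hchain _ hp1.1 _ hp2.1 hp1.2.1 hp2.2.1 with h' | h'
      · exact h'
      · exfalso
        have := Finset.card_le_card h'
        rw [hp1.2.2, hp2.2.2] at this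
        omega
    have hne : g (j + 1) ≠ g (j + 1 + 1) := by
      intro hc
      have := hp1.2.2
      rw [hc, hp2.2.2] at this
      omega
    refine ⟨Finset.ssubset_iff_subset_ne.mpr ⟨hsub, hne⟩, ?_⟩
    rw [Finset.card_sdiff_of_subset hsub, hp1.2.2, hp2.2.2]
    omega
  exact ⟨k, hk, I, hinj, hrange, hsing, hIkeq, hstep⟩


/-- The inclusion-maximal nested sets of `Î_n` are exactly those of the form
`{I_1,…,I_{n+1}}` where `I_1,…,I_k` are `k` distinct singletons of `[n]` (`0 ≤ k ≤ n`),
`I_{k+1} = I_1 ∪ ⋯ ∪ I_k ∪ {n+1}`, and `I_j ⊊ I_{j+1}` with `|I_{j+1} \ I_j| = 1`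
thereafter. -/
theorem max_nested_sets_Ihat (n : ℕ) (N : Set (Finset (Fin (n + 1)))) :
    IsMaxNestedSet n N ↔
      ∃ (k : ℕ) (hk : k ≤ n) (I : Fin (n + 1) → Finset (Fin (n + 1))),
        Function.Injective I ∧ N = Set.range I ∧
        (∀ j : Fin (n + 1), (j : ℕ) < k →
          ∃ i : Fin (n + 1), i ≠ Fin.last n ∧ I j = {i}) ∧
        I ⟨k, by omega⟩ =
          insert (Fin.last n)
            ((Finset.univ.filter (fun j : Fin (n + 1) => (j : ℕ) < k)).sup I) ∧
        (∀ (j : ℕ) (h1 : k ≤ j) (h2 : j < n),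
          I ⟨j, by omega⟩ ⊂ I ⟨j + 1, by omega⟩ ∧
          (I ⟨j + 1, by omega⟩ \ I ⟨j, by omega⟩).card = 1) := by
  constructor
  · exact fun h => forward h
  · rintro ⟨k, hk, I, hinj, rfl, hsing, hIk, hstep⟩
    obtain ⟨hnested, hIn, hcard⟩ := canon_facts n k hk I hinj hsing hIk hstep
    refine ⟨hnested, ?_⟩
    intro N' hN' hsub
    have h1 : (Set.range I).ncard = n + 1 := by
      rw [← Nat.card_coe_set_eq, Nat.card_range_of_injective hinj,
        Nat.card_eq_fintype_card, Fintype.card_fin]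
    have h2 := nested_ncard_le hN'
    exact (Set.eq_of_subset_of_ncard_le hsub (by omega) (Set.toFinite N')).symm
end

section
/- Every maximal nested set of the building set Î_n = {{i} : i ∈ [n]} ∪ {J ∪ {n+1} : J ⊆ [n]} has exactly n+1 elements, and the number of maximal nested sets is Σ_{i=0}^{n} n!/i!. -/
namespace MNS

def chainSet (n : ℕ) {k : ℕ} (f : Fin k → Fin n) (j : ℕ) : Finset (Fin (n+1)) :=
  Finset.univ.filter (fun x => ∀ t : Fin k, (t : ℕ) < j → x ≠ (f t).castSucc)

def Phi (n k : ℕ) (f : Fin k → Fin n) : Set (Finset (Fin (n+1))) :=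
  {S | (∃ j ≤ k, S = chainSet n f j) ∨ ∃ i : Fin n, (∀ t, f t ≠ i) ∧ S = {Fin.castSucc i}}

variable {n k : ℕ} {f : Fin k → Fin n}

lemma mem_chainSet {x : Fin (n+1)} {j : ℕ} :
    x ∈ chainSet n f j ↔ ∀ t : Fin k, (t : ℕ) < j → x ≠ (f t).castSucc := by
  simp [chainSet]

lemma last_mem_chainSet {j : ℕ} : Fin.last n ∈ chainSet n f j := by
  rw [mem_chainSet]; intro t _
  exact (Fin.castSucc_lt_last (f t)).ne'

lemma chainSet_zero : chainSet n f 0 = Finset.univ := by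
  ext x; simp [mem_chainSet]

lemma chainSet_anti {j j' : ℕ} (h : j ≤ j') : chainSet n f j' ⊆ chainSet n f j := by
  intro x hx
  rw [mem_chainSet] at hx ⊢
  exact fun t ht => hx t (lt_of_lt_of_le ht h)

lemma chainSet_succ {j : ℕ} (hj : j < k) :
    chainSet n f (j+1) = (chainSet n f j).erase (f ⟨j, hj⟩).castSucc := by
  ext x
  simp only [Finset.mem_erase, mem_chainSet]
  constructor
  · intro h
    refine ⟨h ⟨j, hj⟩ (Nat.lt_succ_self j), fun t ht => h t (Nat.lt_succ_of_lt ht)⟩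
  · rintro ⟨hne, h⟩ t ht
    rcases Nat.lt_succ_iff_lt_or_eq.mp ht with ht' | ht'
    · exact h t ht'
    · intro hx; apply hne; rw [hx]
      have : t = ⟨j, hj⟩ := Fin.ext ht'
      rw [this]

lemma castSucc_mem_chainSet_iff {i : Fin n} {j : ℕ} :
    (Fin.castSucc i ∈ chainSet n f j) ↔ ∀ t : Fin k, (t : ℕ) < j → f t ≠ i := by
  rw [mem_chainSet]
  constructor
  · intro h t ht he; exact h t ht (by rw [he])
  · intro h t ht he; exact h t ht (Fin.castSucc_injective n he).symm

lemma card_chainSet (hf : Function.Injective f) {j : ℕ} (hj : j ≤ k) :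
    (chainSet n f j).card = n + 1 - j := by
  induction j with
  | zero => simp [chainSet_zero]
  | succ j ih =>
    have hjk : j < k := hj
    rw [chainSet_succ hjk, Finset.card_erase_of_mem, ih (le_of_lt hjk)]
    · omega
    · rw [castSucc_mem_chainSet_iff]
      intro t ht he
      have : t = ⟨j, hjk⟩ := hf he
      rw [this] at ht
      exact absurd ht (lt_irrefl j)

lemma nested_of_shape (N : Set (Finset (Fin (n+1))))
    (hsub : N ⊆ Ihat n)
    (huniv : Finset.univ ∈ N)
    (hchain : ∀ S ∈ N, ∀ T ∈ N, Fin.last n ∈ S → Fin.last n ∈ T → S ⊆ T ∨ T ⊆ S)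
    (hsing : ∀ S ∈ N, Fin.last n ∉ S → ∀ T ∈ N, Fin.last n ∈ T → S ⊆ T) :
    IsNestedSet n N := by
  have singform : ∀ S ∈ N, Fin.last n ∉ S → ∃ i : Fin (n+1), i ≠ Fin.last n ∧ S = {i} := by
    intro S hS hlast
    rcases hsub hS with h | h
    · exact h
    · exact absurd h hlast
  refine ⟨hsub, ?_, ?_, ?_⟩
  · intro I hI J hJ
    by_cases hIl : Fin.last n ∈ I
    · by_cases hJl : Fin.last n ∈ J
      · rcases hchain I hI J hJ hIl hJl with h | h
        · exact Or.inl h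
        · exact Or.inr (Or.inl h)
      · exact Or.inr (Or.inl (hsing J hJ hJl I hI hIl))
    · by_cases hJl : Fin.last n ∈ J
      · exact Or.inl (hsing I hI hIl J hJ hJl)
      · obtain ⟨a, _, ha⟩ := singform I hI hIl
        obtain ⟨b, _, hb⟩ := singform J hJ hJl
        by_cases hab : a = b
        · subst ha hb hab; exact Or.inl (subset_refl _)
        · right; right
          subst ha hb
          simp [Finset.inter_comm, Finset.singleton_inter_of_notMem,
            Finset.notMem_singleton, hab]
  · intro C hC hcard hdisj hIhat
    have hnolast : ∀ S ∈ C, Fin.last n ∉ S := by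
      intro S hS hSl
      obtain ⟨T, hT, hTS⟩ : ∃ T ∈ C, T ≠ S := by
        have := Finset.one_lt_card.mp hcard
        obtain ⟨a, ha, b, hb, hab⟩ := this
        by_cases h : a = S
        · exact ⟨b, hb, by rw [← h]; exact fun e => hab e.symm⟩
        · exact ⟨a, ha, h⟩
      have hdTS := hdisj T hT S hS hTS
      by_cases hTl : Fin.last n ∈ T
      · have : Fin.last n ∈ T ∩ S := Finset.mem_inter.mpr ⟨hTl, hSl⟩
        rw [hdTS] at this; exact absurd this (Finset.notMem_empty _)
      · obtain ⟨a, _, ha⟩ := singform T (hC hT) hTl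
        have hsub' : T ⊆ S := hsing T (hC hT) hTl S (hC hS) hSl
        have : a ∈ T ∩ S := Finset.mem_inter.mpr ⟨by simp [ha], hsub' (by simp [ha])⟩
        rw [hdTS] at this; exact absurd this (Finset.notMem_empty _)
    obtain ⟨A, hA, B, hB, hAB⟩ := Finset.one_lt_card.mp hcard
    obtain ⟨a, hane, ha⟩ := singform A (hC hA) (hnolast A hA)
    obtain ⟨b, hbne, hb⟩ := singform B (hC hB) (hnolast B hB)
    have hab : a ≠ b := by
      intro h; apply hAB; rw [ha, hb, h]
    have hasup : a ∈ C.sup id := Finset.le_sup (f := id) hA (by simp [ha])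
    have hbsup : b ∈ C.sup id := Finset.le_sup (f := id) hB (by simp [hb])
    rcases hIhat with ⟨i, _, hi⟩ | h
    · rw [hi] at hasup hbsup
      simp only [Finset.mem_singleton] at hasup hbsup
      exact hab (hasup.trans hbsup.symm)
    · rw [Finset.mem_sup] at h
      obtain ⟨S, hS, hSl⟩ := h
      exact hnolast S hS hSl
  · intro I hI hmax
    have : I = Finset.univ := hmax Finset.univ (Or.inr (Finset.mem_univ _)) (Finset.subset_univ _)
    rw [this]; exact huniv

lemma phi_last_cases {S : Finset (Fin (n+1))} (hS : S ∈ Phi n k f) :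
    (Fin.last n ∈ S ∧ ∃ j ≤ k, S = chainSet n f j) ∨
    (Fin.last n ∉ S ∧ ∃ i : Fin n, (∀ t, f t ≠ i) ∧ S = {Fin.castSucc i}) := by
  rcases hS with ⟨j, hj, rfl⟩ | ⟨i, hi, rfl⟩
  · exact Or.inl ⟨last_mem_chainSet, j, hj, rfl⟩
  · refine Or.inr ⟨?_, i, hi, rfl⟩
    simp only [Finset.mem_singleton]
    exact fun h => (Fin.castSucc_lt_last i).ne' h

lemma singleton_subset_chainSet {i : Fin n} (hi : ∀ t, f t ≠ i) {j : ℕ} :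
    ({Fin.castSucc i} : Finset (Fin (n+1))) ⊆ chainSet n f j := by
  simp only [Finset.singleton_subset_iff]
  exact castSucc_mem_chainSet_iff.mpr (fun t _ => hi t)

lemma phi_nested : IsNestedSet n (Phi n k f) := by
  apply nested_of_shape
  · intro S hS
    rcases phi_last_cases hS with ⟨hl, _⟩ | ⟨_, i, _, rfl⟩
    · exact Or.inr hl
    · exact Or.inl ⟨Fin.castSucc i, (Fin.castSucc_lt_last i).ne, rfl⟩
  · exact Or.inl ⟨0, Nat.zero_le _, chainSet_zero.symm⟩
  · intro S hS T hT hSl hTl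
    rcases phi_last_cases hS with ⟨_, j, _, rfl⟩ | ⟨h, _⟩
    · rcases phi_last_cases hT with ⟨_, j', _, rfl⟩ | ⟨h, _⟩
      · rcases le_total j j' with h | h
        · exact Or.inr (chainSet_anti h)
        · exact Or.inl (chainSet_anti h)
      · exact absurd hTl h
    · exact absurd hSl h
  · intro S hS hSl T hT hTl
    rcases phi_last_cases hS with ⟨h, _⟩ | ⟨_, i, hi, rfl⟩
    · exact absurd h hSl
    · rcases phi_last_cases hT with ⟨_, j, _, rfl⟩ | ⟨h, _⟩
      · exact singleton_subset_chainSet hi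
      · exact absurd hTl h

def PhiFinset (n k : ℕ) (f : Fin k → Fin n) : Finset (Finset (Fin (n+1))) :=
  (Finset.range (k+1)).image (chainSet n f) ∪
    (Finset.univ.filter (fun i : Fin n => ∀ t, f t ≠ i)).image (fun i => {Fin.castSucc i})

lemma coe_PhiFinset : (↑(PhiFinset n k f) : Set (Finset (Fin (n+1)))) = Phi n k f := by
  ext S
  simp only [PhiFinset, Finset.coe_union, Set.mem_union, Finset.coe_image, Set.mem_image,
    Finset.mem_coe, Finset.mem_range, Finset.mem_filter, Finset.mem_univ, true_and, Phi,
    Set.mem_setOf_eq, Nat.lt_succ_iff]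
  constructor
  · rintro (⟨j, hj, rfl⟩ | ⟨i, hi, rfl⟩)
    · exact Or.inl ⟨j, hj, rfl⟩
    · exact Or.inr ⟨i, hi, rfl⟩
  · rintro (⟨j, hj, rfl⟩ | ⟨i, hi, rfl⟩)
    · exact Or.inl ⟨j, hj, rfl⟩
    · exact Or.inr ⟨i, hi, rfl⟩

lemma card_PhiFinset (hf : Function.Injective f) (hk : k ≤ n) :
    (PhiFinset n k f).card = n + 1 := by
  have hdisj : Disjoint ((Finset.range (k+1)).image (chainSet n f))
      ((Finset.univ.filter (fun i : Fin n => ∀ t, f t ≠ i)).image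
        (fun i => ({Fin.castSucc i} : Finset (Fin (n+1))))) := by
    rw [Finset.disjoint_left]
    rintro S hS hS'
    simp only [Finset.mem_image, Finset.mem_range, Nat.lt_succ_iff] at hS hS'
    obtain ⟨j, hj, rfl⟩ := hS
    obtain ⟨i, hi, he⟩ := hS'
    have h1 : Fin.last n ∈ chainSet n f j := last_mem_chainSet
    rw [← he] at h1
    simp only [Finset.mem_singleton] at h1
    exact (Fin.castSucc_lt_last i).ne' h1
  rw [PhiFinset, Finset.card_union_of_disjoint hdisj]
  have h1 : ((Finset.range (k+1)).image (chainSet n f)).card = k + 1 := by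
    rw [Finset.card_image_of_injOn, Finset.card_range]
    intro a ha b hb hab
    simp only [Finset.mem_coe, Finset.mem_range, Nat.lt_succ_iff] at ha hb
    have := congrArg Finset.card hab
    rw [card_chainSet hf ha, card_chainSet hf hb] at this
    omega
  have h2 : ((Finset.univ.filter (fun i : Fin n => ∀ t, f t ≠ i)).image
      (fun i => ({Fin.castSucc i} : Finset (Fin (n+1))))).card = n - k := by
    rw [Finset.card_image_of_injective _ (fun a b h => by
      simpa [Finset.singleton_inj] using (Fin.castSucc_injective n (Finset.singleton_inj.mp h)))]
    have : (Finset.univ.filter (fun i : Fin n => ∀ t, f t ≠ i)) =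
        Finset.univ \ Finset.univ.image f := by
      ext i
      simp [eq_comm]
    rw [this, Finset.card_sdiff_of_subset (Finset.subset_univ _), Finset.card_image_of_injective _ hf]
    simp
  rw [h1, h2]; omega

lemma ncard_Phi (hf : Function.Injective f) (hk : k ≤ n) :
    (Phi n k f).ncard = n + 1 := by
  rw [← coe_PhiFinset, Set.ncard_coe_finset, card_PhiFinset hf hk]

-- appended to main.lean inside namespace MNS for testing
section Dichotomy
variable {n : ℕ}

lemma univ_mem_of_nested {N : Set (Finset (Fin (n+1)))} (hN : IsNestedSet n N) :
    Finset.univ ∈ N := by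
  apply hN.2.2.2 Finset.univ (Or.inr (Finset.mem_univ _))
  intro J _ hJ
  exact (Finset.univ_subset_iff.mp hJ).symm

lemma chain_of_nested {N : Set (Finset (Fin (n+1)))} (hN : IsNestedSet n N) :
    ∀ S ∈ N, ∀ T ∈ N, Fin.last n ∈ S → Fin.last n ∈ T → S ⊆ T ∨ T ⊆ S := by
  intro S hS T hT hSl hTl
  rcases hN.2.1 S hS T hT with h | h | h
  · exact Or.inl h
  · exact Or.inr h
  · exfalso
    have : Fin.last n ∈ S ∩ T := Finset.mem_inter.mpr ⟨hSl, hTl⟩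
    rw [h] at this
    exact absurd this (Finset.notMem_empty _)

lemma sing_mem_of_nested {N : Set (Finset (Fin (n+1)))} (hN : IsNestedSet n N)
    {x : Fin (n+1)} (hx : ({x} : Finset (Fin (n+1))) ∈ N) (hxl : x ≠ Fin.last n) :
    ∀ T ∈ N, Fin.last n ∈ T → x ∈ T := by
  intro T hT hTl
  by_contra hxT
  have hne : ({x} : Finset (Fin (n+1))) ≠ T := by
    intro h; rw [← h] at hTl
    simp only [Finset.mem_singleton] at hTl
    exact hxl hTl.symm
  set C : Finset (Finset (Fin (n+1))) := insert {x} {T} with hC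
  have hCsub : ↑C ⊆ N := by
    intro S hS
    simp only [hC, Finset.coe_insert, Set.mem_insert_iff, Finset.coe_singleton,
      Set.mem_singleton_iff] at hS
    rcases hS with rfl | rfl
    · exact hx
    · exact hT
  have hCcard : 2 ≤ C.card := by
    rw [hC, Finset.card_insert_of_notMem (by simpa using hne), Finset.card_singleton]
  have hCdisj : ∀ I ∈ C, ∀ J ∈ C, I ≠ J → I ∩ J = ∅ := by
    intro I hI J hJ hIJ
    simp only [hC, Finset.mem_insert, Finset.mem_singleton] at hI hJ
    rcases hI with rfl | rfl <;> rcases hJ with rfl | rfl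
    · exact absurd rfl hIJ
    · exact Finset.singleton_inter_of_notMem hxT
    · rw [Finset.inter_comm]; exact Finset.singleton_inter_of_notMem hxT
    · exact absurd rfl hIJ
  apply hN.2.2.1 C hCsub hCcard hCdisj
  right
  rw [Finset.mem_sup]
  exact ⟨T, by simp [hC], hTl⟩

lemma nested_dichotomy {N : Set (Finset (Fin (n+1)))} (hN : IsNestedSet n N) :
    (∃ k ≤ n, ∃ f : Fin k → Fin n, Function.Injective f ∧ N = Phi n k f) ∨
    (∃ N', IsNestedSet n N' ∧ N ⊂ N') := by
  classical
  have huniv := univ_mem_of_nested hN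
  have hchain := chain_of_nested hN
  have hsingsub : ∀ x : Fin (n+1), ({x} : Finset (Fin (n+1))) ∈ N → x ≠ Fin.last n → ∀ T ∈ N, Fin.last n ∈ T → x ∈ T := fun x hx hxl => sing_mem_of_nested hN hx hxl
  have singform : ∀ S ∈ N, Fin.last n ∉ S → ∃ a : Fin (n+1), a ≠ Fin.last n ∧ S = {a} := by
    intro S hS hlast
    rcases hN.1 hS with h | h
    · exact h
    · exact absurd h hlast
  have hsingN : ∀ S ∈ N, Fin.last n ∉ S → ∀ T ∈ N, Fin.last n ∈ T → S ⊆ T := by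
    intro S hS hSl T hT hTl
    obtain ⟨a, hane, rfl⟩ := singform S hS hSl
    simp only [Finset.singleton_subset_iff]
    exact hsingsub a hS hane T hT hTl
  -- case (i): a missing singleton
  by_cases hI : ∃ x : Fin (n+1), x ≠ Fin.last n ∧ ({x} : Finset (Fin (n+1))) ∉ N ∧
      (∀ T ∈ N, Fin.last n ∈ T → x ∈ T)
  · obtain ⟨x, hxl, hxN, hxT⟩ := hI
    refine Or.inr ⟨insert {x} N, ?_, Set.ssubset_insert hxN⟩
    apply nested_of_shape
    · rintro S (rfl | hS)
      · exact Or.inl ⟨x, hxl, rfl⟩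
      · exact hN.1 hS
    · exact Set.mem_insert_of_mem _ huniv
    · rintro S (rfl | hS) T hT hSl hTl
      · exfalso; exact hxl ((by simpa using hSl : Fin.last n = x)).symm
      · rcases hT with rfl | hT
        · exfalso; exact hxl ((by simpa using hTl : Fin.last n = x)).symm
        · exact hchain S hS T hT hSl hTl
    · rintro S (rfl | hS) hSl T (rfl | hT) hTl
      · exfalso; exact hxl ((by simpa using hTl : Fin.last n = x)).symm
      · simp only [Finset.singleton_subset_iff]
        exact hxT T hT hTl
      · exfalso; exact hxl ((by simpa using hTl : Fin.last n = x)).symm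
      · exact hsingN S hS hSl T hT hTl
  -- case (ii): a gap in the chain
  by_cases hII : ∃ S ∈ N, ∃ T ∈ N, Fin.last n ∈ S ∧ S ⊂ T ∧ 2 ≤ (T \ S).card ∧
      (∀ U ∈ N, Fin.last n ∈ U → S ⊆ U → U ⊆ T → U = S ∨ U = T)
  · obtain ⟨S, hS, T, hT, hSl, hST, hcard2, hbetween⟩ := hII
    obtain ⟨x, hxTS⟩ : ∃ x, x ∈ T \ S := by
      apply Finset.Nonempty.exists_mem
      rw [← Finset.card_pos]; omega
    rw [Finset.mem_sdiff] at hxTS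
    obtain ⟨hxT, hxS⟩ := hxTS
    have hxl : x ≠ Fin.last n := fun h => hxS (h ▸ hSl)
    set S' := insert x S with hS'
    have hS'l : Fin.last n ∈ S' := Finset.mem_insert_of_mem hSl
    have hS'T : S' ⊆ T := Finset.insert_subset hxT hST.subset
    have hSS' : S ⊂ S' := Finset.ssubset_insert hxS
    have hS'neT : S' ≠ T := by
      intro h
      have h1 : S'.card = S.card + 1 := Finset.card_insert_of_notMem hxS
      have h2 : (T \ S).card = T.card - S.card := Finset.card_sdiff_of_subset hST.subset
      have h3 : S.card ≤ T.card := Finset.card_le_card hST.subset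
      have h4 : S'.card = T.card := by rw [h]
      omega
    have hS'N : S' ∉ N := by
      intro h
      rcases hbetween S' h hS'l hSS'.subset hS'T with h' | h'
      · exact hSS'.ne' h'
      · exact hS'neT h'
    refine Or.inr ⟨insert S' N, ?_, Set.ssubset_insert hS'N⟩
    apply nested_of_shape
    · rintro U (rfl | hU)
      · exact Or.inr hS'l
      · exact hN.1 hU
    · exact Set.mem_insert_of_mem _ huniv
    · have key : ∀ V ∈ N, Fin.last n ∈ V → S' ⊆ V ∨ V ⊆ S' := by
        intro V hV hVl
        have hTl : Fin.last n ∈ T := hST.subset hSl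
        rcases hchain S hS V hV hSl hVl with h1 | h1
        · rcases hchain V hV T hT hVl hTl with h2 | h2
          · rcases hbetween V hV hVl h1 h2 with rfl | rfl
            · exact Or.inr hSS'.subset
            · exact Or.inl hS'T
          · exact Or.inl (hS'T.trans h2)
        · exact Or.inr (h1.trans hSS'.subset)
      rintro U (rfl | hU) V hV hUl hVl
      · rcases hV with rfl | hV
        · exact Or.inl (subset_refl _)
        · exact key V hV hVl
      · rcases hV with rfl | hV
        · rcases key U hU hUl with h | h
          · exact Or.inr h
          · exact Or.inl h
        · exact hchain U hU V hV hUl hVl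
    · rintro U (rfl | hU) hUl V hV hVl
      · exact absurd hS'l hUl
      · rcases hV with rfl | hV
        · exact (hsingN U hU hUl S hS hSl).trans hSS'.subset
        · exact hsingN U hU hUl V hV hVl
  -- case (iii): N is saturated, hence of the required form
  push_neg at hI
  set Nf := (Set.toFinite N).toFinset with hNf
  set 𝒞 := Nf.filter (fun S => Fin.last n ∈ S) with h𝒞
  have mem𝒞 : ∀ {S : Finset (Fin (n+1))}, S ∈ 𝒞 ↔ S ∈ N ∧ Fin.last n ∈ S := by
    intro S
    simp [h𝒞, hNf, Finset.mem_filter, Set.Finite.mem_toFinset]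
  have huniv𝒞 : Finset.univ ∈ 𝒞 := mem𝒞.mpr ⟨huniv, Finset.mem_univ _⟩
  have uniq : ∀ S ∈ 𝒞, ∀ T ∈ 𝒞, S.card = T.card → S = T := by
    intro S hS T hT hcard
    obtain ⟨hSN, hSl⟩ := mem𝒞.mp hS
    obtain ⟨hTN, hTl⟩ := mem𝒞.mp hT
    rcases hchain S hSN T hTN hSl hTl with h | h
    · exact Finset.eq_of_subset_of_card_le h (le_of_eq hcard.symm)
    · exact (Finset.eq_of_subset_of_card_le h (le_of_eq hcard)).symm
  have h𝒞imne : (𝒞.image Finset.card).Nonempty := ⟨_, Finset.mem_image_of_mem _ huniv𝒞⟩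
  set m := (𝒞.image Finset.card).min' h𝒞imne with hm
  obtain ⟨S₀, hS₀, hS₀card⟩ : ∃ S ∈ 𝒞, S.card = m := by
    have := Finset.min'_mem _ h𝒞imne
    rw [Finset.mem_image] at this
    obtain ⟨S, hS, hScard⟩ := this
    exact ⟨S, hS, hScard⟩
  have hm_le : ∀ S ∈ 𝒞, m ≤ S.card := by
    intro S hS
    exact Finset.min'_le _ _ (Finset.mem_image_of_mem _ hS)
  have hm1 : 1 ≤ m := by
    rw [← hS₀card]
    rw [Nat.succ_le_iff, Finset.card_pos]
    exact ⟨_, (mem𝒞.mp hS₀).2⟩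
  have hcardle : ∀ S : Finset (Fin (n+1)), S.card ≤ n + 1 := by
    intro S
    have := Finset.card_le_univ S
    simpa using this
  have hmn : m ≤ n + 1 := hS₀card ▸ hcardle S₀
  have hsat : ∀ c, m ≤ c → c ≤ n + 1 → ∃ S ∈ 𝒞, S.card = c := by
    intro c hc1 hc2
    by_contra hno
    push_neg at hno
    have hmc : m < c := by
      rcases lt_or_eq_of_le hc1 with h | h
      · exact h
      · exact absurd (h ▸ hS₀card) (hno S₀ hS₀)
    have hbig : Finset.univ ∈ 𝒞.filter (fun S => c ≤ S.card) := by
      rw [Finset.mem_filter]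
      refine ⟨huniv𝒞, ?_⟩
      simp [hc2]
    obtain ⟨T, hTbig, hTmin⟩ := Finset.exists_min_image (𝒞.filter (fun S => c ≤ S.card))
      Finset.card ⟨_, hbig⟩
    rw [Finset.mem_filter] at hTbig
    obtain ⟨hT𝒞, hTc⟩ := hTbig
    have hTc' : c < T.card := lt_of_le_of_ne hTc (fun h => hno T hT𝒞 h.symm)
    have hsmall : S₀ ∈ 𝒞.filter (fun S => S.card < c) := by
      rw [Finset.mem_filter]
      exact ⟨hS₀, hS₀card ▸ hmc⟩
    obtain ⟨S, hSsmall, hSmax⟩ := Finset.exists_max_image (𝒞.filter (fun S => S.card < c))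
      Finset.card ⟨_, hsmall⟩
    rw [Finset.mem_filter] at hSsmall
    obtain ⟨hS𝒞, hSc⟩ := hSsmall
    obtain ⟨hSN, hSl⟩ := mem𝒞.mp hS𝒞
    obtain ⟨hTN, hTl⟩ := mem𝒞.mp hT𝒞
    have hsub : S ⊆ T := by
      rcases hchain S hSN T hTN hSl hTl with h | h
      · exact h
      · have := Finset.card_le_card h
        omega
    have hST : S ⊂ T := hsub.ssubset_of_ne (by
      intro h; rw [h] at hSc; omega)
    have hcard2 : 2 ≤ (T \ S).card := by
      rw [Finset.card_sdiff_of_subset hsub]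
      omega
    apply hII
    refine ⟨S, hSN, T, hTN, hSl, hST, hcard2, ?_⟩
    intro U hU hUl h1 h2
    have hU𝒞 : U ∈ 𝒞 := mem𝒞.mpr ⟨hU, hUl⟩
    by_cases hUc : U.card < c
    · left
      have : U.card ≤ S.card := hSmax U (Finset.mem_filter.mpr ⟨hU𝒞, hUc⟩)
      exact (Finset.eq_of_subset_of_card_le h1 this).symm
    · right
      have : T.card ≤ U.card := hTmin U (Finset.mem_filter.mpr ⟨hU𝒞, by omega⟩)
      exact Finset.eq_of_subset_of_card_le h2 this
  set k := n + 1 - m with hk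
  have hkn : k ≤ n := by omega
  have hCex : ∀ j : ℕ, ∃ S : Finset (Fin (n+1)), j ≤ k →
      (S ∈ N ∧ Fin.last n ∈ S ∧ S.card = n + 1 - j) := by
    intro j
    by_cases hj : j ≤ k
    · obtain ⟨S, hS, hScard⟩ := hsat (n + 1 - j) (by omega) (by omega)
      obtain ⟨h1, h2⟩ := mem𝒞.mp hS
      exact ⟨S, fun _ => ⟨h1, h2, hScard⟩⟩
    · exact ⟨∅, fun h => absurd h hj⟩
  choose Cc hCc using hCex
  have CcN : ∀ j ≤ k, Cc j ∈ N := fun j hj => (hCc j hj).1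
  have Ccl : ∀ j ≤ k, Fin.last n ∈ Cc j := fun j hj => (hCc j hj).2.1
  have Cccard : ∀ j ≤ k, (Cc j).card = n + 1 - j := fun j hj => (hCc j hj).2.2
  have Cc𝒞 : ∀ j ≤ k, Cc j ∈ 𝒞 := fun j hj => mem𝒞.mpr ⟨CcN j hj, Ccl j hj⟩
  have hCuniq : ∀ j ≤ k, ∀ S ∈ N, Fin.last n ∈ S → S.card = n + 1 - j → S = Cc j := by
    intro j hj S hS hSl hScard
    exact uniq S (mem𝒞.mpr ⟨hS, hSl⟩) (Cc j) (Cc𝒞 j hj) (by rw [hScard, Cccard j hj])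
  have hCc0 : Cc 0 = Finset.univ := by
    refine (hCuniq 0 (Nat.zero_le _) Finset.univ huniv (Finset.mem_univ _) ?_).symm
    simp
  have hCanti : ∀ j j' : ℕ, j ≤ j' → j' ≤ k → Cc j' ⊆ Cc j := by
    intro j j' hjj hj'k
    have hjk : j ≤ k := le_trans hjj hj'k
    rcases hchain (Cc j') (CcN j' hj'k) (Cc j) (CcN j hjk) (Ccl j' hj'k) (Ccl j hjk) with h | h
    · exact h
    · have := Finset.card_le_card h
      rw [Cccard j hjk, Cccard j' hj'k] at this
      have : j = j' := by omega
      rw [this]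
  have hdiff : ∀ j, j < k → ∃ i : Fin n, Cc j \ Cc (j+1) = {Fin.castSucc i} := by
    intro j hj
    have hsub := hCanti j (j+1) (Nat.le_succ j) hj
    have hcard1 : (Cc j \ Cc (j+1)).card = 1 := by
      rw [Finset.card_sdiff_of_subset hsub, Cccard j (le_of_lt hj), Cccard (j+1) hj]
      omega
    obtain ⟨a, ha⟩ := Finset.card_eq_one.mp hcard1
    have hamem : a ∈ Cc j \ Cc (j+1) := ha ▸ Finset.mem_singleton_self a
    have hane : a ≠ Fin.last n := by
      intro h
      rw [Finset.mem_sdiff] at hamem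
      exact hamem.2 (h ▸ Ccl (j+1) hj)
    refine ⟨a.castPred hane, ?_⟩
    rw [Fin.castSucc_castPred]
    exact ha
  have hfex : ∀ t : Fin k, ∃ i : Fin n, Cc t \ Cc (t+1) = {Fin.castSucc i} :=
    fun t => hdiff t t.isLt
  choose f hf using hfex
  have hchainEq : ∀ j, j ≤ k → chainSet n f j = Cc j := by
    intro j
    induction j with
    | zero => intro _; rw [chainSet_zero, hCc0]
    | succ j ih =>
      intro hj
      have hjk : j < k := hj
      rw [chainSet_succ hjk, ih (le_of_lt hjk)]
      have hfj : Cc j \ Cc (j+1) = {Fin.castSucc (f ⟨j, hjk⟩)} := hf ⟨j, hjk⟩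
      ext x
      simp only [Finset.mem_erase]
      constructor
      · rintro ⟨hxne, hxj⟩
        by_contra hxj1
        have hx : x ∈ Cc j \ Cc (j+1) := Finset.mem_sdiff.mpr ⟨hxj, hxj1⟩
        rw [hfj] at hx
        exact hxne (Finset.mem_singleton.mp hx)
      · intro hx
        refine ⟨?_, hCanti j (j+1) (Nat.le_succ j) hj hx⟩
        intro he
        have h1 : Fin.castSucc (f ⟨j, hjk⟩) ∈ Cc j \ Cc (j+1) :=
          hfj ▸ Finset.mem_singleton_self _
        rw [← he] at h1
        rw [Finset.mem_sdiff] at h1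
        exact h1.2 hx
  have hmemdiff : ∀ t : Fin k, Fin.castSucc (f t) ∈ Cc t \ Cc (t+1) :=
    fun t => (hf t) ▸ Finset.mem_singleton_self _
  have hinj : Function.Injective f := by
    have hlt : ∀ t s : Fin k, t < s → f t ≠ f s := by
      intro t s hts he
      have h1 := hmemdiff t
      have h2 := hmemdiff s
      rw [Finset.mem_sdiff] at h1 h2
      have hsub : Cc (s : ℕ) ⊆ Cc (t + 1 : ℕ) :=
        hCanti (t+1) s (by exact hts) (le_of_lt s.isLt)
      have : Fin.castSucc (f s) ∈ Cc ((t : ℕ) + 1) := hsub h2.1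
      rw [← he] at this
      exact h1.2 this
    intro t s he
    rcases lt_trichotomy t s with h | h | h
    · exact absurd he (hlt t s h)
    · exact h
    · exact absurd he.symm (hlt s t h)
  refine Or.inl ⟨k, hkn, f, hinj, ?_⟩
  ext S
  constructor
  · intro hS
    by_cases hSl : Fin.last n ∈ S
    · have hmle : m ≤ S.card := hm_le S (mem𝒞.mpr ⟨hS, hSl⟩)
      have hcle : S.card ≤ n + 1 := hcardle S
      refine Or.inl ⟨n + 1 - S.card, by omega, ?_⟩
      rw [hchainEq _ (by omega)]
      exact hCuniq (n + 1 - S.card) (by omega) S hS hSl (by omega)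
    · obtain ⟨a, hane, rfl⟩ := singform S hS hSl
      refine Or.inr ⟨a.castPred hane, ?_, by rw [Fin.castSucc_castPred]⟩
      intro t he
      have h1 := hmemdiff t
      rw [Finset.mem_sdiff] at h1
      apply h1.2
      have : Fin.castSucc (f t) = a := by rw [he, Fin.castSucc_castPred]
      rw [this]
      exact hsingsub a hS hane (Cc (t+1)) (CcN (t+1) t.isLt) (Ccl (t+1) t.isLt)
  · rintro (⟨j, hj, rfl⟩ | ⟨i, hi, rfl⟩)
    · rw [hchainEq j hj]
      exact CcN j hj
    · by_contra hnotin
      have hne : Fin.castSucc i ≠ Fin.last n := (Fin.castSucc_lt_last i).ne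
      obtain ⟨T, hTN, hTl, hxT⟩ := hI (Fin.castSucc i) hne hnotin
      apply hxT
      have hmle : m ≤ T.card := hm_le T (mem𝒞.mpr ⟨hTN, hTl⟩)
      have hcle : T.card ≤ n + 1 := hcardle T
      have hTeq : T = Cc (n + 1 - T.card) := hCuniq _ (by omega) T hTN hTl (by omega)
      rw [hTeq, ← hchainEq _ (by omega : n + 1 - T.card ≤ k)]
      exact castSucc_mem_chainSet_iff.mpr (fun t _ => hi t)


end Dichotomy

section Final
variable {n : ℕ}

lemma nested_le_form {N : Set (Finset (Fin (n+1)))} (hN : IsNestedSet n N) :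
    ∃ k ≤ n, ∃ f : Fin k → Fin n, Function.Injective f ∧ N ⊆ Phi n k f := by
  set u := Fintype.card (Finset (Fin (n+1))) with hu
  have hNcard : ∀ M : Set (Finset (Fin (n+1))), M.ncard ≤ u := by
    intro M
    calc M.ncard ≤ (Set.univ : Set (Finset (Fin (n+1)))).ncard :=
          Set.ncard_le_ncard (Set.subset_univ M) Set.finite_univ
      _ = u := by rw [Set.ncard_univ, Nat.card_eq_fintype_card]
  have key : ∀ d (N : Set (Finset (Fin (n+1)))), IsNestedSet n N → u - N.ncard ≤ d →
      ∃ k ≤ n, ∃ f : Fin k → Fin n, Function.Injective f ∧ N ⊆ Phi n k f := by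
    intro d
    induction d with
    | zero =>
      intro N hN hle
      rcases nested_dichotomy hN with ⟨k, hk, f, hf, rfl⟩ | ⟨N', hN', hNN'⟩
      · exact ⟨k, hk, f, hf, subset_rfl⟩
      · exfalso
        have h1 : N.ncard < N'.ncard := Set.ncard_lt_ncard hNN' (Set.toFinite N')
        have h2 := hNcard N'
        omega
    | succ d ih =>
      intro N hN hle
      rcases nested_dichotomy hN with ⟨k, hk, f, hf, rfl⟩ | ⟨N', hN', hNN'⟩
      · exact ⟨k, hk, f, hf, subset_rfl⟩
      · have h1 : N.ncard < N'.ncard := Set.ncard_lt_ncard hNN' (Set.toFinite N')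
        have h2 := hNcard N'
        obtain ⟨k, hk, f, hf, hsub⟩ := ih N' hN' (by omega)
        exact ⟨k, hk, f, hf, hNN'.subset.trans hsub⟩
  exact key u N hN (Nat.sub_le _ _)

lemma phi_finite {k : ℕ} {f : Fin k → Fin n} : (Phi n k f).Finite := by
  rw [← coe_PhiFinset]
  exact (PhiFinset n k f).finite_toSet

lemma phi_max {k : ℕ} {f : Fin k → Fin n} (hf : Function.Injective f) (hk : k ≤ n) :
    IsMaxNestedSet n (Phi n k f) := by
  refine ⟨phi_nested, ?_⟩
  intro N' hN' hsub
  obtain ⟨k', hk', f', hf', hsub'⟩ := nested_le_form hN'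
  have h1 : Phi n k f ⊆ Phi n k' f' := hsub.trans hsub'
  have heq : Phi n k f = Phi n k' f' := by
    apply Set.eq_of_subset_of_ncard_le h1 ?_ phi_finite
    rw [ncard_Phi hf' hk', ncard_Phi hf hk]
  exact subset_antisymm (hsub'.trans heq.symm.subset) hsub

lemma max_form {N : Set (Finset (Fin (n+1)))} (hN : IsMaxNestedSet n N) :
    ∃ k ≤ n, ∃ f : Fin k → Fin n, Function.Injective f ∧ N = Phi n k f := by
  rcases nested_dichotomy hN.1 with h | ⟨N', hN', hss⟩
  · exact h
  · exact absurd (hN.2 N' hN' hss.subset) hss.ne'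

lemma castSucc_f_mem {k : ℕ} {f : Fin k → Fin n} (hf : Function.Injective f) (t : Fin k) :
    Fin.castSucc (f t) ∈ chainSet n f (t : ℕ) ∧
      Fin.castSucc (f t) ∉ chainSet n f ((t : ℕ) + 1) := by
  constructor
  · rw [castSucc_mem_chainSet_iff]
    intro s hs he
    have : s = t := hf he
    omega
  · rw [castSucc_mem_chainSet_iff]
    push_neg
    exact ⟨t, Nat.lt_succ_self _, rfl⟩

lemma chainSet_mem_phi {k : ℕ} {f : Fin k → Fin n} {j : ℕ} (hj : j ≤ k) :
    chainSet n f j ∈ Phi n k f := Or.inl ⟨j, hj, rfl⟩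

lemma phi_eq_k {k k' : ℕ} {f : Fin k → Fin n} {f' : Fin k' → Fin n}
    (hf : Function.Injective f) (hf' : Function.Injective f')
    (hk : k ≤ n) (hk' : k' ≤ n) (h : Phi n k f = Phi n k' f') : k ≤ k' := by
  have hmem : chainSet n f k ∈ Phi n k' f' := h ▸ chainSet_mem_phi (le_refl k)
  rcases phi_last_cases hmem with ⟨_, j, hj, he⟩ | ⟨hl, _⟩
  · have := congrArg Finset.card he
    rw [card_chainSet hf (le_refl k), card_chainSet hf' hj] at this
    omega
  · exact absurd last_mem_chainSet hl

lemma phi_chainSet_eq {k k' : ℕ} {f : Fin k → Fin n} {f' : Fin k' → Fin n}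
    (hf : Function.Injective f) (hf' : Function.Injective f')
    (hk : k ≤ n) (hk' : k' ≤ n) (h : Phi n k f = Phi n k' f') {j : ℕ} (hj : j ≤ k) :
    chainSet n f j = chainSet n f' j := by
  have hkk' : k = k' := le_antisymm (phi_eq_k hf hf' hk hk' h) (phi_eq_k hf' hf hk' hk h.symm)
  have hmem : chainSet n f j ∈ Phi n k' f' := h ▸ chainSet_mem_phi hj
  rcases phi_last_cases hmem with ⟨_, j', hj', he⟩ | ⟨hl, _⟩
  · have hc := congrArg Finset.card he
    rw [card_chainSet hf hj, card_chainSet hf' hj'] at hc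
    have : j = j' := by omega
    rw [he, this]
  · exact absurd last_mem_chainSet hl

lemma phi_injective {k : ℕ} {f f' : Fin k → Fin n}
    (hf : Function.Injective f) (hf' : Function.Injective f')
    (hk : k ≤ n) (h : Phi n k f = Phi n k f') : f = f' := by
  funext t
  have h1 := castSucc_f_mem hf t
  have e1 := phi_chainSet_eq hf hf' hk hk h (le_of_lt t.isLt)
  have e2 := phi_chainSet_eq hf hf' hk hk h (t.isLt : (t : ℕ) + 1 ≤ k)
  have h2 : Fin.castSucc (f t) ∈ chainSet n f' (t : ℕ) := by rw [← e1]; exact h1.1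
  have h3 : Fin.castSucc (f t) ∉ chainSet n f' ((t : ℕ) + 1) := by rw [← e2]; exact h1.2
  rw [chainSet_succ t.isLt, Finset.mem_erase, not_and] at h3
  have h4 : ¬ (Fin.castSucc (f t) ≠ Fin.castSucc (f' ⟨(t : ℕ), t.isLt⟩)) :=
    fun hne => h3 hne h2
  push_neg at h4
  have h5 := Fin.castSucc_injective n h4
  simpa using h5

end Final

section Count

def Psi (n : ℕ) : (Σ k : Fin (n+1), (Fin (k : ℕ) ↪ Fin n)) → Set (Finset (Fin (n+1))) :=
  fun d => Phi n (d.1 : ℕ) d.2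

lemma psi_injective (n : ℕ) : Function.Injective (Psi n) := by
  rintro ⟨k, f⟩ ⟨k', f'⟩ h
  simp only [Psi] at h
  have hk : (k : ℕ) ≤ n := Nat.lt_succ_iff.mp k.isLt
  have hk' : (k' : ℕ) ≤ n := Nat.lt_succ_iff.mp k'.isLt
  have hkk : k = k' := Fin.ext (le_antisymm
    (phi_eq_k f.injective f'.injective hk hk' h)
    (phi_eq_k f'.injective f.injective hk' hk h.symm))
  subst hkk
  have hff : (f : Fin (k : ℕ) → Fin n) = f' :=
    phi_injective f.injective f'.injective hk h
  rw [show f = f' from Function.Embedding.coe_injective hff]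

lemma max_set_eq (n : ℕ) :
    {N : Set (Finset (Fin (n + 1))) | IsMaxNestedSet n N} = Set.range (Psi n) := by
  ext N
  constructor
  · intro hN
    obtain ⟨k, hk, f, hf, rfl⟩ := max_form hN
    exact ⟨⟨⟨k, Nat.lt_succ_of_le hk⟩, ⟨f, hf⟩⟩, rfl⟩
  · rintro ⟨⟨k, f⟩, rfl⟩
    exact phi_max f.injective (Nat.lt_succ_iff.mp k.isLt)

lemma count_eq (n : ℕ) :
    {N : Set (Finset (Fin (n + 1))) | IsMaxNestedSet n N}.ncard =
      ∑ i ∈ Finset.range (n + 1), n.factorial / i.factorial := by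
  rw [max_set_eq n]
  rw [← Nat.card_coe_set_eq, Nat.card_range_of_injective (psi_injective n),
    Nat.card_eq_fintype_card, Fintype.card_sigma]
  have h1 : ∀ k : Fin (n+1), Fintype.card (Fin (k : ℕ) ↪ Fin n) = n.descFactorial k := by
    intro k
    rw [Fintype.card_embedding_eq, Fintype.card_fin, Fintype.card_fin]
  simp_rw [h1]
  rw [Fin.sum_univ_eq_sum_range (fun k => n.descFactorial k) (n+1)]
  rw [show ∑ k ∈ Finset.range (n+1), n.descFactorial k =
      ∑ k ∈ Finset.range (n+1), n.factorial / (n - k).factorial from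
    Finset.sum_congr rfl (fun k hk =>
      Nat.descFactorial_eq_div (Nat.lt_succ_iff.mp (Finset.mem_range.mp hk)))]
  have := Finset.sum_range_reflect (fun i => n.factorial / i.factorial) (n+1)
  simpa using this

end Count
end MNS

/-- Every maximal nested set of `Î_n` has exactly `n+1` elements, and the number of maximal
nested sets is `Σ_{i=0}^{n} n!/i!`. -/
theorem max_nested_sets_count (n : ℕ) :
    (∀ N, IsMaxNestedSet n N → N.ncard = n + 1) ∧
    {N : Set (Finset (Fin (n + 1))) | IsMaxNestedSet n N}.ncard =
      ∑ i ∈ Finset.range (n + 1), n.factorial / i.factorial := by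
  constructor
  · intro N hN
    obtain ⟨k, hk, f, hf, rfl⟩ := MNS.max_form hN
    exact MNS.ncard_Phi hf hk
  · exact MNS.count_eq n
end

section
/- For each 0 ≤ i ≤ n and each permutation π ∈ S_n, the point τ_i(π) ∈ ℝ^{n+1}, whose j-th coordinate (j ≤ n) is π(j) if π(j) > i and 0 otherwise, and whose (n+1)-st coordinate is C(i+1,2) = i(i+1)/2, lies in the Minkowski sum Q̄_n = Σ_{S ∈ I_n} Δ_S, where I_n = {S ∪ {n+1} : S ⊆ [n], 1 ≤ |S| ≤ 2} and Δ_S = conv{e_k : k ∈ S}. -/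
open Pointwise

/-- `Δ_S = conv{e_k : k ∈ S} ⊆ ℝ^{n+1}`. -/
def simplexFace (n : ℕ) (S : Finset (Fin (n + 1))) : Set (Fin (n + 1) → ℝ) :=
  convexHull ℝ {x | ∃ i ∈ S, x = Pi.single i (1 : ℝ)}

/-- The index collection `I_n = {S ∪ {n+1} : S ⊆ [n], 1 ≤ |S| ≤ 2}`. -/
def Isets (n : ℕ) : Finset (Finset (Fin (n + 1))) :=
  Finset.univ.filter (fun S => Fin.last n ∈ S ∧ 2 ≤ S.card ∧ S.card ≤ 3)

/-- The Minkowski sum `Q̄_n = Σ_{S ∈ I_n} Δ_S ⊆ ℝ^{n+1}`. -/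
def Qbar (n : ℕ) : Set (Fin (n + 1) → ℝ) := ∑ S ∈ Isets n, simplexFace n S

lemma sum_range_succ_choose (i : ℕ) : ∑ k ∈ Finset.range i, (k + 1) = (i + 1).choose 2 := by
  induction i with
  | zero => simp
  | succ m ih =>
    rw [Finset.sum_range_succ, ih]
    simp [Nat.choose_succ_succ, Nat.choose_one_right]
    omega

/-- For `0 ≤ i ≤ n` and `π ∈ S_n`, the point `τ_i(π)`, whose `j`-th coordinate (`j ≤ n`) is
`π(j)` if `π(j) > i` and `0` otherwise, and whose last coordinate is `C(i+1,2)`, lies in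
`Q̄_n`. -/
theorem tau_mem_Qbar (n i : ℕ) (hi : i ≤ n) (π : Equiv.Perm (Fin n)) :
    (fun j : Fin (n + 1) =>
      if h : (j : ℕ) < n then
        (if i < ((π ⟨(j : ℕ), h⟩ : Fin n) : ℕ) + 1 then
          (((π ⟨(j : ℕ), h⟩ : Fin n) : ℕ) : ℝ) + 1
        else 0)
      else (((i + 1).choose 2 : ℕ) : ℝ)) ∈ Qbar n := by
  classical
  set pos : Fin n → Fin (n + 1) := fun v => (π.symm v).castSucc with hpos
  have pos_ne_last : ∀ v, pos v ≠ Fin.last n := fun v =>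
    Fin.ne_of_lt (Fin.castSucc_lt_last (π.symm v))
  have pos_inj : Function.Injective pos := fun a b h =>
    π.symm.injective (Fin.castSucc_injective n h)
  set E : Fin n × Fin n → Finset (Fin (n + 1)) :=
    fun p => {pos p.1, pos p.2, Fin.last n} with hE
  set ch : Fin n × Fin n → Fin (n + 1) :=
    fun p => if i < (p.2 : ℕ) + 1 then pos p.2 else Fin.last n with hch
  set P : Finset (Fin n × Fin n) := Finset.univ.filter (fun p => p.1 ≤ p.2) with hPdef
  have hIm : Isets n = P.image E := by
    ext S
    simp only [Isets, Finset.mem_filter, Finset.mem_univ, true_and, Finset.mem_image]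
    constructor
    · rintro ⟨hlast, h2, h3⟩
      have hT : (S.erase (Fin.last n)).card = S.card - 1 := Finset.card_erase_of_mem hlast
      have hS : S = insert (Fin.last n) (S.erase (Fin.last n)) := (Finset.insert_erase hlast).symm
      have hc : (S.erase (Fin.last n)).card = 1 ∨ (S.erase (Fin.last n)).card = 2 := by omega
      rcases hc with hc | hc
      · obtain ⟨a, ha⟩ := Finset.card_eq_one.mp hc
        have haS : a ∈ S.erase (Fin.last n) := by rw [ha]; simp
        have hane : (a : ℕ) ≠ n := fun hh =>
          (Finset.mem_erase.mp haS).1 (Fin.ext (by simp [hh]))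
        have halt : (a : ℕ) < n := by have := a.isLt; omega
        have hca : pos (π ⟨(a : ℕ), halt⟩) = a := by
          simp only [hpos, Equiv.symm_apply_apply]
          exact Fin.ext (by simp)
        refine ⟨(π ⟨(a : ℕ), halt⟩, π ⟨(a : ℕ), halt⟩), by simp [hPdef], ?_⟩
        rw [hS, ha]
        simp only [hE, hca]
        ext x; simp [Finset.mem_insert]; tauto
      · obtain ⟨a, b, hab, hab2⟩ := Finset.card_eq_two.mp hc
        have haS : a ∈ S.erase (Fin.last n) := by rw [hab2]; simp
        have hbS : b ∈ S.erase (Fin.last n) := by rw [hab2]; simp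
        have hane : (a : ℕ) ≠ n := fun hh =>
          (Finset.mem_erase.mp haS).1 (Fin.ext (by simp [hh]))
        have hbne : (b : ℕ) ≠ n := fun hh =>
          (Finset.mem_erase.mp hbS).1 (Fin.ext (by simp [hh]))
        have halt : (a : ℕ) < n := by have := a.isLt; omega
        have hblt : (b : ℕ) < n := by have := b.isLt; omega
        have hca : pos (π ⟨(a : ℕ), halt⟩) = a := by
          simp only [hpos, Equiv.symm_apply_apply]
          exact Fin.ext (by simp)
        have hcb : pos (π ⟨(b : ℕ), hblt⟩) = b := by
          simp only [hpos, Equiv.symm_apply_apply]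
          exact Fin.ext (by simp)
        rcases le_total (π ⟨(a : ℕ), halt⟩) (π ⟨(b : ℕ), hblt⟩) with hle | hle
        · refine ⟨(π ⟨(a : ℕ), halt⟩, π ⟨(b : ℕ), hblt⟩), by simp [hPdef, hle], ?_⟩
          rw [hS, hab2]
          simp only [hE, hca, hcb]
          ext x; simp [Finset.mem_insert]; tauto
        · refine ⟨(π ⟨(b : ℕ), hblt⟩, π ⟨(a : ℕ), halt⟩), by simp [hPdef, hle], ?_⟩
          rw [hS, hab2]
          simp only [hE, hca, hcb]
          ext x; simp [Finset.mem_insert]; tauto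
    · rintro ⟨p, hp, rfl⟩
      refine ⟨by simp [hE], ?_, ?_⟩
      · refine Finset.one_lt_card.mpr ⟨pos p.1, by simp [hE], Fin.last n, by simp [hE], pos_ne_last p.1⟩
      · refine le_trans (Finset.card_insert_le _ _) (Nat.succ_le_succ ?_)
        refine le_trans (Finset.card_insert_le _ _) (Nat.succ_le_succ ?_)
        simp
  have hinj : ∀ p ∈ P, ∀ q ∈ P, E p = E q → p = q := by
    intro p hp q hq h
    rw [hPdef, Finset.mem_filter] at hp hq
    have memE : ∀ (r : Fin n × Fin n) (a : Fin n), pos a ∈ E r → a = r.1 ∨ a = r.2 := by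
      intro r a ha
      simp only [hE, Finset.mem_insert, Finset.mem_singleton] at ha
      rcases ha with hh | hh | hh
      · exact Or.inl (pos_inj hh)
      · exact Or.inr (pos_inj hh)
      · exact absurd hh (pos_ne_last a)
    have m1 : pos p.1 ∈ E q := by rw [← h]; simp [hE]
    have m2 : pos p.2 ∈ E q := by rw [← h]; simp [hE]
    have m3 : pos q.1 ∈ E p := by rw [h]; simp [hE]
    have m4 : pos q.2 ∈ E p := by rw [h]; simp [hE]
    have h1 := memE q p.1 m1
    have h2 := memE q p.2 m2
    have h3 := memE p q.1 m3
    have h4 := memE p q.2 m4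
    have hle1 := hp.2
    have hle2 := hq.2
    have : p.1 = q.1 ∧ p.2 = q.2 := by
      simp only [Fin.ext_iff, Fin.le_def] at h1 h2 h3 h4 hle1 hle2 ⊢
      omega
    exact Prod.ext this.1 this.2
  have hmem : (∑ p ∈ P, Pi.single (ch p) (1 : ℝ)) ∈ Qbar n := by
    rw [Qbar, hIm, Finset.sum_image hinj]
    refine Set.finset_sum_mem_finset_sum _ _ _ fun p hp => ?_
    refine subset_convexHull ℝ _ ⟨ch p, ?_, rfl⟩
    simp only [hch, hE]
    split
    · simp
    · simp
  have key : (∑ p ∈ P, Pi.single (ch p) (1 : ℝ)) = (fun j : Fin (n + 1) =>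
      if h : (j : ℕ) < n then
        (if i < ((π ⟨(j : ℕ), h⟩ : Fin n) : ℕ) + 1 then
          (((π ⟨(j : ℕ), h⟩ : Fin n) : ℕ) : ℝ) + 1
        else 0)
      else (((i + 1).choose 2 : ℕ) : ℝ)) := by
    funext j
    rw [Finset.sum_apply]
    simp only [Pi.single_apply]
    have step : (∑ p ∈ P, if j = ch p then (1 : ℝ) else 0)
        = ∑ v : Fin n, ((v : ℕ) + 1 : ℝ) *
            (if j = (if i < (v : ℕ) + 1 then pos v else Fin.last n) then (1 : ℝ) else 0) := by
      rw [hPdef, Finset.sum_filter, Fintype.sum_prod_type, Finset.sum_comm]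
      refine Finset.sum_congr rfl fun v _ => ?_
      have hch' : ∀ u : Fin n, ch (u, v) = if i < (v : ℕ) + 1 then pos v else Fin.last n :=
        fun u => rfl
      simp_rw [hch']
      rw [← Finset.sum_filter]
      rw [Finset.sum_const]
      have hfil : (Finset.univ.filter (fun u : Fin n => u ≤ v)) = Finset.Iic v := by
        ext u; simp
      rw [hfil, Fin.card_Iic, nsmul_eq_mul]
      push_cast
      ring
    rw [step]
    by_cases hj : (j : ℕ) < n
    · rw [dif_pos hj]
      have hjc : pos (π ⟨(j : ℕ), hj⟩) = j := by
        simp only [hpos, Equiv.symm_apply_apply]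
        exact Fin.ext (by simp)
      rw [Finset.sum_eq_single (π ⟨(j : ℕ), hj⟩)]
      · by_cases hcase : i < ((π ⟨(j : ℕ), hj⟩ : Fin n) : ℕ) + 1
        · rw [if_pos hcase, if_pos hcase, if_pos hjc.symm]
          ring
        · rw [if_neg hcase, if_neg hcase, if_neg, mul_zero]
          intro hh
          exact absurd (congrArg Fin.val hh) (by simp; omega)
      · intro v _ hv
        rw [if_neg, mul_zero]
        split
        · intro hh
          apply hv
          have hsymm : π.symm v = ⟨(j : ℕ), hj⟩ := by
            apply Fin.ext
            have := congrArg Fin.val hh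
            simp only [hpos, Fin.coe_castSucc] at this
            simpa using this.symm
          rw [← hsymm, Equiv.apply_symm_apply]
        · intro hh
          exact absurd (congrArg Fin.val hh) (by simp; omega)
      · simp
    · rw [dif_neg hj]
      have hjl : j = Fin.last n := Fin.ext (by have := j.isLt; simp only [Fin.val_last]; omega)
      subst hjl
      have hrw : ∀ v : Fin n,
          ((v : ℕ) + 1 : ℝ) *
            (if (Fin.last n) = (if i < (v : ℕ) + 1 then pos v else Fin.last n)
              then (1 : ℝ) else 0)
          = if i < (v : ℕ) + 1 then (0 : ℝ) else ((v : ℕ) + 1 : ℝ) := by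
        intro v
        by_cases hc : i < (v : ℕ) + 1
        · rw [if_pos hc, if_pos hc, if_neg (fun hh => pos_ne_last v hh.symm), mul_zero]
        · rw [if_neg hc, if_neg hc, if_pos rfl, mul_one]
      simp_rw [hrw]
      rw [Fin.sum_univ_eq_sum_range (fun k => if i < k + 1 then (0 : ℝ) else ((k : ℕ) + 1 : ℝ)) n]
      rw [← Finset.sum_subset (Finset.range_subset_range.mpr hi) (fun k hk hk2 => by
        rw [if_pos]; simp only [Finset.mem_range] at hk2; omega)]
      rw [Finset.sum_congr rfl (fun k hk => by
        rw [if_neg]; simp only [Finset.mem_range] at hk; omega)]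
      rw [← sum_range_succ_choose i]
      push_cast
      rfl
  exact key ▸ hmem
end

section
/- For any two distinct subsets I_1, I_2 ⊆ [m] with |I_1 \ I_2| > 0 and |I_2 \ I_1| > 0, there is no point x ∈ ℝ^m simultaneously satisfying Σ_{i∈I_1} x_i = C(|I_1|,2), Σ_{i∈I_2} x_i = C(|I_2|,2), Σ_{i∈I_1∪I_2} x_i ≥ C(|I_1∪I_2|,2), and Σ_{i∈I_1∩I_2} x_i ≥ C(|I_1∩I_2|,2). -/
/-- If `I_1, I_2` are incomparable (both set differences nonempty), no point can satisfy
`Σ_{I_1} x = C(|I_1|,2)`, `Σ_{I_2} x = C(|I_2|,2)`, `Σ_{I_1∪I_2} x ≥ C(|I_1∪I_2|,2)`, and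
`Σ_{I_1∩I_2} x ≥ C(|I_1∩I_2|,2)` simultaneously. -/
theorem no_common_point_incomparable {m : ℕ} (I₁ I₂ : Finset (Fin m)) (x : Fin m → ℝ)
    (h₁ : (I₁ \ I₂).Nonempty) (h₂ : (I₂ \ I₁).Nonempty)
    (e₁ : ∑ i ∈ I₁, x i = ((I₁.card.choose 2 : ℕ) : ℝ))
    (e₂ : ∑ i ∈ I₂, x i = ((I₂.card.choose 2 : ℕ) : ℝ))
    (hu : (((I₁ ∪ I₂).card.choose 2 : ℕ) : ℝ) ≤ ∑ i ∈ I₁ ∪ I₂, x i)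
    (hi : (((I₁ ∩ I₂).card.choose 2 : ℕ) : ℝ) ≤ ∑ i ∈ I₁ ∩ I₂, x i) :
    False := by
  obtain ⟨i, hi1⟩ := h₁
  obtain ⟨j, hj1⟩ := h₂
  simp only [Finset.mem_sdiff] at hi1 hj1
  have hc1 : (I₁ ∩ I₂).card < I₁.card := by
    apply Finset.card_lt_card
    rw [Finset.ssubset_iff_of_subset Finset.inter_subset_left]
    exact ⟨i, hi1.1, by simp [hi1.2]⟩
  have hc2 : (I₁ ∩ I₂).card < I₂.card := by
    apply Finset.card_lt_card
    rw [Finset.ssubset_iff_of_subset Finset.inter_subset_right]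
    exact ⟨j, hj1.1, by simp [hj1.2]⟩
  have hcard : (I₁ ∪ I₂).card + (I₁ ∩ I₂).card = I₁.card + I₂.card :=
    Finset.card_union_add_card_inter _ _
  have hsum : (∑ k ∈ I₁ ∪ I₂, x k) + ∑ k ∈ I₁ ∩ I₂, x k
      = (∑ k ∈ I₁, x k) + ∑ k ∈ I₂, x k := Finset.sum_union_inter
  have hC : ∀ n : ℕ, ((n.choose 2 : ℕ) : ℝ) = n * (n - 1) / 2 := fun n =>
    by exact_mod_cast Nat.cast_choose_two (K := ℝ) n
  rw [hC] at e₁ e₂ hu hi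
  have hc1' : ((I₁ ∩ I₂).card : ℝ) < I₁.card := by exact_mod_cast hc1
  have hc2' : ((I₁ ∩ I₂).card : ℝ) < I₂.card := by exact_mod_cast hc2
  have hcard' : ((I₁ ∪ I₂).card : ℝ) + (I₁ ∩ I₂).card = I₁.card + I₂.card := by
    exact_mod_cast hcard
  have hic : (1:ℝ) ≤ (I₁.card : ℝ) - (I₁ ∩ I₂).card := by
    have : (I₁ ∩ I₂).card + 1 ≤ I₁.card := hc1
    have := (Nat.cast_le (α := ℝ)).mpr this
    push_cast at this; linarith
  have hic2 : (1:ℝ) ≤ (I₂.card : ℝ) - (I₁ ∩ I₂).card := by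
    have : (I₁ ∩ I₂).card + 1 ≤ I₂.card := hc2
    have := (Nat.cast_le (α := ℝ)).mpr this
    push_cast at this; linarith
  nlinarith [mul_le_mul hic hic2 (by linarith) (by linarith : (0:ℝ) ≤ (I₁.card : ℝ) - (I₁ ∩ I₂).card)]
end
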